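/- arXiv:2212.03340 — 7 statements merged into one kernel-verified Lean document; each statement's English description precedes it below -/
import Mathlib

section
/- Let ψ be a belief function satisfying: ψ is measurable and nonnegative; the set {(p_X, p_Y) : ψ(p_X, p_Y) > 0} is open and ψ is continuously differentiable on it; ψ is integrable over every sector {(p_X, p_Y) ∈ (0,∞)² : p₁ ≤ p_X/p_Y ≤ p₂} with 0 < p₁ < p₂ < ∞; the total integral N_ψ = ∬_{(0,∞)²} ψ dp_X dp_Y is finite and positive; and there exists at least one feasible triple (L, X₀, Y₀) with I_ψ(L) < ∞. Then the infimum of I_ψ over all feasible triples is attained: there exists a feasible triple (L*, X₀*, Y₀*) such that I_ψ(L*) ≤ I_ψ(L) for every feasible triple (L, X₀, Y₀). -/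
open MeasureTheory Set
open scoped ENNReal

noncomputable section

/-- The open positive orthant of `ℝ²`, on which prices live. -/
def orth : Set (ℝ × ℝ) := Set.Ioi 0 ×ˢ Set.Ioi 0

/-- The expected CFMM inefficiency `I_ψ(L) = ∬ ψ(p_X,p_Y) / (p_Y·L(p_X/p_Y)) dp_X dp_Y`,
a Lebesgue integral valued in `[0,∞]`; `ENNReal` division encodes the conventions
`c/0 = ∞` for `c > 0` and `0/0 = 0`. -/
def Ineff (ψ : ℝ × ℝ → ℝ) (L : ℝ → ℝ) : ℝ≥0∞ :=
  ∫⁻ q in orth, ENNReal.ofReal (ψ q) / ENNReal.ofReal (q.2 * L (q.1 / q.2))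

/-- Feasibility of a triple `(L, X₀, Y₀)` of a liquidity allocation and initial reserves,
for reference prices `P_X, P_Y` (so `p₀ = P_X / P_Y`) and budget `B`. -/
def Feasible (PX PY B : ℝ) (L : ℝ → ℝ) (X0 Y0 : ℝ) : Prop :=
  Measurable L ∧ (∀ p ∈ Set.Ioi (0:ℝ), 0 ≤ L p) ∧ 0 ≤ X0 ∧ 0 ≤ Y0 ∧
  (∫⁻ p in Set.Ioc (0:ℝ) (PX / PY), ENNReal.ofReal (L p / p)) ≤ ENNReal.ofReal Y0 ∧
  (∫⁻ p in Set.Ioi (PX / PY), ENNReal.ofReal (L p / p ^ 2)) ≤ ENNReal.ofReal X0 ∧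
  PX * X0 + PY * Y0 ≤ B

/-- A feasible triple is optimal for the belief `ψ` if it minimizes the expected CFMM
inefficiency over all feasible triples. -/
def IsOptimal (PX PY B : ℝ) (ψ : ℝ × ℝ → ℝ) (L : ℝ → ℝ) (X0 Y0 : ℝ) : Prop :=
  Feasible PX PY B L X0 Y0 ∧
  ∀ L' X0' Y0', Feasible PX PY B L' X0' Y0' → Ineff ψ L ≤ Ineff ψ L'

/-! ### Auxiliary lemmas -/

namespace Stmt2Aux

lemma scale_lintegral (g : ℝ → ℝ≥0∞) (hg : Measurable g) {v : ℝ} (hv : 0 < v) :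
    ∫⁻ x in Set.Ioi (0:ℝ), g x = ENNReal.ofReal v * ∫⁻ u in Set.Ioi (0:ℝ), g (v*u) := by
  have hmap : Measure.map (fun x => v * x) volume = ENNReal.ofReal |v⁻¹| • volume :=
    Real.map_volume_mul_left hv.ne'
  have hind : ∀ u : ℝ, (Set.Ioi (0:ℝ)).indicator g (v*u)
      = (Set.Ioi (0:ℝ)).indicator (fun u => g (v*u)) u := by
    intro u
    by_cases hu : u ∈ Set.Ioi (0:ℝ)
    · rw [Set.indicator_of_mem hu, Set.indicator_of_mem (by exact mul_pos hv hu)]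
    · rw [Set.indicator_of_notMem hu, Set.indicator_of_notMem]
      simp only [Set.mem_Ioi, not_lt] at hu ⊢
      exact mul_nonpos_of_nonneg_of_nonpos hv.le hu
  have h1 : ∫⁻ u, (Set.Ioi (0:ℝ)).indicator g (v*u) ∂volume
      = ∫⁻ x, (Set.Ioi (0:ℝ)).indicator g x ∂(Measure.map (fun x => v * x) volume) := by
    rw [lintegral_map (hg.indicator measurableSet_Ioi) (measurable_const_mul v)]
  rw [hmap, lintegral_smul_measure] at h1
  calc ∫⁻ x in Set.Ioi (0:ℝ), g x = ∫⁻ x, (Set.Ioi (0:ℝ)).indicator g x ∂volume :=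
        (lintegral_indicator measurableSet_Ioi _).symm
    _ = ENNReal.ofReal v * (ENNReal.ofReal |v⁻¹| * ∫⁻ x, (Set.Ioi (0:ℝ)).indicator g x ∂volume) := by
        rw [← mul_assoc, ← ENNReal.ofReal_mul hv.le, abs_of_pos (inv_pos.mpr hv),
          mul_inv_cancel₀ hv.ne', ENNReal.ofReal_one, one_mul]
    _ = ENNReal.ofReal v * ∫⁻ u, (Set.Ioi (0:ℝ)).indicator g (v*u) ∂volume := by rw [h1, smul_eq_mul]
    _ = ENNReal.ofReal v * ∫⁻ u in Set.Ioi (0:ℝ), g (v*u) := by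
        simp_rw [hind]; rw [lintegral_indicator measurableSet_Ioi _]

lemma cov (F : ℝ × ℝ → ℝ≥0∞) (hF : Measurable F) :
    ∫⁻ q in orth, F q
      = ∫⁻ u in Set.Ioi (0:ℝ), ∫⁻ v in Set.Ioi (0:ℝ), ENNReal.ofReal v * F (u*v, v) := by
  have hprod : (volume : Measure (ℝ × ℝ)).restrict orth
      = (volume.restrict (Set.Ioi (0:ℝ))).prod (volume.restrict (Set.Ioi (0:ℝ))) := by
    rw [Measure.volume_eq_prod, Measure.prod_restrict]; rfl
  rw [show (∫⁻ q in orth, F q) = ∫⁻ q, F q ∂((volume : Measure (ℝ × ℝ)).restrict orth) from rfl,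
    hprod, lintegral_prod_symm' F hF]
  have step3 : ∫⁻ v in Set.Ioi (0:ℝ), ∫⁻ x in Set.Ioi (0:ℝ), F (x, v)
      = ∫⁻ v in Set.Ioi (0:ℝ), ∫⁻ u in Set.Ioi (0:ℝ), ENNReal.ofReal v * F (v*u, v) := by
    apply setLIntegral_congr_fun measurableSet_Ioi
    refine fun v hv => ?_
    beta_reduce
    rw [scale_lintegral (fun x => F (x, v))
      (hF.comp (measurable_id.prodMk measurable_const)) hv]
    rw [← lintegral_const_mul' _ _ ENNReal.ofReal_ne_top]
  rw [step3, lintegral_lintegral_swap]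
  · refine lintegral_congr fun u => lintegral_congr fun v => by rw [mul_comm v u]
  · have : Measurable fun q : ℝ × ℝ => ENNReal.ofReal q.1 * F (q.1 * q.2, q.1) :=
      (ENNReal.measurable_ofReal.comp measurable_fst).mul
        (hF.comp ((measurable_fst.mul measurable_snd).prodMk measurable_fst))
    exact this.aemeasurable

/-- The "angular marginal" of the belief. -/
def phi (ψ : ℝ × ℝ → ℝ) (u : ℝ) : ℝ≥0∞ :=
  ∫⁻ v in Set.Ioi (0:ℝ), ENNReal.ofReal (ψ (u*v, v))

lemma measurable_phi {ψ : ℝ × ℝ → ℝ} (hψ : Measurable ψ) : Measurable (phi ψ) := by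
  apply Measurable.lintegral_prod_right'
    (f := fun p : ℝ × ℝ => ENNReal.ofReal (ψ (p.1 * p.2, p.2)))
  exact ENNReal.measurable_ofReal.comp
    (hψ.comp ((measurable_fst.mul measurable_snd).prodMk measurable_snd))

/-- The 1-D version of the inefficiency functional. -/
def Jfun (ψ : ℝ × ℝ → ℝ) (L : ℝ → ℝ) : ℝ≥0∞ :=
  ∫⁻ u in Set.Ioi (0:ℝ), phi ψ u / ENNReal.ofReal (L u)

lemma ineff_eq {ψ : ℝ × ℝ → ℝ} (hψ : Measurable ψ) {L : ℝ → ℝ} (hL : Measurable L) :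
    Ineff ψ L = Jfun ψ L := by
  have hF : Measurable fun q : ℝ × ℝ =>
      ENNReal.ofReal (ψ q) / ENNReal.ofReal (q.2 * L (q.1 / q.2)) := by
    apply Measurable.div (ENNReal.measurable_ofReal.comp hψ)
    exact ENNReal.measurable_ofReal.comp
      (measurable_snd.mul (hL.comp (measurable_fst.div measurable_snd)))
  rw [Ineff, cov _ hF, Jfun]
  apply setLIntegral_congr_fun measurableSet_Ioi
  refine fun u _ => ?_
  beta_reduce
  have hinner : ∫⁻ v in Set.Ioi (0:ℝ),
      ENNReal.ofReal v * (ENNReal.ofReal (ψ (u*v, v)) / ENNReal.ofReal (v * L ((u*v) / v)))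
      = ∫⁻ v in Set.Ioi (0:ℝ), ENNReal.ofReal (ψ (u*v, v)) / ENNReal.ofReal (L u) := by
    apply setLIntegral_congr_fun measurableSet_Ioi
    refine fun v hv => ?_
    beta_reduce
    have hv' : (0:ℝ) < v := hv
    rw [mul_div_cancel_right₀ u hv'.ne', ENNReal.ofReal_mul hv'.le, mul_div_assoc',
      ENNReal.mul_div_mul_left _ _ (by simpa using hv') ENNReal.ofReal_ne_top]
  rw [hinner]
  have hm : Measurable fun v : ℝ => ENNReal.ofReal (ψ (u*v, v)) :=
    ENNReal.measurable_ofReal.comp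
      (hψ.comp ((measurable_const.mul measurable_id).prodMk measurable_id))
  simp_rw [div_eq_mul_inv]
  rw [lintegral_mul_const _ hm]
  rfl

/-- The budget weight. -/
def w (PX PY : ℝ) (p : ℝ) : ℝ := if p ≤ PX / PY then PY / p else PX / p ^ 2

lemma measurable_w (PX PY : ℝ) : Measurable (w PX PY) := by
  unfold w
  exact Measurable.ite (measurableSet_le measurable_id measurable_const)
    (measurable_const.div measurable_id)
    (measurable_const.div (measurable_id.pow_const 2))

lemma w_pos {PX PY : ℝ} (hPX : 0 < PX) (hPY : 0 < PY) {p : ℝ} (hp : 0 < p) :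
    0 < w PX PY p := by
  unfold w; split
  · exact div_pos hPY hp
  · exact div_pos hPX (by positivity)

/-- The cost functional. -/
def cost (PX PY : ℝ) (L : ℝ → ℝ) : ℝ≥0∞ :=
  ∫⁻ p in Set.Ioi (0:ℝ), ENNReal.ofReal (L p) * ENNReal.ofReal (w PX PY p)

lemma cost_split {PX PY : ℝ} (hPX : 0 < PX) (hPY : 0 < PY) {L : ℝ → ℝ}
    (hLnn : ∀ p ∈ Set.Ioi (0:ℝ), 0 ≤ L p) :
    cost PX PY L
      = ENNReal.ofReal PY * (∫⁻ p in Set.Ioc (0:ℝ) (PX / PY), ENNReal.ofReal (L p / p))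
        + ENNReal.ofReal PX * (∫⁻ p in Set.Ioi (PX / PY), ENNReal.ofReal (L p / p ^ 2)) := by
  have hp0 : (0:ℝ) < PX / PY := div_pos hPX hPY
  have hsplit : Set.Ioi (0:ℝ) = Set.Ioc (0:ℝ) (PX/PY) ∪ Set.Ioi (PX/PY) :=
    (Set.Ioc_union_Ioi_eq_Ioi hp0.le).symm
  rw [cost, hsplit, lintegral_union measurableSet_Ioi Set.Ioc_disjoint_Ioi_same]
  congr 1
  · rw [← lintegral_const_mul' _ _ ENNReal.ofReal_ne_top]
    apply setLIntegral_congr_fun measurableSet_Ioc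
    refine fun p hp => ?_
    beta_reduce
    have hw : w PX PY p = PY / p := if_pos hp.2
    rw [hw, ← ENNReal.ofReal_mul (hLnn p hp.1), ← ENNReal.ofReal_mul hPY.le]
    congr 1; ring
  · rw [← lintegral_const_mul' _ _ ENNReal.ofReal_ne_top]
    apply setLIntegral_congr_fun measurableSet_Ioi
    refine fun p hp => ?_
    beta_reduce
    have hp' : (0:ℝ) < p := hp0.trans hp
    have hw : w PX PY p = PX / p ^ 2 := if_neg (not_le.mpr hp)
    rw [hw, ← ENNReal.ofReal_mul (hLnn p hp'), ← ENNReal.ofReal_mul hPX.le]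
    congr 1; ring

lemma feas_cost {PX PY B : ℝ} (hPX : 0 < PX) (hPY : 0 < PY) {L : ℝ → ℝ} {X0 Y0 : ℝ}
    (h : Feasible PX PY B L X0 Y0) : cost PX PY L ≤ ENNReal.ofReal B := by
  obtain ⟨hL, hLnn, hX0, hY0, hY, hX, hbud⟩ := h
  rw [cost_split hPX hPY hLnn]
  calc ENNReal.ofReal PY * (∫⁻ p in Set.Ioc (0:ℝ) (PX / PY), ENNReal.ofReal (L p / p))
        + ENNReal.ofReal PX * (∫⁻ p in Set.Ioi (PX / PY), ENNReal.ofReal (L p / p ^ 2))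
      ≤ ENNReal.ofReal PY * ENNReal.ofReal Y0 + ENNReal.ofReal PX * ENNReal.ofReal X0 := by
        gcongr
    _ = ENNReal.ofReal (PX * X0 + PY * Y0) := by
        rw [← ENNReal.ofReal_mul hPY.le, ← ENNReal.ofReal_mul hPX.le,
          ← ENNReal.ofReal_add (mul_nonneg hPY.le hY0) (mul_nonneg hPX.le hX0), add_comm]
    _ ≤ ENNReal.ofReal B := ENNReal.ofReal_le_ofReal hbud

lemma cost_feas {PX PY B : ℝ} (hPX : 0 < PX) (hPY : 0 < PY) (hB : 0 < B) {L : ℝ → ℝ}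
    (hL : Measurable L) (hLnn : ∀ p ∈ Set.Ioi (0:ℝ), 0 ≤ L p)
    (h : cost PX PY L ≤ ENNReal.ofReal B) : ∃ X0 Y0, Feasible PX PY B L X0 Y0 := by
  set IY := ∫⁻ p in Set.Ioc (0:ℝ) (PX / PY), ENNReal.ofReal (L p / p) with hIY
  set IX := ∫⁻ p in Set.Ioi (PX / PY), ENNReal.ofReal (L p / p ^ 2) with hIX
  rw [cost_split hPX hPY hLnn] at h
  have hsum : ENNReal.ofReal PY * IY + ENNReal.ofReal PX * IX ≤ ENNReal.ofReal B := h
  have hPYne : ENNReal.ofReal PY ≠ 0 := ne_of_gt (ENNReal.ofReal_pos.mpr hPY)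
  have hPXne : ENNReal.ofReal PX ≠ 0 := ne_of_gt (ENNReal.ofReal_pos.mpr hPX)
  have hIYfin : IY ≠ ⊤ := by
    intro htop
    rw [htop, ENNReal.mul_top hPYne] at hsum
    simp at hsum
  have hIXfin : IX ≠ ⊤ := by
    intro htop
    rw [htop, ENNReal.mul_top hPXne] at hsum
    simp at hsum
  refine ⟨IX.toReal, IY.toReal, hL, hLnn, ENNReal.toReal_nonneg, ENNReal.toReal_nonneg,
    ?_, ?_, ?_⟩
  · rw [ENNReal.ofReal_toReal hIYfin]
  · rw [ENNReal.ofReal_toReal hIXfin]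
  · have : ENNReal.ofReal (PX * IX.toReal + PY * IY.toReal) ≤ ENNReal.ofReal B := by
      rw [ENNReal.ofReal_add (mul_nonneg hPX.le ENNReal.toReal_nonneg)
          (mul_nonneg hPY.le ENNReal.toReal_nonneg),
        ENNReal.ofReal_mul hPX.le, ENNReal.ofReal_mul hPY.le,
        ENNReal.ofReal_toReal hIXfin, ENNReal.ofReal_toReal hIYfin, add_comm]
      exact hsum
    rw [ENNReal.ofReal_le_ofReal_iff hB.le] at this
    exact this

lemma half_sq (x : ℝ≥0∞) : (x ^ (1/2 : ℝ)) ^ (2 : ℝ) = x := by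
  rw [← ENNReal.rpow_mul]; norm_num

lemma sq_half (a : ℝ≥0∞) : (a * a) ^ (1/2 : ℝ) = a := by
  rw [← pow_two, ← ENNReal.rpow_natCast a 2, ← ENNReal.rpow_mul]
  norm_num

lemma enn2 {a b : ℝ≥0∞} (hb0 : b ≠ 0) (hb : b ≠ ⊤) :
    (a / b) ^ (1/2 : ℝ) * b = (a * b) ^ (1/2 : ℝ) := by
  have key : (a / b) * (b * b) = a * b := by
    rw [div_eq_mul_inv, mul_mul_mul_comm, ENNReal.inv_mul_cancel hb0 hb, mul_one]
  calc (a / b) ^ (1/2 : ℝ) * b = (a / b) ^ (1/2 : ℝ) * (b * b) ^ (1/2 : ℝ) := by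
        rw [sq_half]
    _ = ((a / b) * (b * b)) ^ (1/2 : ℝ) :=
        (ENNReal.mul_rpow_of_nonneg _ _ (by norm_num : (0:ℝ) ≤ 1/2)).symm
    _ = (a * b) ^ (1/2 : ℝ) := by rw [key]

lemma enn1 {a b c : ℝ≥0∞} (ha : a ≠ ⊤) (hb0 : b ≠ 0) (hb : b ≠ ⊤)
    (hc0 : c ≠ 0) (hc : c ≠ ⊤) :
    a / (c * (a / b) ^ (1/2 : ℝ)) = c⁻¹ * (a * b) ^ (1/2 : ℝ) := by
  rcases eq_or_ne a 0 with rfl | ha0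
  · simp [ENNReal.zero_rpow_of_pos (by norm_num : (0:ℝ) < 1/2), ENNReal.zero_div]
  have hab0 : a / b ≠ 0 := by
    simp [ENNReal.div_eq_zero_iff, ha0, hb]
  have hd0 : c * (a / b) ^ (1/2 : ℝ) ≠ 0 := by
    apply mul_ne_zero hc0
    simp [ENNReal.rpow_eq_zero_iff, hab0, ENNReal.div_eq_top, ha, hb0]
  have hdt : c * (a / b) ^ (1/2 : ℝ) ≠ ⊤ := by
    apply ENNReal.mul_ne_top hc
    apply ENNReal.rpow_ne_top_of_nonneg (by norm_num)
    simp [ENNReal.div_eq_top, ha, hb0]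
  rw [eq_comm, ENNReal.eq_div_iff hd0 hdt]
  have key : (a / b) * (a * b) = a * a := by
    rw [div_eq_mul_inv, mul_mul_mul_comm, ENNReal.inv_mul_cancel hb0 hb, mul_one]
  calc c * (a / b) ^ (1/2 : ℝ) * (c⁻¹ * (a * b) ^ (1/2 : ℝ))
      = (c * c⁻¹) * ((a / b) ^ (1/2 : ℝ) * (a * b) ^ (1/2 : ℝ)) := by
        rw [mul_mul_mul_comm]
    _ = (a / b * (a * b)) ^ (1/2 : ℝ) := by
        rw [ENNReal.mul_inv_cancel hc0 hc, one_mul,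
          ← ENNReal.mul_rpow_of_nonneg _ _ (by norm_num : (0:ℝ) ≤ 1/2)]
    _ = a := by rw [key, sq_half]

end Stmt2Aux

namespace Stmt2Aux

lemma half_mul (x : ℝ≥0∞) : x ^ (1/2:ℝ) * x ^ (1/2:ℝ) = x := by
  rw [← pow_two, ← ENNReal.rpow_natCast (x ^ (1/2:ℝ)) 2]
  rw [show ((2:ℕ):ℝ) = (2:ℝ) by norm_num, half_sq]

lemma holder_bound (μ : Measure ℝ) {φ W Lf : ℝ → ℝ≥0∞}
    (hφ : Measurable φ) (hW : Measurable W) (hLf : Measurable Lf)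
    (hLtop : ∀ u, Lf u ≠ ⊤) (hfin : (∫⁻ u, φ u / Lf u ∂μ) ≠ ⊤) :
    ∫⁻ u, (φ u * W u) ^ (1/2:ℝ) ∂μ
      ≤ (∫⁻ u, φ u / Lf u ∂μ) ^ (1/2:ℝ) * (∫⁻ u, Lf u * W u ∂μ) ^ (1/2:ℝ) := by
  have hconj : Real.HolderConjugate 2 2 := Real.HolderConjugate.two_two
  set f : ℝ → ℝ≥0∞ := fun u => (φ u / Lf u) ^ (1/2:ℝ) with hfdef
  set g : ℝ → ℝ≥0∞ := fun u => (Lf u * W u) ^ (1/2:ℝ) with hgdef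
  have hfm : Measurable f := ENNReal.continuous_rpow_const.measurable.comp (hφ.div hLf)
  have hgm : Measurable g := ENNReal.continuous_rpow_const.measurable.comp (hLf.mul hW)
  have hae : ∀ᵐ u ∂μ, φ u / Lf u ≠ ⊤ :=
    (ae_lt_top (hφ.div hLf) hfin).mono fun u h => h.ne
  have step : ∀ᵐ u ∂μ, (φ u * W u) ^ (1/2:ℝ) ≤ f u * g u := by
    filter_upwards [hae] with u hu
    rcases eq_or_ne (Lf u) 0 with h0 | h0
    · have hφ0 : φ u = 0 := by
        by_contra hne
        rw [h0, ENNReal.div_zero hne] at hu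
        exact hu rfl
      simp [hφ0, ENNReal.zero_rpow_of_pos (by norm_num : (0:ℝ) < 1/2)]
    · have hkey : (φ u / Lf u) * (Lf u * W u) = φ u * W u := by
        rw [← mul_assoc, ENNReal.div_mul_cancel h0 (hLtop u)]
      rw [show f u * g u = ((φ u / Lf u) * (Lf u * W u)) ^ (1/2:ℝ) from
        (ENNReal.mul_rpow_of_nonneg _ _ (by norm_num : (0:ℝ) ≤ 1/2)).symm, hkey]
  calc ∫⁻ u, (φ u * W u) ^ (1/2:ℝ) ∂μ ≤ ∫⁻ u, f u * g u ∂μ := lintegral_mono_ae step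
    _ = ∫⁻ u, (f * g) u ∂μ := rfl
    _ ≤ (∫⁻ u, f u ^ (2:ℝ) ∂μ) ^ (1/(2:ℝ)) * (∫⁻ u, g u ^ (2:ℝ) ∂μ) ^ (1/(2:ℝ)) :=
        ENNReal.lintegral_mul_le_Lp_mul_Lq μ hconj hfm.aemeasurable hgm.aemeasurable
    _ = (∫⁻ u, φ u / Lf u ∂μ) ^ (1/2:ℝ) * (∫⁻ u, Lf u * W u ∂μ) ^ (1/2:ℝ) := by
        simp_rw [hfdef, hgdef, half_sq]

end Stmt2Aux

open Stmt2Aux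

theorem stmt_2 (PX PY B : ℝ) (hPX : 0 < PX) (hPY : 0 < PY) (hB : 0 < B)
    (ψ : ℝ × ℝ → ℝ) (hmeas : Measurable ψ) (hnn : ∀ q, 0 ≤ ψ q)
    (hopen : IsOpen {q : ℝ × ℝ | 0 < ψ q})
    (hC1 : ContDiffOn ℝ 1 ψ {q : ℝ × ℝ | 0 < ψ q})
    (hsector : ∀ p₁ p₂ : ℝ, 0 < p₁ → p₁ < p₂ →
      (∫⁻ q in {q : ℝ × ℝ | q ∈ orth ∧ p₁ ≤ q.1 / q.2 ∧ q.1 / q.2 ≤ p₂},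
        ENNReal.ofReal (ψ q)) < ⊤)
    (hNpos : 0 < ∫⁻ q in orth, ENNReal.ofReal (ψ q))
    (hNfin : (∫⁻ q in orth, ENNReal.ofReal (ψ q)) < ⊤)
    (hfeas : ∃ L X0 Y0, Feasible PX PY B L X0 Y0 ∧ Ineff ψ L < ⊤) :
    ∃ L X0 Y0, Feasible PX PY B L X0 Y0 ∧
      ∀ L' X0' Y0', Feasible PX PY B L' X0' Y0' → Ineff ψ L ≤ Ineff ψ L' := by
  classical
  obtain ⟨L₀, X₀, Y₀, hF₀, hI₀⟩ := hfeas
  have hL₀m : Measurable L₀ := hF₀.1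
  set φ := Stmt2Aux.phi ψ with hφdef
  have hφm : Measurable φ := measurable_phi hmeas
  set W : ℝ → ℝ≥0∞ := fun u => ENNReal.ofReal (Stmt2Aux.w PX PY u) with hWdef
  have hWm : Measurable W := ENNReal.measurable_ofReal.comp (measurable_w PX PY)
  set S := ∫⁻ u in Set.Ioi (0:ℝ), (φ u * W u) ^ (1/2:ℝ) with hSdef
  by_cases hS0 : S = 0
  · -- degenerate case: the belief's marginal vanishes a.e., every allocation is optimal
    have hmeasint : Measurable fun u => (φ u * W u) ^ (1/2:ℝ) :=
      ENNReal.continuous_rpow_const.measurable.comp (hφm.mul hWm)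
    have h0 : ∀ᵐ u ∂(volume.restrict (Set.Ioi (0:ℝ))), (φ u * W u) ^ (1/2:ℝ) = 0 :=
      (lintegral_eq_zero_iff hmeasint).mp hS0
    have hφ0 : ∀ᵐ u ∂(volume.restrict (Set.Ioi (0:ℝ))), φ u = 0 := by
      filter_upwards [h0, ae_restrict_mem measurableSet_Ioi] with u hu humem
      rw [ENNReal.rpow_eq_zero_iff] at hu
      rcases hu with ⟨h, _⟩ | ⟨_, h⟩
      · have hWne : W u ≠ 0 := ne_of_gt (ENNReal.ofReal_pos.mpr (w_pos hPX hPY humem))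
        rcases mul_eq_zero.mp h with h' | h'
        · exact h'
        · exact absurd h' hWne
      · norm_num at h
    have hzero : ∀ L : ℝ → ℝ, Jfun ψ L = 0 := by
      intro L
      have : ∀ᵐ u ∂(volume.restrict (Set.Ioi (0:ℝ))),
          φ u / ENNReal.ofReal (L u) = 0 := by
        filter_upwards [hφ0] with u hu
        simp [hu, ENNReal.zero_div]
      rw [Jfun, lintegral_congr_ae this, lintegral_zero]
    refine ⟨L₀, X₀, Y₀, hF₀, fun L' X0' Y0' hF' => ?_⟩
    rw [ineff_eq hmeas hL₀m, hzero L₀]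
    exact zero_le
  · -- main case
    have hJ0fin : Jfun ψ L₀ ≠ ⊤ := by
      rw [← ineff_eq hmeas hL₀m]; exact hI₀.ne
    have hcost0 : cost PX PY L₀ ≤ ENNReal.ofReal B := feas_cost hPX hPY hF₀
    have hS_le0 : S ≤ (Jfun ψ L₀) ^ (1/2:ℝ) * (cost PX PY L₀) ^ (1/2:ℝ) :=
      holder_bound (volume.restrict (Set.Ioi (0:ℝ))) hφm hWm
        (ENNReal.measurable_ofReal.comp hL₀m) (fun u => ENNReal.ofReal_ne_top) hJ0fin
    have hSfin : S ≠ ⊤ := by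
      refine ne_top_of_le_ne_top (ENNReal.mul_ne_top
        (ENNReal.rpow_ne_top_of_nonneg (by norm_num) hJ0fin)
        (ENNReal.rpow_ne_top_of_nonneg (by norm_num)
          (ne_top_of_le_ne_top ENNReal.ofReal_ne_top hcost0))) hS_le0
    have hφfin : ∀ᵐ u ∂(volume.restrict (Set.Ioi (0:ℝ))), φ u ≠ ⊤ := by
      have := ae_lt_top (hφm.div (ENNReal.measurable_ofReal.comp hL₀m)) hJ0fin
      filter_upwards [this] with u hu htop
      simp only [Pi.div_apply, Function.comp_apply] at hu
      rw [htop, ENNReal.top_div_of_ne_top ENNReal.ofReal_ne_top] at hu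
      exact absurd hu (lt_irrefl _)
    set S' := S.toReal with hS'def
    have hS'pos : 0 < S' := ENNReal.toReal_pos hS0 hSfin
    set c : ℝ≥0∞ := ENNReal.ofReal B / S with hcdef
    have hc0 : c ≠ 0 := by
      rw [hcdef]
      simp [ENNReal.div_eq_zero_iff, hSfin, ne_of_gt (ENNReal.ofReal_pos.mpr hB)]
    have hctop : c ≠ ⊤ := by
      rw [hcdef]
      simp [ENNReal.div_eq_top, hS0, ENNReal.ofReal_ne_top]
    set Lstar : ℝ → ℝ :=
      fun u => (B / S') * Real.sqrt ((φ u).toReal / Stmt2Aux.w PX PY u) with hLsdef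
    have hLsm : Measurable Lstar :=
      measurable_const.mul (Real.continuous_sqrt.measurable.comp
        (hφm.ennreal_toReal.div (measurable_w PX PY)))
    have hLsnn : ∀ p ∈ Set.Ioi (0:ℝ), 0 ≤ Lstar p := fun p _ =>
      mul_nonneg (div_nonneg hB.le hS'pos.le) (Real.sqrt_nonneg _)
    have hkey : ∀ᵐ u ∂(volume.restrict (Set.Ioi (0:ℝ))),
        ENNReal.ofReal (Lstar u) = c * (φ u / W u) ^ (1/2:ℝ) := by
      filter_upwards [hφfin, ae_restrict_mem measurableSet_Ioi] with u hfin humem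
      have hw : 0 < Stmt2Aux.w PX PY u := w_pos hPX hPY humem
      have ht : 0 ≤ (φ u).toReal / Stmt2Aux.w PX PY u :=
        div_nonneg ENNReal.toReal_nonneg hw.le
      rw [show Lstar u = (B / S') * Real.sqrt ((φ u).toReal / Stmt2Aux.w PX PY u) from rfl,
        ENNReal.ofReal_mul (div_nonneg hB.le hS'pos.le)]
      congr 1
      · rw [ENNReal.ofReal_div_of_pos hS'pos, hS'def, ENNReal.ofReal_toReal hSfin]
      · rw [Real.sqrt_eq_rpow, ← ENNReal.ofReal_rpow_of_nonneg ht (by norm_num : (0:ℝ) ≤ 1/2),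
          ENNReal.ofReal_div_of_pos hw, ENNReal.ofReal_toReal hfin]
    have hcost : cost PX PY Lstar = ENNReal.ofReal B := by
      have heq : cost PX PY Lstar
          = ∫⁻ u in Set.Ioi (0:ℝ), c * (φ u * W u) ^ (1/2:ℝ) := by
        apply lintegral_congr_ae
        filter_upwards [hkey, ae_restrict_mem measurableSet_Ioi] with u hk humem
        have hW0 : W u ≠ 0 := ne_of_gt (ENNReal.ofReal_pos.mpr (w_pos hPX hPY humem))
        rw [hk, mul_assoc, enn2 hW0 ENNReal.ofReal_ne_top]
      rw [heq, lintegral_const_mul' _ _ hctop, ← hSdef, hcdef,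
        ENNReal.div_mul_cancel hS0 hSfin]
    obtain ⟨X0s, Y0s, hFs⟩ := cost_feas hPX hPY hB hLsm hLsnn (le_of_eq hcost)
    have hJs : Jfun ψ Lstar = S / ENNReal.ofReal B * S := by
      have heq : Jfun ψ Lstar
          = ∫⁻ u in Set.Ioi (0:ℝ), c⁻¹ * (φ u * W u) ^ (1/2:ℝ) := by
        apply lintegral_congr_ae
        filter_upwards [hkey, hφfin, ae_restrict_mem measurableSet_Ioi] with u hk hf humem
        have hW0 : W u ≠ 0 := ne_of_gt (ENNReal.ofReal_pos.mpr (w_pos hPX hPY humem))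
        rw [hk]
        exact enn1 hf hW0 ENNReal.ofReal_ne_top hc0 hctop
      rw [heq, lintegral_const_mul' _ _ (ENNReal.inv_ne_top.mpr hc0), ← hSdef]
      congr 1
      rw [hcdef, ENNReal.inv_div (Or.inl hSfin) (Or.inl hS0)]
    refine ⟨Lstar, X0s, Y0s, hFs, fun L' X0' Y0' hF' => ?_⟩
    rw [ineff_eq hmeas hLsm, ineff_eq hmeas hF'.1]
    rcases eq_or_ne (Jfun ψ L') ⊤ with htop | hfin'
    · rw [htop]; exact le_top
    · have hb : S ≤ (Jfun ψ L') ^ (1/2:ℝ) * (cost PX PY L') ^ (1/2:ℝ) :=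
        holder_bound (volume.restrict (Set.Ioi (0:ℝ))) hφm hWm
          (ENNReal.measurable_ofReal.comp hF'.1) (fun u => ENNReal.ofReal_ne_top) hfin'
      have hcost' : cost PX PY L' ≤ ENNReal.ofReal B := feas_cost hPX hPY hF'
      have hb2 : S ≤ (Jfun ψ L') ^ (1/2:ℝ) * (ENNReal.ofReal B) ^ (1/2:ℝ) :=
        hb.trans (mul_le_mul_right (ENNReal.rpow_le_rpow hcost' (by norm_num)) _)
      have hsq : S * S ≤ Jfun ψ L' * ENNReal.ofReal B := by
        calc S * S
            ≤ ((Jfun ψ L') ^ (1/2:ℝ) * (ENNReal.ofReal B) ^ (1/2:ℝ))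
              * ((Jfun ψ L') ^ (1/2:ℝ) * (ENNReal.ofReal B) ^ (1/2:ℝ)) :=
              mul_le_mul' hb2 hb2
          _ = ((Jfun ψ L') ^ (1/2:ℝ) * (Jfun ψ L') ^ (1/2:ℝ))
              * ((ENNReal.ofReal B) ^ (1/2:ℝ) * (ENNReal.ofReal B) ^ (1/2:ℝ)) :=
              mul_mul_mul_comm _ _ _ _
          _ = Jfun ψ L' * ENNReal.ofReal B := by rw [half_mul, half_mul]
      rw [hJs, div_eq_mul_inv, mul_right_comm, ← div_eq_mul_inv]
      exact (ENNReal.div_le_iff (ne_of_gt (ENNReal.ofReal_pos.mpr hB))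
        ENNReal.ofReal_ne_top).mpr hsq
end
end

section
/- Let ψ : (0,∞)² → [0,∞) and L : (0,∞) → [0,∞) be measurable, and define φ_ψ(θ) = ∫₀^∞ ψ(r cos θ, r sin θ) dr for θ ∈ (0, π/2). Then, with all integrals taken in [0,∞] (conventions c/0 = ∞ for c > 0, 0/0 = 0): ∬_{(0,∞)²} ψ(p_X, p_Y)/(p_Y · L(p_X/p_Y)) dp_X dp_Y = ∫₀^∞ φ_ψ(arccot p) · sin(arccot p) / L(p) dp, where sin(arccot p) = 1/√(1 + p²). -/
open MeasureTheory Set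
open scoped ENNReal

noncomputable section

/-- Inverse cotangent with values in `(0, π/2)` for positive arguments. -/
def arccot (p : ℝ) : ℝ := Real.pi / 2 - Real.arctan p

/-- The angular marginal `φ_ψ(θ) = ∫_0^∞ ψ(r cos θ, r sin θ) dr`, valued in `[0,∞]`. -/
def phiAng (ψ : ℝ × ℝ → ℝ) (θ : ℝ) : ℝ≥0∞ :=
  ∫⁻ r in Set.Ioi (0:ℝ), ENNReal.ofReal (ψ (r * Real.cos θ, r * Real.sin θ))

/-!
STATEMENT 4: In terms of the angular marginal `φ_ψ`, the expected CFMM inefficiency is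
`∬ ψ/(p_Y·L(p_X/p_Y)) = ∫_0^∞ φ_ψ(arccot p)·sin(arccot p)/L(p) dp`, where
`sin (arccot p) = 1/√(1+p²)`.
-/

lemma aux_scale (g : ℝ → ℝ≥0∞) (hg : Measurable g) {c : ℝ} (hc : 0 < c) :
    ∫⁻ x in Set.Ioi (0:ℝ), g (x / c) = ENNReal.ofReal c * ∫⁻ p in Set.Ioi (0:ℝ), g p := by
  have hc' : c ≠ 0 := ne_of_gt hc
  have hpre : ((c * ·) : ℝ → ℝ) ⁻¹' Set.Ioi 0 = Set.Ioi 0 := by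
    ext x
    simp only [mem_preimage, mem_Ioi]
    exact ⟨fun h => by nlinarith, fun h => by positivity⟩
  have hmap : (volume.restrict (Set.Ioi (0:ℝ))).map (c * ·)
      = ENNReal.ofReal c⁻¹ • volume.restrict (Set.Ioi (0:ℝ)) := by
    rw [← hpre, ← Measure.restrict_map (measurable_const_mul c) measurableSet_Ioi,
      Real.map_volume_mul_left hc', Measure.restrict_smul, abs_of_pos (inv_pos.mpr hc), hpre]
  have key : ∫⁻ p in Set.Ioi (0:ℝ), g p
      = ENNReal.ofReal c⁻¹ * ∫⁻ x in Set.Ioi (0:ℝ), g (x / c) := by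
    have h1 : ∫⁻ p in Set.Ioi (0:ℝ), g p
        = ∫⁻ p in Set.Ioi (0:ℝ), g ((c * p) / c) := by
      refine lintegral_congr fun p => ?_
      rw [mul_div_cancel_left₀ _ hc']
    rw [h1]
    have h2 : (∫⁻ p in Set.Ioi (0:ℝ), g (c * p / c))
        = ∫⁻ x, g (x / c) ∂((volume.restrict (Set.Ioi (0:ℝ))).map (c * ·)) :=
      (lintegral_map (f := fun x => g (x / c)) (hg.comp (measurable_id.div_const c))
        (measurable_const_mul c)).symm
    rw [h2, hmap, lintegral_smul_measure, smul_eq_mul]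
  rw [key, ← mul_assoc, ← ENNReal.ofReal_mul hc.le, mul_inv_cancel₀ hc', ENNReal.ofReal_one,
    one_mul]

lemma angular (ψ : ℝ × ℝ → ℝ) (hψ : Measurable ψ) {p : ℝ} (hp : 0 < p) :
    phiAng ψ (arccot p) * ENNReal.ofReal (Real.sin (arccot p))
      = ∫⁻ y in Set.Ioi (0:ℝ), ENNReal.ofReal (ψ (p * y, y)) := by
  set s := Real.sqrt (1 + p ^ 2) with hsdef
  have hs : 0 < s := Real.sqrt_pos.mpr (by positivity)
  have hsin : Real.sin (arccot p) = 1 / s := by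
    rw [arccot, Real.sin_pi_div_two_sub, Real.cos_arctan]
  have hcos : Real.cos (arccot p) = p / s := by
    rw [arccot, Real.cos_pi_div_two_sub, Real.sin_arctan]
  have hmeas : Measurable fun y : ℝ => ENNReal.ofReal (ψ (p * y, y)) :=
    (hψ.comp ((measurable_const_mul p).prodMk measurable_id)).ennreal_ofReal
  have hφ : phiAng ψ (arccot p)
      = ∫⁻ r in Set.Ioi (0:ℝ), (fun y => ENNReal.ofReal (ψ (p * y, y))) (r / s) := by
    refine lintegral_congr fun r => ?_
    have e1 : r * Real.cos (arccot p) = p * (r / s) := by rw [hcos]; ring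
    have e2 : r * Real.sin (arccot p) = r / s := by rw [hsin]; ring
    simp only [phiAng, e1, e2]
  rw [hφ, aux_scale _ hmeas hs, hsin, mul_comm (ENNReal.ofReal s), mul_assoc,
    ← ENNReal.ofReal_mul hs.le, mul_one_div, div_self (ne_of_gt hs), ENNReal.ofReal_one, mul_one]

lemma cancel_mul_div (a c : ℝ≥0∞) {b : ℝ≥0∞} (hb0 : b ≠ 0) (hbt : b ≠ ⊤) :
    b * (a / (b * c)) = a / c := by
  rw [div_eq_mul_inv, ENNReal.mul_inv (Or.inl hb0) (Or.inl hbt), show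
    b * (a * (b⁻¹ * c⁻¹)) = b * b⁻¹ * (a * c⁻¹) by ring, ENNReal.mul_inv_cancel hb0 hbt,
    one_mul, ← div_eq_mul_inv]

theorem stmt_4 (ψ : ℝ × ℝ → ℝ) (L : ℝ → ℝ)
    (hψmeas : Measurable ψ) (hψnn : ∀ q, 0 ≤ ψ q)
    (hLmeas : Measurable L) (hLnn : ∀ p ∈ Set.Ioi (0:ℝ), 0 ≤ L p) :
    Ineff ψ L
      = (∫⁻ p in Set.Ioi (0:ℝ),
          phiAng ψ (arccot p) * ENNReal.ofReal (Real.sin (arccot p))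
            / ENNReal.ofReal (L p)) ∧
    ∀ p : ℝ, Real.sin (arccot p) = 1 / Real.sqrt (1 + p ^ 2) := by
  constructor
  · -- main equality
    have hfmeas : Measurable fun q : ℝ × ℝ =>
        ENNReal.ofReal (ψ q) / ENNReal.ofReal (q.2 * L (q.1 / q.2)) :=
      hψmeas.ennreal_ofReal.div
        ((measurable_snd.mul (hLmeas.comp (measurable_fst.div measurable_snd))).ennreal_ofReal)
    have step1 : Ineff ψ L
        = ∫⁻ y in Set.Ioi (0:ℝ), ∫⁻ x in Set.Ioi (0:ℝ),
            ENNReal.ofReal (ψ (x, y)) / ENNReal.ofReal (y * L (x / y)) := by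
      rw [Ineff, orth, Measure.volume_eq_prod, ← Measure.prod_restrict,
        lintegral_prod_symm _ (hfmeas.aemeasurable)]
    have step2 : ∀ y ∈ Set.Ioi (0:ℝ),
        (∫⁻ x in Set.Ioi (0:ℝ),
            ENNReal.ofReal (ψ (x, y)) / ENNReal.ofReal (y * L (x / y)))
        = ∫⁻ p in Set.Ioi (0:ℝ),
            ENNReal.ofReal (ψ (p * y, y)) / ENNReal.ofReal (L p) := by
      intro y hy
      rw [Set.mem_Ioi] at hy
      have hy' : y ≠ 0 := ne_of_gt hy
      have e1 : ∀ x : ℝ, ENNReal.ofReal (ψ (x, y)) / ENNReal.ofReal (y * L (x / y))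
          = (fun t => ENNReal.ofReal (ψ (t * y, y))
              / (ENNReal.ofReal y * ENNReal.ofReal (L t))) (x / y) := by
        intro x
        simp only
        rw [div_mul_cancel₀ _ hy', ENNReal.ofReal_mul hy.le]
      have hGm : Measurable fun t : ℝ => ENNReal.ofReal (ψ (t * y, y))
          / (ENNReal.ofReal y * ENNReal.ofReal (L t)) :=
        ((hψmeas.comp ((measurable_id.mul_const y).prodMk measurable_const)).ennreal_ofReal).div
          (measurable_const.mul (hLmeas.ennreal_ofReal))
      calc (∫⁻ x in Set.Ioi (0:ℝ),
            ENNReal.ofReal (ψ (x, y)) / ENNReal.ofReal (y * L (x / y)))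
          = ∫⁻ x in Set.Ioi (0:ℝ), (fun t => ENNReal.ofReal (ψ (t * y, y))
              / (ENNReal.ofReal y * ENNReal.ofReal (L t))) (x / y) :=
            lintegral_congr fun x => e1 x
        _ = ENNReal.ofReal y * ∫⁻ p in Set.Ioi (0:ℝ), ENNReal.ofReal (ψ (p * y, y))
              / (ENNReal.ofReal y * ENNReal.ofReal (L p)) := aux_scale _ hGm hy
        _ = ∫⁻ p in Set.Ioi (0:ℝ), ENNReal.ofReal y * (ENNReal.ofReal (ψ (p * y, y))
              / (ENNReal.ofReal y * ENNReal.ofReal (L p))) :=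
            (lintegral_const_mul' _ _ ENNReal.ofReal_ne_top).symm
        _ = ∫⁻ p in Set.Ioi (0:ℝ),
              ENNReal.ofReal (ψ (p * y, y)) / ENNReal.ofReal (L p) :=
            lintegral_congr fun p => cancel_mul_div _ _
              (by simpa using hy) ENNReal.ofReal_ne_top
    have step3 : (∫⁻ y in Set.Ioi (0:ℝ), ∫⁻ p in Set.Ioi (0:ℝ),
            ENNReal.ofReal (ψ (p * y, y)) / ENNReal.ofReal (L p))
        = ∫⁻ p in Set.Ioi (0:ℝ), ∫⁻ y in Set.Ioi (0:ℝ),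
            ENNReal.ofReal (ψ (p * y, y)) / ENNReal.ofReal (L p) := by
      refine lintegral_lintegral_swap ?_
      refine Measurable.aemeasurable ?_
      exact ((hψmeas.comp ((measurable_snd.mul measurable_fst).prodMk
        measurable_fst)).ennreal_ofReal).div ((hLmeas.comp measurable_snd).ennreal_ofReal)
    have step4 : ∀ p : ℝ, (∫⁻ y in Set.Ioi (0:ℝ),
            ENNReal.ofReal (ψ (p * y, y)) / ENNReal.ofReal (L p))
        = (∫⁻ y in Set.Ioi (0:ℝ), ENNReal.ofReal (ψ (p * y, y)))
            / ENNReal.ofReal (L p) := by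
      intro p
      simp_rw [div_eq_mul_inv]
      exact lintegral_mul_const'' _
        ((hψmeas.comp ((measurable_const_mul p).prodMk measurable_id)).ennreal_ofReal).aemeasurable
    rw [step1, setLIntegral_congr_fun measurableSet_Ioi step2, step3]
    refine setLIntegral_congr_fun measurableSet_Ioi (fun p hp => ?_)
    rw [step4, angular ψ hψmeas hp]
  · intro p
    rw [arccot, Real.sin_pi_div_two_sub, Real.cos_arctan]
end
end

section
/- Let ψ₁, ψ₂ : (0,∞)² → [0,∞) be measurable belief functions and suppose there is a constant α > 0 such that φ_{ψ₁}(θ) = α · φ_{ψ₂}(θ) for almost every θ ∈ (0, π/2), where φ_ψ(θ) = ∫₀^∞ ψ(r cos θ, r sin θ) dr. Then a feasible triple (L, X₀, Y₀) is optimal for ψ₁ if and only if it is optimal for ψ₂. -/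
open MeasureTheory Set
open scoped ENNReal

noncomputable section

/-!
STATEMENT 5: If two belief functions have proportional angular marginals,
`φ_{ψ₁} = α·φ_{ψ₂}` a.e. on `(0, π/2)` for some constant `α > 0`, then a feasible triple
is optimal for `ψ₁` if and only if it is optimal for `ψ₂`.
-/

section Aux

open Real

/-- The polar square `(0,∞) × (0, π/2)`. -/
def polarS : Set (ℝ × ℝ) := Set.Ioi (0:ℝ) ×ˢ Set.Ioo 0 (π / 2)

lemma polarS_meas : MeasurableSet polarS :=
  measurableSet_Ioi.prod measurableSet_Ioo

lemma polarS_subset : polarS ⊆ polarCoord.target := by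
  rw [polarCoord_target]
  exact Set.prod_mono subset_rfl (Set.Ioo_subset_Ioo (by linarith [pi_pos]) (by linarith [pi_pos]))

lemma polar_image : polarCoord.symm '' polarS = orth := by
  ext ⟨x, y⟩
  simp only [Set.mem_image, orth, polarS, Set.mem_prod, Set.mem_Ioi, Set.mem_Ioo, Prod.exists]
  constructor
  · rintro ⟨r, θ, ⟨hr, hθ1, hθ2⟩, h⟩
    have hc : 0 < cos θ := cos_pos_of_mem_Ioo ⟨by linarith [pi_pos], hθ2⟩
    have hs : 0 < sin θ := sin_pos_of_pos_of_lt_pi hθ1 (by linarith [pi_pos])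
    rw [polarCoord_symm_apply] at h
    obtain ⟨hx, hy⟩ := Prod.mk.injEq .. ▸ h
    constructor
    · rw [← hx]; positivity
    · rw [← hy]; positivity
  · rintro ⟨hx, hy⟩
    refine ⟨√(x ^ 2 + y ^ 2), arctan (y / x), ⟨?_, ?_, arctan_lt_pi_div_two _⟩, ?_⟩
    · positivity
    · by_contra hle
      push_neg at hle
      have h1 : sin (arctan (y / x)) ≤ 0 :=
        sin_nonpos_of_nonpos_of_neg_pi_le hle
          (by linarith [neg_pi_div_two_lt_arctan (y / x), pi_pos])
      rw [sin_arctan] at h1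
      have : 0 < y / x / √(1 + (y / x) ^ 2) := by positivity
      linarith
    · have hsq : (0:ℝ) < x ^ 2 + y ^ 2 := by positivity
      have h1 : 1 + (y / x) ^ 2 = (x ^ 2 + y ^ 2) / x ^ 2 := by field_simp
      have h2 : √(1 + (y / x) ^ 2) = √(x ^ 2 + y ^ 2) / x := by
        rw [h1, Real.sqrt_div hsq.le, Real.sqrt_sq hx.le]
      have h3 : √(x ^ 2 + y ^ 2) ≠ 0 := by positivity
      rw [polarCoord_symm_apply, cos_arctan, sin_arctan, h2]
      refine Prod.ext ?_ ?_ <;> field_simp <;> ring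

lemma polar_det (p : ℝ × ℝ) :
    (LinearMap.toContinuousLinearMap (Matrix.toLin (Module.Basis.finTwoProd ℝ) (Module.Basis.finTwoProd ℝ)
      !![cos p.2, -p.1 * sin p.2; sin p.2, p.1 * cos p.2])).det = p.1 := by
  conv_rhs => rw [← one_mul p.1, ← cos_sq_add_sin_sq p.2]
  simp only [neg_mul, LinearMap.det_toContinuousLinearMap, LinearMap.det_toLin,
    Matrix.det_fin_two_of, sub_neg_eq_add]
  ring

/-- Polar change of variables for lower integrals over the positive orthant. -/
lemma lintegral_orth_polar (g : ℝ × ℝ → ℝ≥0∞) :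
    ∫⁻ q in orth, g q =
      ∫⁻ p in polarS, ENNReal.ofReal p.1 * g (polarCoord.symm p) := by
  set B : ℝ × ℝ → ℝ × ℝ →L[ℝ] ℝ × ℝ := fun p =>
    LinearMap.toContinuousLinearMap (Matrix.toLin (Module.Basis.finTwoProd ℝ) (Module.Basis.finTwoProd ℝ)
      !![cos p.2, -p.1 * sin p.2; sin p.2, p.1 * cos p.2]) with hB
  have hderiv : ∀ p ∈ polarS, HasFDerivWithinAt polarCoord.symm (B p) polarS p := fun p _ =>
    (hasFDerivAt_polarCoord_symm p).hasFDerivWithinAt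
  have hinj : Set.InjOn polarCoord.symm polarS :=
    polarCoord.symm.injOn.mono polarS_subset
  rw [← polar_image,
    lintegral_image_eq_lintegral_abs_det_fderiv_mul volume polarS_meas hderiv hinj g]
  refine setLIntegral_congr_fun polarS_meas (fun p hp => ?_)
  rw [hB, polar_det, abs_of_pos hp.1]

lemma aux_mul_div (a b X : ℝ≥0∞) (ha : a ≠ 0) (ha' : a ≠ ∞) :
    a * (X / (a * b)) = X / b := by
  rw [div_eq_mul_inv, ENNReal.mul_inv (Or.inl ha) (Or.inl ha'), div_eq_mul_inv]
  calc a * (X * (a⁻¹ * b⁻¹)) = a * a⁻¹ * (X * b⁻¹) := by ring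
    _ = X * b⁻¹ := by rw [ENNReal.mul_inv_cancel ha ha', one_mul]

/-- The inefficiency in angular form. -/
lemma ineff_angular (ψ : ℝ × ℝ → ℝ) (hψ : Measurable ψ) (L : ℝ → ℝ) (hL : Measurable L) :
    Ineff ψ L = ∫⁻ θ in Set.Ioo 0 (π / 2),
      phiAng ψ θ / ENNReal.ofReal (sin θ * L (cos θ / sin θ)) := by
  have step1 : Ineff ψ L = ∫⁻ p in polarS,
      ENNReal.ofReal p.1 * (ENNReal.ofReal (ψ (p.1 * cos p.2, p.1 * sin p.2)) /
        ENNReal.ofReal (p.1 * (sin p.2 * L (cos p.2 / sin p.2)))) := by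
    rw [Ineff, lintegral_orth_polar]
    refine setLIntegral_congr_fun polarS_meas (fun p hp => ?_)
    rw [polarCoord_symm_apply]
    have hp1 : p.1 ≠ 0 := hp.1.out.ne'
    rw [mul_div_mul_left _ _ hp1]
    ring_nf
  rw [step1, polarS, Measure.volume_eq_prod, ← Measure.prod_restrict]
  have hmeas : Measurable fun p : ℝ × ℝ =>
      ENNReal.ofReal p.1 * (ENNReal.ofReal (ψ (p.1 * cos p.2, p.1 * sin p.2)) /
        ENNReal.ofReal (p.1 * (sin p.2 * L (cos p.2 / sin p.2)))) := by
    have h1 : Measurable fun p : ℝ × ℝ => (p.1 * cos p.2, p.1 * sin p.2) :=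
      (measurable_fst.mul (Real.measurable_cos.comp measurable_snd)).prodMk
        (measurable_fst.mul (Real.measurable_sin.comp measurable_snd))
    have h2 : Measurable fun p : ℝ × ℝ => p.1 * (sin p.2 * L (cos p.2 / sin p.2)) :=
      measurable_fst.mul ((Real.measurable_sin.comp measurable_snd).mul
        (hL.comp ((Real.measurable_cos.comp measurable_snd).div
          (Real.measurable_sin.comp measurable_snd))))
    exact (ENNReal.measurable_ofReal.comp measurable_fst).mul
      ((ENNReal.measurable_ofReal.comp (hψ.comp h1)).div
        (ENNReal.measurable_ofReal.comp h2))
  rw [MeasureTheory.lintegral_prod_symm _ hmeas.aemeasurable]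
  refine lintegral_congr fun θ => ?_
  have hinner : ∀ r ∈ Set.Ioi (0:ℝ),
      ENNReal.ofReal r * (ENNReal.ofReal (ψ (r * cos θ, r * sin θ)) /
        ENNReal.ofReal (r * (sin θ * L (cos θ / sin θ)))) =
      ENNReal.ofReal (ψ (r * cos θ, r * sin θ)) /
        ENNReal.ofReal (sin θ * L (cos θ / sin θ)) := by
    intro r hr
    rw [ENNReal.ofReal_mul (le_of_lt hr)]
    exact aux_mul_div _ _ _ (by simpa using hr) ENNReal.ofReal_ne_top
  rw [setLIntegral_congr_fun measurableSet_Ioi hinner]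
  have hmeas' : Measurable fun r : ℝ => ENNReal.ofReal (ψ (r * cos θ, r * sin θ)) :=
    ENNReal.measurable_ofReal.comp (hψ.comp
      ((measurable_id.mul measurable_const).prodMk (measurable_id.mul measurable_const)))
  simp only [div_eq_mul_inv]
  exact lintegral_mul_const _ hmeas'

end Aux

theorem stmt_5 (PX PY B : ℝ) (hPX : 0 < PX) (hPY : 0 < PY) (hB : 0 < B)
    (ψ₁ ψ₂ : ℝ × ℝ → ℝ)
    (hψ₁meas : Measurable ψ₁) (hψ₁nn : ∀ q, 0 ≤ ψ₁ q)
    (hψ₂meas : Measurable ψ₂) (hψ₂nn : ∀ q, 0 ≤ ψ₂ q)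
    (α : ℝ) (hα : 0 < α)
    (hphi : ∀ᵐ θ ∂(volume.restrict (Set.Ioo 0 (Real.pi / 2))),
      phiAng ψ₁ θ = ENNReal.ofReal α * phiAng ψ₂ θ) :
    ∀ L X0 Y0, Feasible PX PY B L X0 Y0 →
      (IsOptimal PX PY B ψ₁ L X0 Y0 ↔ IsOptimal PX PY B ψ₂ L X0 Y0) := by
  have key : ∀ M : ℝ → ℝ, Measurable M →
      Ineff ψ₁ M = ENNReal.ofReal α * Ineff ψ₂ M := by
    intro M hM
    rw [ineff_angular ψ₁ hψ₁meas M hM, ineff_angular ψ₂ hψ₂meas M hM,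
      ← lintegral_const_mul' _ _ ENNReal.ofReal_ne_top]
    refine lintegral_congr_ae (hphi.mono fun θ h => ?_)
    dsimp only
    rw [h, mul_div_assoc]
  have hiff : ∀ a b : ℝ≥0∞, ENNReal.ofReal α * a ≤ ENNReal.ofReal α * b ↔ a ≤ b := fun a b =>
    ENNReal.mul_le_mul_iff_right (ENNReal.ofReal_pos.mpr hα).ne' ENNReal.ofReal_ne_top
  intro L X0 Y0 hF
  constructor
  · rintro ⟨hfeas, hmin⟩
    refine ⟨hfeas, fun L' X0' Y0' hF' => ?_⟩
    have h := hmin L' X0' Y0' hF'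
    rw [key L hfeas.1, key L' hF'.1] at h
    exact (hiff _ _).mp h
  · rintro ⟨hfeas, hmin⟩
    refine ⟨hfeas, fun L' X0' Y0' hF' => ?_⟩
    have h := hmin L' X0' Y0' hF'
    rw [key L hfeas.1, key L' hF'.1]
    exact (hiff _ _).mpr h
end
end

section
/- Let ψ be a measurable belief function with φ_ψ(θ) = ∫₀^∞ ψ(r cos θ, r sin θ) dr positive on a set of θ ∈ (0, π/2) of positive measure, and suppose some feasible triple has finite expected CFMM inefficiency I_ψ. Then at any optimal feasible triple (L, X₀, Y₀), all three constraints hold with equality: ∫₀^{p₀} L(p)/p dp = Y₀, ∫_{p₀}^∞ L(p)/p² dp = X₀, and P_X·X₀ + P_Y·Y₀ = B. -/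
open MeasureTheory Set
open scoped ENNReal

noncomputable section

/-- The polar map sends `(0,∞) × (0, π/2)` onto the open positive orthant. -/
lemma polar_image_orth :
    (⇑polarCoord.symm) '' (Set.Ioi (0:ℝ) ×ˢ Set.Ioo (0:ℝ) (Real.pi/2)) = orth := by
  have hsymm : ∀ p : ℝ × ℝ, polarCoord.symm p = (p.1 * Real.cos p.2, p.1 * Real.sin p.2) :=
    fun p => rfl
  apply Set.Subset.antisymm
  · rintro q ⟨⟨r, θ⟩, ⟨hr, hθ1, hθ2⟩, rfl⟩
    have hr' : (0:ℝ) < r := hr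
    have hcos : 0 < Real.cos θ := Real.cos_pos_of_mem_Ioo
      ⟨by linarith [Real.pi_pos], hθ2⟩
    have hsin : 0 < Real.sin θ := Real.sin_pos_of_pos_of_lt_pi hθ1
      (by linarith [Real.pi_pos])
    rw [hsymm]
    exact ⟨mul_pos hr' hcos, mul_pos hr' hsin⟩
  · rintro ⟨x, y⟩ ⟨hx, hy⟩
    simp only [Set.mem_Ioi] at hx hy
    have hx2y2 : (0:ℝ) < x ^ 2 + y ^ 2 := by positivity
    have hrpos : 0 < Real.sqrt (x ^ 2 + y ^ 2) := Real.sqrt_pos.mpr hx2y2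
    have htpos : 0 < y / x := div_pos hy hx
    have harc_pos : 0 < Real.arctan (y / x) := by
      have := Real.arctan_strictMono htpos
      simpa [Real.arctan_zero] using this
    refine ⟨(Real.sqrt (x ^ 2 + y ^ 2), Real.arctan (y / x)),
      ⟨hrpos, harc_pos, Real.arctan_lt_pi_div_two _⟩, ?_⟩
    rw [hsymm]
    have hsq : Real.sqrt (1 + (y / x) ^ 2) = Real.sqrt (x ^ 2 + y ^ 2) / x := by
      have h1 : 1 + (y / x) ^ 2 = (x ^ 2 + y ^ 2) / x ^ 2 := by
        field_simp
      rw [h1, Real.sqrt_div hx2y2.le, Real.sqrt_sq hx.le]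
    have hsqrt_ne : Real.sqrt (x ^ 2 + y ^ 2) ≠ 0 := hrpos.ne'
    simp only [Real.cos_arctan, Real.sin_arctan, hsq]
    have hxne : x ≠ 0 := hx.ne'
    rw [Prod.mk.injEq]
    constructor
    · field_simp
    · field_simp

/-- Change of variables to polar coordinates for the lintegral over the orthant. -/
lemma lintegral_orth_polar_s6 (ψ : ℝ × ℝ → ℝ) :
    ∫⁻ q in orth, ENNReal.ofReal (ψ q) =
    ∫⁻ p in Set.Ioi (0:ℝ) ×ˢ Set.Ioo (0:ℝ) (Real.pi/2),
      ENNReal.ofReal p.1 *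
        ENNReal.ofReal (ψ (p.1 * Real.cos p.2, p.1 * Real.sin p.2)) := by
  set s : Set (ℝ × ℝ) := Set.Ioi (0:ℝ) ×ˢ Set.Ioo (0:ℝ) (Real.pi/2) with hs_def
  have hs : MeasurableSet s := measurableSet_Ioi.prod measurableSet_Ioo
  set B : ℝ × ℝ → ℝ × ℝ →L[ℝ] ℝ × ℝ := fun p =>
    LinearMap.toContinuousLinearMap (Matrix.toLin (Module.Basis.finTwoProd ℝ) (Module.Basis.finTwoProd ℝ)
      !![Real.cos p.2, -p.1 * Real.sin p.2; Real.sin p.2, p.1 * Real.cos p.2]) with hB_def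
  have hB_det : ∀ p : ℝ × ℝ, (B p).det = p.1 := by
    intro p
    conv_rhs => rw [← one_mul p.1, ← Real.cos_sq_add_sin_sq p.2]
    simp only [hB_def, neg_mul, LinearMap.det_toContinuousLinearMap, LinearMap.det_toLin,
      Matrix.det_fin_two_of, sub_neg_eq_add]
    ring
  have hf' : ∀ p ∈ s, HasFDerivWithinAt (⇑polarCoord.symm) (B p) s p := fun p _ =>
    (hasFDerivAt_polarCoord_symm p).hasFDerivWithinAt
  have hsub : s ⊆ polarCoord.symm.source := by
    rintro ⟨r, θ⟩ ⟨hr, hθ1, hθ2⟩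
    have hpi : 0 < Real.pi := Real.pi_pos
    exact ⟨hr, by constructor <;> [linarith; linarith]⟩
  have hinj : Set.InjOn (⇑polarCoord.symm) s := polarCoord.symm.injOn.mono hsub
  have h := lintegral_image_eq_lintegral_abs_det_fderiv_mul volume hs hf' hinj
    (fun q => ENNReal.ofReal (ψ q))
  rw [polar_image_orth] at h
  rw [h]
  apply setLIntegral_congr_fun hs
  intro p hp
  dsimp only
  have hp1 : 0 < p.1 := hp.1
  rw [hB_det, abs_of_pos hp1]
  rfl

theorem stmt_6 (PX PY B : ℝ) (hPX : 0 < PX) (hPY : 0 < PY) (hB : 0 < B)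
    (ψ : ℝ × ℝ → ℝ) (hmeas : Measurable ψ) (hnn : ∀ q, 0 ≤ ψ q)
    (hphi : 0 < volume {θ ∈ Set.Ioo (0:ℝ) (Real.pi / 2) | phiAng ψ θ ≠ 0})
    (hfeas : ∃ L X0 Y0, Feasible PX PY B L X0 Y0 ∧ Ineff ψ L < ⊤)
    (L : ℝ → ℝ) (X0 Y0 : ℝ) (hopt : IsOptimal PX PY B ψ L X0 Y0) :
    (∫⁻ p in Set.Ioc (0:ℝ) (PX / PY), ENNReal.ofReal (L p / p)) = ENNReal.ofReal Y0 ∧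
    (∫⁻ p in Set.Ioi (PX / PY), ENNReal.ofReal (L p / p ^ 2)) = ENNReal.ofReal X0 ∧
    PX * X0 + PY * Y0 = B := by
  obtain ⟨hfeasL, hmin⟩ := hopt
  obtain ⟨hLmeas, hLnn, hX0, hY0, hA, hC, hbud⟩ := hfeasL
  obtain ⟨L₁, X₁, Y₁, hf₁, hI₁⟩ := hfeas
  have hItop : Ineff ψ L ≠ ⊤ := (lt_of_le_of_lt (hmin L₁ X₁ Y₁ hf₁) hI₁).ne
  -- Step 1: the inefficiency is nonzero.
  have hI0 : Ineff ψ L ≠ 0 := by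
    intro h0
    have hmf : Measurable (fun q : ℝ × ℝ =>
        ENNReal.ofReal (ψ q) / ENNReal.ofReal (q.2 * L (q.1 / q.2))) := by
      apply Measurable.div
      · exact ENNReal.measurable_ofReal.comp hmeas
      · exact ENNReal.measurable_ofReal.comp
          (measurable_snd.mul (hLmeas.comp (measurable_fst.div measurable_snd)))
    have hae : ∀ᵐ q ∂(volume.restrict orth),
        ENNReal.ofReal (ψ q) / ENNReal.ofReal (q.2 * L (q.1 / q.2)) = 0 :=
      (lintegral_eq_zero_iff hmf).mp h0
    have haeψ : ∀ᵐ q ∂(volume.restrict orth), ENNReal.ofReal (ψ q) = 0 := by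
      filter_upwards [hae] with q hq
      rcases ENNReal.div_eq_zero_iff.mp hq with h | h
      · exact h
      · exact absurd h ENNReal.ofReal_ne_top
    have hzero : ∫⁻ q in orth, ENNReal.ofReal (ψ q) = 0 :=
      (lintegral_eq_zero_iff (ENNReal.measurable_ofReal.comp hmeas)).mpr haeψ
    rw [lintegral_orth_polar_s6 ψ] at hzero
    have hgm : Measurable (fun p : ℝ × ℝ => ENNReal.ofReal p.1 *
        ENNReal.ofReal (ψ (p.1 * Real.cos p.2, p.1 * Real.sin p.2))) := by
      apply Measurable.fun_mul
      · exact ENNReal.measurable_ofReal.comp measurable_fst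
      · exact ENNReal.measurable_ofReal.comp (hmeas.comp
          ((measurable_fst.mul (Real.measurable_cos.comp measurable_snd)).prodMk
            (measurable_fst.mul (Real.measurable_sin.comp measurable_snd))))
    rw [Measure.volume_eq_prod, ← Measure.prod_restrict,
      lintegral_prod_symm _ hgm.aemeasurable] at hzero
    have hinner_meas : Measurable fun θ : ℝ => ∫⁻ r in Set.Ioi (0:ℝ),
        ENNReal.ofReal r * ENNReal.ofReal (ψ (r * Real.cos θ, r * Real.sin θ)) := by
      exact Measurable.lintegral_prod_left (f := fun r θ =>
        ENNReal.ofReal r * ENNReal.ofReal (ψ (r * Real.cos θ, r * Real.sin θ))) hgm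
    have haeθ : ∀ᵐ θ ∂(volume.restrict (Set.Ioo (0:ℝ) (Real.pi/2))),
        (∫⁻ r in Set.Ioi (0:ℝ),
          ENNReal.ofReal r * ENNReal.ofReal (ψ (r * Real.cos θ, r * Real.sin θ))) = 0 :=
      (lintegral_eq_zero_iff hinner_meas).mp hzero
    have haeθ' : ∀ᵐ θ ∂(volume.restrict (Set.Ioo (0:ℝ) (Real.pi/2))), phiAng ψ θ = 0 := by
      filter_upwards [haeθ] with θ hθ
      have hm2 : Measurable fun r : ℝ =>
          ENNReal.ofReal r * ENNReal.ofReal (ψ (r * Real.cos θ, r * Real.sin θ)) :=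
        hgm.comp (measurable_id.prodMk measurable_const)
      have h1 := (lintegral_eq_zero_iff hm2).mp hθ
      have h2 : ∀ᵐ r ∂(volume.restrict (Set.Ioi (0:ℝ))),
          ENNReal.ofReal (ψ (r * Real.cos θ, r * Real.sin θ)) = 0 := by
        filter_upwards [h1, ae_restrict_mem measurableSet_Ioi] with r hr hrpos
        have hrpos' : (0:ℝ) < r := hrpos
        rcases mul_eq_zero.mp hr with h | h
        · exact absurd h (by simpa [ENNReal.ofReal_eq_zero, not_le] using hrpos')
        · exact h
      have hm3 : Measurable fun r : ℝ =>
          ENNReal.ofReal (ψ (r * Real.cos θ, r * Real.sin θ)) :=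
        ENNReal.measurable_ofReal.comp (hmeas.comp
          ((measurable_id.mul measurable_const).prodMk (measurable_id.mul measurable_const)))
      exact (lintegral_eq_zero_iff hm3).mpr h2
    have hnull : volume.restrict (Set.Ioo (0:ℝ) (Real.pi/2)) {θ | phiAng ψ θ ≠ 0} = 0 :=
      ae_iff.mp haeθ'
    rw [Measure.restrict_apply' measurableSet_Ioo] at hnull
    have hset : {θ ∈ Set.Ioo (0:ℝ) (Real.pi / 2) | phiAng ψ θ ≠ 0} =
        {θ | phiAng ψ θ ≠ 0} ∩ Set.Ioo (0:ℝ) (Real.pi/2) := by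
      ext θ; simp [and_comm]
    rw [hset, hnull] at hphi
    exact lt_irrefl 0 hphi
  -- Step 2: set up the real values of the constraint integrals.
  set A := ∫⁻ p in Set.Ioc (0:ℝ) (PX / PY), ENNReal.ofReal (L p / p) with hAdef
  set C := ∫⁻ p in Set.Ioi (PX / PY), ENNReal.ofReal (L p / p ^ 2) with hCdef
  have hAtop : A ≠ ⊤ := (lt_of_le_of_lt hA ENNReal.ofReal_lt_top).ne
  have hCtop : C ≠ ⊤ := (lt_of_le_of_lt hC ENNReal.ofReal_lt_top).ne
  set a := A.toReal with hadef
  set x := C.toReal with hxdef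
  have hAa : A = ENNReal.ofReal a := (ENNReal.ofReal_toReal hAtop).symm
  have hCx : C = ENNReal.ofReal x := (ENNReal.ofReal_toReal hCtop).symm
  have ha0 : 0 ≤ a := ENNReal.toReal_nonneg
  have hx0 : 0 ≤ x := ENNReal.toReal_nonneg
  have haY : a ≤ Y0 := ENNReal.toReal_le_of_le_ofReal hY0 hA
  have hxX : x ≤ X0 := ENNReal.toReal_le_of_le_ofReal hX0 hC
  -- Step 3: there is no slack.
  have hnoslack : ¬ (PX * x + PY * a < B) := by
    intro hslt
    set sB := PX * x + PY * a with hsBdef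
    have hsB0 : 0 ≤ sB := by positivity
    set c : ℝ := if 0 < sB then B / sB else 2 with hcdef
    have hc1 : 1 < c := by
      rw [hcdef]; split_ifs with h
      · exact (one_lt_div h).mpr hslt
      · norm_num
    have hc0 : 0 < c := lt_trans one_pos hc1
    have hcsB : c * sB ≤ B := by
      rw [hcdef]; split_ifs with h
      · rw [div_mul_cancel₀ _ h.ne']
      · have : sB = 0 := le_antisymm (not_lt.mp h) hsB0
        rw [this]; linarith
    have hknz : ENNReal.ofReal c ≠ 0 := by
      simp [ENNReal.ofReal_eq_zero, not_le, hc0]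
    have hktop : ENNReal.ofReal c ≠ ⊤ := ENNReal.ofReal_ne_top
    -- feasibility of the scaled triple
    have hfeas' : Feasible PX PY B (fun p => c * L p) (c * x) (c * a) := by
      refine ⟨measurable_const.mul hLmeas, fun p hp => mul_nonneg hc0.le (hLnn p hp),
        mul_nonneg hc0.le hx0, mul_nonneg hc0.le ha0, ?_, ?_, ?_⟩
      · have heq : ∀ p : ℝ, ENNReal.ofReal (c * L p / p) =
            ENNReal.ofReal c * ENNReal.ofReal (L p / p) := by
          intro p
          rw [mul_div_assoc, ENNReal.ofReal_mul hc0.le]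
        calc (∫⁻ p in Set.Ioc (0:ℝ) (PX / PY), ENNReal.ofReal (c * L p / p))
            = ∫⁻ p in Set.Ioc (0:ℝ) (PX / PY),
              ENNReal.ofReal c * ENNReal.ofReal (L p / p) := by simp_rw [heq]
          _ = ENNReal.ofReal c * A := lintegral_const_mul' _ _ hktop
          _ = ENNReal.ofReal (c * a) := by rw [hAa, ← ENNReal.ofReal_mul hc0.le]
          _ ≤ ENNReal.ofReal (c * a) := le_rfl
      · have heq : ∀ p : ℝ, ENNReal.ofReal (c * L p / p ^ 2) =
            ENNReal.ofReal c * ENNReal.ofReal (L p / p ^ 2) := by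
          intro p
          rw [mul_div_assoc, ENNReal.ofReal_mul hc0.le]
        calc (∫⁻ p in Set.Ioi (PX / PY), ENNReal.ofReal (c * L p / p ^ 2))
            = ∫⁻ p in Set.Ioi (PX / PY),
              ENNReal.ofReal c * ENNReal.ofReal (L p / p ^ 2) := by simp_rw [heq]
          _ = ENNReal.ofReal c * C := lintegral_const_mul' _ _ hktop
          _ = ENNReal.ofReal (c * x) := by rw [hCx, ← ENNReal.ofReal_mul hc0.le]
          _ ≤ ENNReal.ofReal (c * x) := le_rfl
      · calc PX * (c * x) + PY * (c * a) = c * sB := by rw [hsBdef]; ring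
          _ ≤ B := hcsB
    -- the scaled inefficiency
    have hscale : Ineff ψ (fun p => c * L p) = Ineff ψ L * (ENNReal.ofReal c)⁻¹ := by
      unfold Ineff
      rw [← lintegral_mul_const' _ _ (ENNReal.inv_ne_top.mpr hknz)]
      apply setLIntegral_congr_fun (measurableSet_Ioi.prod measurableSet_Ioi)
      intro q hq
      dsimp only
      have h1 : q.2 * (c * L (q.1 / q.2)) = c * (q.2 * L (q.1 / q.2)) := by ring
      rw [h1, ENNReal.ofReal_mul hc0.le]
      simp only [div_eq_mul_inv, ENNReal.mul_inv (Or.inl hknz) (Or.inl hktop)]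
      ring
    have hlt : Ineff ψ L * (ENNReal.ofReal c)⁻¹ < Ineff ψ L := by
      conv_rhs => rw [← mul_one (Ineff ψ L)]
      rw [ENNReal.mul_lt_mul_iff_right hI0 hItop, ENNReal.inv_lt_one]
      rw [← ENNReal.ofReal_one]
      exact (ENNReal.ofReal_lt_ofReal_iff hc0).mpr hc1
    have hge := hmin _ _ _ hfeas'
    rw [hscale] at hge
    exact absurd (lt_of_le_of_lt hge hlt) (lt_irrefl _)
  -- Step 4: conclude the equalities.
  have hles : PX * x + PY * a ≤ PX * X0 + PY * Y0 :=
    add_le_add (mul_le_mul_of_nonneg_left hxX hPX.le) (mul_le_mul_of_nonneg_left haY hPY.le)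
  have hseq : PX * x + PY * a = B := le_antisymm (le_trans hles hbud) (not_lt.mp hnoslack)
  have hbudeq : PX * X0 + PY * Y0 = B := le_antisymm hbud (by linarith)
  have hxX' : x = X0 := by nlinarith
  have haY' : a = Y0 := by nlinarith
  exact ⟨by rw [hAa, haY'], by rw [hCx, hxX'], hbudeq⟩
end
end

section
/- Fix reference prices P_X, P_Y > 0 and set p₀ = P_X/P_Y. Let L : (0,∞) → [0,∞) be measurable with Y₀ = ∫₀^{p₀} L(p)/p dp < ∞ and X₀ = ∫_{p₀}^∞ L(p)/p² dp < ∞, and set the budget B = P_X·X₀ + P_Y·Y₀. Define the belief ψ(p_X, p_Y) = L(p_X/p_Y)² · (p_Y/p_X) for (p_X, p_Y) ∈ (0, P_X] × (0, P_Y] and ψ(p_X, p_Y) = 0 otherwise. Then the triple (L, X₀, Y₀) is optimal for ψ: I_ψ(L) ≤ I_ψ(L') for every feasible triple (L', X₀', Y₀') with budget B. -/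
open MeasureTheory Set
open scoped ENNReal

noncomputable section

/-!
STATEMENT 9: The inverse problem.  Given any liquidity allocation `L` with finite initial
reserves `X₀, Y₀` and budget `B = P_X·X₀ + P_Y·Y₀`, the belief
`ψ(p_X, p_Y) = L(p_X/p_Y)²·(p_Y/p_X)` on `(0, P_X] × (0, P_Y]` (and `0` elsewhere) makes
the triple `(L, X₀, Y₀)` optimal.
-/

private lemma ennreal_cancel (a b c : ℝ≥0∞) (hc0 : c ≠ 0) (hct : c ≠ ⊤) :
    c * (a / (c * b)) = a / b := by
  rw [div_eq_mul_inv, ENNReal.mul_inv (Or.inl hc0) (Or.inl hct), div_eq_mul_inv]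
  calc c * (a * (c⁻¹ * b⁻¹)) = (c * c⁻¹) * (a * b⁻¹) := by ring
    _ = a * b⁻¹ := by rw [ENNReal.mul_inv_cancel hc0 hct, one_mul]

private lemma lintegral_scale (g : ℝ → ℝ≥0∞) (hg : Measurable g) {y : ℝ} (hy : 0 < y) :
    ∫⁻ x, g x = ENNReal.ofReal y * ∫⁻ p, g (y * p) := by
  have h1 : (∫⁻ p, g (y * p)) = ∫⁻ x, g x ∂(Measure.map (y * ·) volume) :=
    (lintegral_map hg (measurable_const_mul y)).symm
  rw [h1, Real.map_volume_mul_left hy.ne', lintegral_smul_measure, smul_eq_mul, ← mul_assoc,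
    ← ENNReal.ofReal_mul hy.le, abs_of_pos (inv_pos.2 hy), mul_inv_cancel₀ hy.ne',
    ENNReal.ofReal_one, one_mul]

private lemma ineff_eq (PX PY : ℝ) (hPX : 0 < PX) (hPY : 0 < PY)
    (L : ℝ → ℝ) (hL : Measurable L) (M : ℝ → ℝ) (hM : Measurable M)
    (ψ : ℝ × ℝ → ℝ)
    (hψ : ψ = fun q => if q.1 ∈ Set.Ioc (0:ℝ) PX ∧ q.2 ∈ Set.Ioc (0:ℝ) PY
        then (L (q.1 / q.2)) ^ 2 * (q.2 / q.1) else 0) :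
    Ineff ψ M = ∫⁻ p in Set.Ioi (0:ℝ),
      ENNReal.ofReal (L p ^ 2 * (min PY (PX / p) / p)) / ENNReal.ofReal (M p) := by
  have hψm : Measurable ψ := by
    rw [hψ]
    exact Measurable.ite (measurableSet_Ioc.prod measurableSet_Ioc)
      (((hL.comp (measurable_fst.div measurable_snd)).pow_const 2).mul
        (measurable_snd.div measurable_fst)) measurable_const
  set F : ℝ × ℝ → ℝ≥0∞ :=
    fun q => ENNReal.ofReal (ψ q) / ENNReal.ofReal (q.2 * M (q.1 / q.2)) with hFdef
  have hF : Measurable F :=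
    (ENNReal.measurable_ofReal.comp hψm).div
      (ENNReal.measurable_ofReal.comp
        (measurable_snd.mul (hM.comp (measurable_fst.div measurable_snd))))
  set h : ℝ → ℝ≥0∞ :=
    fun p => ENNReal.ofReal (L p ^ 2 / p) / ENNReal.ofReal (M p) with hhdef
  have hh : Measurable h :=
    (ENNReal.measurable_ofReal.comp ((hL.pow_const 2).div measurable_id)).div
      (ENNReal.measurable_ofReal.comp hM)
  set R : Set (ℝ × ℝ) := Set.Ioc 0 PX ×ˢ Set.Ioc 0 PY with hRdef
  have hRmeas : MeasurableSet R := measurableSet_Ioc.prod measurableSet_Ioc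
  have hRsub : R ⊆ orth := Set.prod_mono Set.Ioc_subset_Ioi_self Set.Ioc_subset_Ioi_self
  -- Step 1
  have step1 : Ineff ψ M = ∫⁻ q in R, F q := by
    have horth : MeasurableSet orth := measurableSet_Ioi.prod measurableSet_Ioi
    have e1 : (∫⁻ q in orth, F q) = ∫⁻ q in orth, R.indicator F q := by
      refine setLIntegral_congr_fun_ae horth (Filter.Eventually.of_forall fun q hq => ?_)
      by_cases hqR : q ∈ R
      · rw [Set.indicator_of_mem hqR]
      · rw [Set.indicator_of_notMem hqR]
        have : ψ q = 0 := by
          rw [hψ]; simp only []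
          rw [if_neg (by simpa [hRdef, Set.mem_prod] using hqR)]
        simp [hFdef, this]
    calc Ineff ψ M = ∫⁻ q in orth, R.indicator F q := e1
      _ = ∫⁻ q in R, F q ∂(volume.restrict orth) := lintegral_indicator hRmeas F
      _ = ∫⁻ q in R, F q := by
          rw [Measure.restrict_restrict hRmeas, Set.inter_eq_left.2 hRsub]
  -- Step 2
  have step2 : (∫⁻ q in R, F q) = ∫⁻ y in Set.Ioc (0:ℝ) PY, ∫⁻ x in Set.Ioc (0:ℝ) PX, F (x, y) := by
    calc (∫⁻ q in R, F q)
        = ∫⁻ q, F q ∂((volume.restrict (Set.Ioc (0:ℝ) PX)).prod (volume.restrict (Set.Ioc (0:ℝ) PY))) := by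
          rw [Measure.prod_restrict, ← Measure.volume_eq_prod]
      _ = ∫⁻ y in Set.Ioc (0:ℝ) PY, ∫⁻ x in Set.Ioc (0:ℝ) PX, F (x, y) :=
          lintegral_prod_symm' F hF
  -- Step 3 : inner substitution
  have inner : ∀ y ∈ Set.Ioc (0:ℝ) PY,
      (∫⁻ x in Set.Ioc (0:ℝ) PX, F (x, y)) = ∫⁻ p in Set.Ioc 0 (PX / y), h p := by
    intro y hy
    obtain ⟨hy0, hyP⟩ := hy
    have hFy : Measurable fun x => F (x, y) := hF.comp measurable_prodMk_right
    have hgm : Measurable ((Set.Ioc (0:ℝ) PX).indicator fun x => F (x, y)) :=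
      hFy.indicator measurableSet_Ioc
    rw [← lintegral_indicator measurableSet_Ioc, ← lintegral_indicator measurableSet_Ioc,
      lintegral_scale _ hgm hy0, ← lintegral_const_mul' _ _ ENNReal.ofReal_ne_top]
    refine lintegral_congr fun p => ?_
    by_cases hp : p ∈ Set.Ioc 0 (PX / y)
    · have hyp : y * p ∈ Set.Ioc (0:ℝ) PX :=
        ⟨mul_pos hy0 hp.1, by rw [← le_div_iff₀' hy0]; exact hp.2⟩
      rw [Set.indicator_of_mem hyp, Set.indicator_of_mem hp]
      have e1 : y * p / y = p := by field_simp
      have e2 : y / (y * p) = 1 / p := by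
        rw [div_mul_eq_div_div, div_self hy0.ne']
      have e3 : ψ (y * p, y) = L p ^ 2 / p := by
        rw [hψ]; simp only []
        rw [if_pos ⟨hyp, ⟨hy0, hyP⟩⟩, e1, e2, mul_one_div]
      have e4 : ENNReal.ofReal (y * M (y * p / y))
          = ENNReal.ofReal y * ENNReal.ofReal (M p) := by
        rw [e1, ENNReal.ofReal_mul hy0.le]
      simp only [hFdef, hhdef, e3, e4]
      exact ennreal_cancel _ _ _ (ENNReal.ofReal_pos.2 hy0).ne' ENNReal.ofReal_ne_top
    · have hyp : y * p ∉ Set.Ioc (0:ℝ) PX := fun hcon =>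
        hp ⟨by nlinarith [hcon.1], by rw [le_div_iff₀' hy0]; exact hcon.2⟩
      rw [Set.indicator_of_notMem hyp, Set.indicator_of_notMem hp, mul_zero]
  -- Step 4: swap order of integration
  set J : ℝ → ℝ → ℝ≥0∞ :=
    fun y p => if 0 < y ∧ y ≤ PY ∧ 0 < p ∧ p * y ≤ PX then h p else 0 with hJdef
  have hJmeas : Measurable (Function.uncurry J) := by
    have hset : MeasurableSet {z : ℝ × ℝ | 0 < z.1 ∧ z.1 ≤ PY ∧ 0 < z.2 ∧ z.2 * z.1 ≤ PX} := by
      simp only [Set.setOf_and]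
      exact (measurableSet_lt measurable_const measurable_fst).inter
        ((measurableSet_le measurable_fst measurable_const).inter
          ((measurableSet_lt measurable_const measurable_snd).inter
            (measurableSet_le (measurable_snd.mul measurable_fst) measurable_const)))
    exact Measurable.ite hset (hh.comp measurable_snd) measurable_const
  have claim1 : ∀ y, (∫⁻ p, J y p)
      = (Set.Ioc (0:ℝ) PY).indicator (fun y' => ∫⁻ p in Set.Ioc 0 (PX / y'), h p) y := by
    intro y
    by_cases hy : y ∈ Set.Ioc (0:ℝ) PY
    · rw [Set.indicator_of_mem hy, ← lintegral_indicator measurableSet_Ioc]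
      refine lintegral_congr fun p => ?_
      by_cases hp : p ∈ Set.Ioc 0 (PX / y)
      · rw [Set.indicator_of_mem hp]
        simp only [hJdef]
        exact if_pos ⟨hy.1, hy.2, hp.1, (le_div_iff₀ hy.1).1 hp.2⟩
      · rw [Set.indicator_of_notMem hp]
        simp only [hJdef]
        exact if_neg fun hcon => hp ⟨hcon.2.2.1, (le_div_iff₀ hy.1).2 hcon.2.2.2⟩
    · rw [Set.indicator_of_notMem hy]
      have hz : ∀ p, J y p = 0 := fun p => if_neg fun hcon => hy ⟨hcon.1, hcon.2.1⟩
      simp [hz]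
  have claim2 : ∀ p, (∫⁻ y, J y p)
      = (Set.Ioi (0:ℝ)).indicator (fun p' => h p' * ENNReal.ofReal (min PY (PX / p'))) p := by
    intro p
    by_cases hp : p ∈ Set.Ioi (0:ℝ)
    · have hp0 : (0:ℝ) < p := hp
      rw [Set.indicator_of_mem hp]
      have e1 : ∀ y, J y p = (Set.Ioc (0:ℝ) (min PY (PX / p))).indicator (fun _ => h p) y := by
        intro y
        by_cases hy : y ∈ Set.Ioc (0:ℝ) (min PY (PX / p))
        · rw [Set.indicator_of_mem hy]
          simp only [hJdef]
          have h2 := le_min_iff.1 hy.2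
          exact if_pos ⟨hy.1, h2.1, hp0, by rw [mul_comm]; exact (le_div_iff₀ hp0).1 h2.2⟩
        · rw [Set.indicator_of_notMem hy]
          simp only [hJdef]
          exact if_neg fun hcon => hy ⟨hcon.1, le_min_iff.2
            ⟨hcon.2.1, (le_div_iff₀ hp0).2 (by rw [mul_comm]; exact hcon.2.2.2)⟩⟩
      simp only [e1]
      rw [lintegral_indicator measurableSet_Ioc, setLIntegral_const, Real.volume_Ioc, sub_zero]
    · rw [Set.indicator_of_notMem hp]
      have hz : ∀ y, J y p = 0 := fun y => if_neg fun hcon => hp hcon.2.2.1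
      simp [hz]
  rw [step1, step2,
    setLIntegral_congr_fun_ae measurableSet_Ioc (Filter.Eventually.of_forall inner)]
  calc (∫⁻ y in Set.Ioc (0:ℝ) PY, ∫⁻ p in Set.Ioc 0 (PX / y), h p)
      = ∫⁻ y, ∫⁻ p, J y p :=
        ((lintegral_congr claim1).trans (lintegral_indicator measurableSet_Ioc _)).symm
    _ = ∫⁻ p, ∫⁻ y, J y p := lintegral_lintegral_swap hJmeas.aemeasurable
    _ = ∫⁻ p in Set.Ioi (0:ℝ), h p * ENNReal.ofReal (min PY (PX / p)) :=
        (lintegral_congr claim2).trans (lintegral_indicator measurableSet_Ioi _)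
    _ = ∫⁻ p in Set.Ioi (0:ℝ),
          ENNReal.ofReal (L p ^ 2 * (min PY (PX / p) / p)) / ENNReal.ofReal (M p) := by
        refine setLIntegral_congr_fun_ae measurableSet_Ioi
          (Filter.Eventually.of_forall fun p hp => ?_)
        have hp0 : (0:ℝ) < p := hp
        simp only [hhdef]
        rw [div_eq_mul_inv, mul_right_comm, ← div_eq_mul_inv,
          ← ENNReal.ofReal_mul (by positivity : (0:ℝ) ≤ L p ^ 2 / p)]
        congr 2
        ring


private lemma ennreal_cancel2 (a b c : ℝ≥0∞) (hc0 : c ≠ 0) (hct : c ≠ ⊤) :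
    a / c * (c * b) = a * b := by
  rw [div_eq_mul_inv]
  calc a * c⁻¹ * (c * b) = (c⁻¹ * c) * (a * b) := by ring
    _ = a * b := by rw [ENNReal.inv_mul_cancel hc0 hct, one_mul]


private lemma weight_integral (PX PY : ℝ) (hPX : 0 < PX) (hPY : 0 < PY) (N : ℝ → ℝ) :
    (∫⁻ p in Set.Ioi (0:ℝ), ENNReal.ofReal (N p * (min PY (PX / p) / p)))
      = ENNReal.ofReal PY * (∫⁻ p in Set.Ioc (0:ℝ) (PX / PY), ENNReal.ofReal (N p / p))
        + ENNReal.ofReal PX * (∫⁻ p in Set.Ioi (PX / PY), ENNReal.ofReal (N p / p ^ 2)) := by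
  have hp0 : 0 < PX / PY := div_pos hPX hPY
  rw [← Set.Ioc_union_Ioi_eq_Ioi hp0.le,
    lintegral_union measurableSet_Ioi Set.Ioc_disjoint_Ioi_same]
  congr 1
  · rw [← lintegral_const_mul' _ _ ENNReal.ofReal_ne_top]
    refine setLIntegral_congr_fun_ae measurableSet_Ioc
      (Filter.Eventually.of_forall fun p hp => ?_)
    have hp1 : (0:ℝ) < p := hp.1
    have hple : p * PY ≤ PX := (le_div_iff₀ hPY).1 hp.2
    have hmin : min PY (PX / p) = PY :=
      min_eq_left (by rw [le_div_iff₀ hp1]; nlinarith)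
    rw [hmin, show N p * (PY / p) = PY * (N p / p) by ring, ENNReal.ofReal_mul hPY.le]
  · rw [← lintegral_const_mul' _ _ ENNReal.ofReal_ne_top]
    refine setLIntegral_congr_fun_ae measurableSet_Ioi
      (Filter.Eventually.of_forall fun p hp => ?_)
    have hp2 : PX / PY < p := hp
    have hp1 : (0:ℝ) < p := hp0.trans hp2
    have hple : PX < p * PY := (div_lt_iff₀ hPY).1 hp2
    have hmin : min PY (PX / p) = PX / p :=
      min_eq_right (by rw [div_le_iff₀ hp1]; nlinarith)
    rw [hmin, show N p * (PX / p / p) = PX * (N p / p ^ 2) by ring, ENNReal.ofReal_mul hPX.le]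

private lemma cauchy {μ : Measure ℝ} (f A G : ℝ → ℝ≥0∞) (hA : AEMeasurable A μ)
    (hG : AEMeasurable G μ)
    (hpt : ∀ᵐ x ∂μ, f x ≤ (A x * G x) ^ ((2:ℝ)⁻¹)) :
    ∫⁻ x, f x ∂μ ≤ (∫⁻ x, A x ∂μ) ^ ((2:ℝ)⁻¹) * (∫⁻ x, G x ∂μ) ^ ((2:ℝ)⁻¹) := by
  have h2 : Real.HolderConjugate 2 2 := Real.HolderConjugate.two_two
  have key := ENNReal.lintegral_mul_le_Lp_mul_Lq μ h2
    (hA.pow_const ((2:ℝ)⁻¹)) (hG.pow_const ((2:ℝ)⁻¹))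
  have e1 : ∀ x : ℝ≥0∞, (x ^ ((2:ℝ)⁻¹)) ^ (2:ℝ) = x := fun x => by
    rw [← ENNReal.rpow_mul]
    norm_num
  calc ∫⁻ x, f x ∂μ
      ≤ ∫⁻ x, ((fun x => A x ^ ((2:ℝ)⁻¹)) * fun x => G x ^ ((2:ℝ)⁻¹)) x ∂μ := by
        refine lintegral_mono_ae (hpt.mono fun x hx => ?_)
        simpa [ENNReal.mul_rpow_of_nonneg _ _ (by norm_num : (0:ℝ) ≤ (2:ℝ)⁻¹)] using hx
    _ ≤ (∫⁻ x, (A x ^ ((2:ℝ)⁻¹)) ^ (2:ℝ) ∂μ) ^ (1/(2:ℝ))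
          * (∫⁻ x, (G x ^ ((2:ℝ)⁻¹)) ^ (2:ℝ) ∂μ) ^ (1/(2:ℝ)) := key
    _ = (∫⁻ x, A x ∂μ) ^ ((2:ℝ)⁻¹) * (∫⁻ x, G x ∂μ) ^ ((2:ℝ)⁻¹) := by
        simp_rw [e1, one_div]

theorem stmt_9 (PX PY : ℝ) (hPX : 0 < PX) (hPY : 0 < PY)
    (L : ℝ → ℝ) (hLmeas : Measurable L) (hLnn : ∀ p ∈ Set.Ioi (0:ℝ), 0 ≤ L p)
    (X0 Y0 : ℝ) (hX0nn : 0 ≤ X0) (hY0nn : 0 ≤ Y0)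
    (hY0 : (∫⁻ p in Set.Ioc (0:ℝ) (PX / PY), ENNReal.ofReal (L p / p))
        = ENNReal.ofReal Y0)
    (hX0 : (∫⁻ p in Set.Ioi (PX / PY), ENNReal.ofReal (L p / p ^ 2))
        = ENNReal.ofReal X0)
    (B : ℝ) (hB : B = PX * X0 + PY * Y0)
    (ψ : ℝ × ℝ → ℝ)
    (hψ : ψ = fun q => if q.1 ∈ Set.Ioc (0:ℝ) PX ∧ q.2 ∈ Set.Ioc (0:ℝ) PY
        then (L (q.1 / q.2)) ^ 2 * (q.2 / q.1) else 0) :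
    Feasible PX PY B L X0 Y0 ∧
    ∀ L' X0' Y0', Feasible PX PY B L' X0' Y0' → Ineff ψ L ≤ Ineff ψ L' := by
  have hp00 : 0 < PX / PY := div_pos hPX hPY
  have hwmeas : Measurable fun p : ℝ => min PY (PX / p) / p :=
    (measurable_const.min (measurable_const.div measurable_id)).div measurable_id
  refine ⟨⟨hLmeas, hLnn, hX0nn, hY0nn, le_of_eq hY0, le_of_eq hX0, le_of_eq hB.symm⟩, ?_⟩
  rintro L' X0' Y0' ⟨hL'meas, hL'nn, hX0'nn, hY0'nn, hY0', hX0', hbudget⟩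
  -- value of the weighted integral of L
  have hILint : (∫⁻ p in Set.Ioi (0:ℝ), ENNReal.ofReal (L p * (min PY (PX / p) / p)))
      = ENNReal.ofReal B := by
    rw [weight_integral PX PY hPX hPY L, hY0, hX0, ← ENNReal.ofReal_mul hPY.le,
      ← ENNReal.ofReal_mul hPX.le,
      ← ENNReal.ofReal_add (mul_nonneg hPY.le hY0nn) (mul_nonneg hPX.le hX0nn)]
    exact congrArg ENNReal.ofReal (by rw [hB]; ring)
  -- the inefficiency of L equals ofReal B
  have hIL : Ineff ψ L = ENNReal.ofReal B := by
    rw [ineff_eq PX PY hPX hPY L hLmeas L hLmeas ψ hψ]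
    have e : (∫⁻ p in Set.Ioi (0:ℝ),
        ENNReal.ofReal (L p ^ 2 * (min PY (PX / p) / p)) / ENNReal.ofReal (L p))
        = ∫⁻ p in Set.Ioi (0:ℝ), ENNReal.ofReal (L p * (min PY (PX / p) / p)) := by
      refine setLIntegral_congr_fun_ae measurableSet_Ioi
        (Filter.Eventually.of_forall fun p hp => ?_)
      have hp1 : (0:ℝ) < p := hp
      rcases eq_or_lt_of_le (hLnn p hp) with h0 | h0
      · rw [← h0]; simp
      · rw [← ENNReal.ofReal_div_of_pos h0]
        congr 1
        field_simp
    rw [e, hILint]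
  -- budget constraint for L'
  have hCB : (∫⁻ p in Set.Ioi (0:ℝ), ENNReal.ofReal (L' p * (min PY (PX / p) / p)))
      ≤ ENNReal.ofReal B := by
    rw [weight_integral PX PY hPX hPY L']
    calc ENNReal.ofReal PY * (∫⁻ p in Set.Ioc (0:ℝ) (PX / PY), ENNReal.ofReal (L' p / p))
          + ENNReal.ofReal PX * (∫⁻ p in Set.Ioi (PX / PY), ENNReal.ofReal (L' p / p ^ 2))
        ≤ ENNReal.ofReal PY * ENNReal.ofReal Y0' + ENNReal.ofReal PX * ENNReal.ofReal X0' :=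
          add_le_add (mul_le_mul_right hY0' _) (mul_le_mul_right hX0' _)
      _ = ENNReal.ofReal (PY * Y0' + PX * X0') := by
          rw [← ENNReal.ofReal_mul hPY.le, ← ENNReal.ofReal_mul hPX.le,
            ← ENNReal.ofReal_add (mul_nonneg hPY.le hY0'nn) (mul_nonneg hPX.le hX0'nn)]
      _ ≤ ENNReal.ofReal B := ENNReal.ofReal_le_ofReal (by linarith)
  have hIL' : Ineff ψ L' = ∫⁻ p in Set.Ioi (0:ℝ),
      ENNReal.ofReal (L p ^ 2 * (min PY (PX / p) / p)) / ENNReal.ofReal (L' p) :=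
    ineff_eq PX PY hPX hPY L hLmeas L' hL'meas ψ hψ
  by_cases htop : Ineff ψ L' = ⊤
  · rw [htop]; exact le_top
  set A : ℝ → ℝ≥0∞ :=
    fun p => ENNReal.ofReal (L p ^ 2 * (min PY (PX / p) / p)) / ENNReal.ofReal (L' p)
    with hAdef
  set G : ℝ → ℝ≥0∞ := fun p => ENNReal.ofReal (L' p * (min PY (PX / p) / p)) with hGdef
  have hAmeas : Measurable A :=
    (ENNReal.measurable_ofReal.comp ((hLmeas.pow_const 2).mul hwmeas)).div
      (ENNReal.measurable_ofReal.comp hL'meas)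
  have hGmeas : Measurable G := ENNReal.measurable_ofReal.comp (hL'meas.mul hwmeas)
  have hAne : (∫⁻ p in Set.Ioi (0:ℝ), A p) ≠ ⊤ := by rw [← hIL']; exact htop
  have hAfin : ∀ᵐ p ∂(volume.restrict (Set.Ioi (0:ℝ))), A p < ⊤ := ae_lt_top hAmeas hAne
  have hmem : ∀ᵐ p ∂(volume.restrict (Set.Ioi (0:ℝ))), p ∈ Set.Ioi (0:ℝ) :=
    ae_restrict_mem measurableSet_Ioi
  have hpt : ∀ᵐ p ∂(volume.restrict (Set.Ioi (0:ℝ))),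
      ENNReal.ofReal (L p * (min PY (PX / p) / p)) ≤ (A p * G p) ^ ((2:ℝ)⁻¹) := by
    filter_upwards [hAfin, hmem] with p hfin hp
    have hp1 : (0:ℝ) < p := hp
    have hw : 0 < min PY (PX / p) / p := div_pos (lt_min hPY (div_pos hPX hp1)) hp1
    rcases eq_or_lt_of_le (hL'nn p hp) with h0 | h0
    · have hL0 : L p = 0 := by
        by_contra hne
        have hLpos : 0 < L p ^ 2 * (min PY (PX / p) / p) := by
          have hLp : 0 < L p := lt_of_le_of_ne (hLnn p hp) (Ne.symm hne)
          positivity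
        have : A p = ⊤ := by
          rw [hAdef]
          simp only []
          rw [← h0, ENNReal.ofReal_zero, ENNReal.div_zero (ENNReal.ofReal_pos.2 hLpos).ne']
        exact absurd this hfin.ne
      rw [hL0, zero_mul, ENNReal.ofReal_zero]
      exact zero_le
    · have e : A p * G p = ENNReal.ofReal (L p * (min PY (PX / p) / p)) ^ (2:ℝ) := by
        rw [hAdef, hGdef]
        simp only []
        rw [ENNReal.ofReal_mul h0.le,
          ennreal_cancel2 _ _ _ (ENNReal.ofReal_pos.2 h0).ne' ENNReal.ofReal_ne_top,
          ← ENNReal.ofReal_mul (mul_nonneg (sq_nonneg _) hw.le),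
          show L p ^ 2 * (min PY (PX / p) / p) * (min PY (PX / p) / p)
            = (L p * (min PY (PX / p) / p)) ^ 2 by ring,
          ENNReal.ofReal_pow (mul_nonneg (hLnn p hp) hw.le), ← ENNReal.rpow_natCast]
        norm_num
      rw [e, ← ENNReal.rpow_mul]
      norm_num
  have hCS := cauchy (fun p => ENNReal.ofReal (L p * (min PY (PX / p) / p))) A G
    hAmeas.aemeasurable hGmeas.aemeasurable hpt
  rw [hILint] at hCS
  rw [hIL, hIL']
  set IA := ∫⁻ p in Set.Ioi (0:ℝ), A p with hIAdef
  have h1 : ENNReal.ofReal B ≤ IA ^ ((2:ℝ)⁻¹) * ENNReal.ofReal B ^ ((2:ℝ)⁻¹) :=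
    hCS.trans (mul_le_mul_right (ENNReal.rpow_le_rpow hCB (by norm_num)) _)
  by_cases hB0 : B ≤ 0
  · calc ENNReal.ofReal B = 0 := ENNReal.ofReal_eq_zero.2 hB0
      _ ≤ IA := zero_le
  · push_neg at hB0
    have hb0 : ENNReal.ofReal B ≠ 0 := (ENNReal.ofReal_pos.2 hB0).ne'
    have h2 : ENNReal.ofReal B * ENNReal.ofReal B ≤ IA * ENNReal.ofReal B := by
      calc ENNReal.ofReal B * ENNReal.ofReal B
          ≤ (IA ^ ((2:ℝ)⁻¹) * ENNReal.ofReal B ^ ((2:ℝ)⁻¹))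
              * (IA ^ ((2:ℝ)⁻¹) * ENNReal.ofReal B ^ ((2:ℝ)⁻¹)) := mul_le_mul' h1 h1
        _ = (IA ^ ((2:ℝ)⁻¹) * IA ^ ((2:ℝ)⁻¹))
              * (ENNReal.ofReal B ^ ((2:ℝ)⁻¹) * ENNReal.ofReal B ^ ((2:ℝ)⁻¹)) := by ring
        _ = IA * ENNReal.ofReal B := by
            rw [← ENNReal.rpow_add_of_nonneg _ _ (by norm_num) (by norm_num),
              ← ENNReal.rpow_add_of_nonneg _ _ (by norm_num) (by norm_num),
              show ((2:ℝ)⁻¹ + (2:ℝ)⁻¹) = 1 by norm_num, ENNReal.rpow_one, ENNReal.rpow_one]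
    exact (ENNReal.mul_le_mul_iff_left hb0 ENNReal.ofReal_ne_top).1 h2
end
end

section
/- Fix reference prices P_X, P_Y > 0, p₀ = P_X/P_Y, and budget B > 0. Let ψ₁, ψ₂ be measurable belief functions with optimal feasible triples (L₁, X₁, Y₁) and (L₂, X₂, Y₂) respectively, and let (L, X₀, Y₀) be an optimal feasible triple for the belief ψ₁ + ψ₂, where in each case the reserve and budget constraints hold with equality and the respective optimal values are finite. Then there exist constants a, b ≥ 0 such that L(p)² = a·L₁(p)² + b·L₂(p)² for almost every p > 0 at which φ_{ψ₁}(arccot p) + φ_{ψ₂}(arccot p) > 0. -/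
open MeasureTheory Set
open scoped ENNReal

noncomputable section

/-- Optimality for `ψ`, with the reserve and budget constraints holding with equality and
a finite optimal value. -/
def IsOptimalEq (PX PY B : ℝ) (ψ : ℝ × ℝ → ℝ) (L : ℝ → ℝ) (X0 Y0 : ℝ) : Prop :=
  IsOptimal PX PY B ψ L X0 Y0 ∧
  (∫⁻ p in Set.Ioc (0:ℝ) (PX / PY), ENNReal.ofReal (L p / p)) = ENNReal.ofReal Y0 ∧
  (∫⁻ p in Set.Ioi (PX / PY), ENNReal.ofReal (L p / p ^ 2)) = ENNReal.ofReal X0 ∧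
  PX * X0 + PY * Y0 = B ∧
  Ineff ψ L < ⊤

/-!
STATEMENT 10: If `(L₁, X₁, Y₁)` and `(L₂, X₂, Y₂)` are optimal for the beliefs `ψ₁` and
`ψ₂`, and `(L, X₀, Y₀)` is optimal for `ψ₁ + ψ₂`, then `L²` is a linear combination
`a·L₁² + b·L₂²` (a.e. where `φ_{ψ₁}(arccot p) + φ_{ψ₂}(arccot p) > 0`).
-/


lemma scale_lintegral (f : ℝ → ℝ≥0∞) (hf : Measurable f) {c : ℝ} (hc : 0 < c) :
    ∫⁻ x in Ioi (0:ℝ), f (c * x) = ENNReal.ofReal c⁻¹ * ∫⁻ y in Ioi (0:ℝ), f y := by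
  have hind : ∀ x : ℝ, (Ioi (0:ℝ)).indicator (fun y => f (c * y)) x
      = (Ioi (0:ℝ)).indicator f (c * x) := by
    intro x
    by_cases hx : x ∈ Ioi (0:ℝ)
    · rw [indicator_of_mem hx, indicator_of_mem (by exact mul_pos hc hx)]
    · rw [indicator_of_notMem hx, indicator_of_notMem]
      intro h
      exact hx (by simpa using (mul_pos_iff_of_pos_left hc).mp h)
  have hmeasind : Measurable ((Ioi (0:ℝ)).indicator f) :=
    hf.indicator measurableSet_Ioi
  calc ∫⁻ x in Ioi (0:ℝ), f (c * x)
      = ∫⁻ x, (Ioi (0:ℝ)).indicator (fun y => f (c * y)) x := by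
        rw [lintegral_indicator measurableSet_Ioi]
    _ = ∫⁻ x, (Ioi (0:ℝ)).indicator f (c * x) := by
        simp_rw [hind]
    _ = ∫⁻ y, (Ioi (0:ℝ)).indicator f y ∂(Measure.map (c * ·) volume) := by
        rw [lintegral_map hmeasind (measurable_const_mul c)]
    _ = ENNReal.ofReal c⁻¹ * ∫⁻ y in Ioi (0:ℝ), f y := by
        rw [Real.map_volume_mul_left (ne_of_gt hc), lintegral_smul_measure,
          abs_of_pos (inv_pos.2 hc), lintegral_indicator measurableSet_Ioi, smul_eq_mul]

lemma mul_div_mul_helper (Y a b : ℝ≥0∞) (hY : Y ≠ 0) (hY' : Y ≠ ⊤) :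
    Y * (a / (Y * b)) = a / b := by
  rw [← mul_div_assoc, ENNReal.mul_div_mul_left a b hY hY']

lemma ofReal_sqrt (x : ℝ) (hx : 0 ≤ x) :
    ENNReal.ofReal (Real.sqrt x) = ENNReal.ofReal x ^ (1/2 : ℝ) := by
  rw [Real.sqrt_eq_rpow, ENNReal.ofReal_rpow_of_nonneg hx (by norm_num)]

noncomputable def gfun (ψ : ℝ × ℝ → ℝ) (p : ℝ) : ℝ≥0∞ :=
  ∫⁻ y in Ioi (0:ℝ), ENNReal.ofReal (ψ (p * y, y))

lemma gfun_measurable (ψ : ℝ × ℝ → ℝ) (hψ : Measurable ψ) : Measurable (gfun ψ) := by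
  apply Measurable.lintegral_prod_right (f := fun p y => ENNReal.ofReal (ψ (p * y, y)))
  exact (hψ.comp ((measurable_fst.mul measurable_snd).prodMk measurable_snd)).ennreal_ofReal

lemma IneffEq (ψ : ℝ × ℝ → ℝ) (hψ : Measurable ψ) (L : ℝ → ℝ) (hL : Measurable L) :
    Ineff ψ L = ∫⁻ p in Ioi (0:ℝ), gfun ψ p / ENNReal.ofReal (L p) := by
  have hFmeas : Measurable (fun q : ℝ × ℝ =>
      ENNReal.ofReal (ψ q) / ENNReal.ofReal (q.2 * L (q.1 / q.2))) := by
    apply Measurable.div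
    · exact hψ.ennreal_ofReal
    · exact (measurable_snd.mul (hL.comp (measurable_fst.div measurable_snd))).ennreal_ofReal
  have hGmeas : Measurable (fun z : ℝ × ℝ =>
      ENNReal.ofReal (ψ (z.1 * z.2, z.1)) / ENNReal.ofReal (L z.2)) := by
    apply Measurable.div
    · exact (hψ.comp (((measurable_fst.mul measurable_snd)).prodMk measurable_fst)).ennreal_ofReal
    · exact (hL.comp measurable_snd).ennreal_ofReal
  rw [Ineff, orth, Measure.volume_eq_prod, ← Measure.prod_restrict,
    lintegral_prod_symm _ hFmeas.aemeasurable]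
  have step1 : ∀ y ∈ Ioi (0:ℝ),
      (∫⁻ x in Ioi (0:ℝ), ENNReal.ofReal (ψ (x, y)) / ENNReal.ofReal (y * L (x / y)))
      = ∫⁻ p in Ioi (0:ℝ), ENNReal.ofReal (ψ (y * p, y)) / ENNReal.ofReal (L p) := by
    intro y hy
    have hy0 : (0:ℝ) < y := hy
    set f : ℝ → ℝ≥0∞ := fun x => ENNReal.ofReal (ψ (x, y)) / ENNReal.ofReal (y * L (x / y)) with hf
    have hfm : Measurable f := by
      apply Measurable.div
      · exact (hψ.comp (measurable_id.prodMk measurable_const)).ennreal_ofReal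
      · exact (measurable_const.mul (hL.comp (measurable_id.div measurable_const))).ennreal_ofReal
    have hscale := scale_lintegral f hfm hy0
    -- hscale : ∫⁻ x in Ioi 0, f (y * x) = ofReal y⁻¹ * ∫⁻ x in Ioi 0, f x
    have hYne : ENNReal.ofReal y ≠ 0 := by simp [hy0, hy0.le, ENNReal.ofReal_eq_zero, not_le]
    have hYne' : ENNReal.ofReal y ≠ ⊤ := ENNReal.ofReal_ne_top
    have key : (∫⁻ x in Ioi (0:ℝ), f x)
        = ENNReal.ofReal y * ∫⁻ x in Ioi (0:ℝ), f (y * x) := by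
      rw [hscale, ← mul_assoc, ← ENNReal.ofReal_mul hy0.le, mul_inv_cancel₀ (ne_of_gt hy0),
        ENNReal.ofReal_one, one_mul]
    have hcomp : Measurable fun x => f (y * x) := hfm.comp (measurable_const_mul y)
    rw [key, ← lintegral_const_mul _ hcomp]
    apply setLIntegral_congr_fun measurableSet_Ioi
    intro p hp
    show ENNReal.ofReal y * f (y * p) = _
    rw [hf]
    simp only []
    rw [mul_div_cancel_left₀ _ (ne_of_gt hy0), ENNReal.ofReal_mul hy0.le,
      mul_div_mul_helper _ _ _ hYne hYne']
  calc (∫⁻ y in Ioi (0:ℝ), ∫⁻ x in Ioi (0:ℝ),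
        ENNReal.ofReal (ψ (x, y)) / ENNReal.ofReal (y * L (x / y)))
      = ∫⁻ y in Ioi (0:ℝ), ∫⁻ p in Ioi (0:ℝ),
          ENNReal.ofReal (ψ (y * p, y)) / ENNReal.ofReal (L p) := by
        exact setLIntegral_congr_fun measurableSet_Ioi step1
    _ = ∫⁻ p in Ioi (0:ℝ), ∫⁻ y in Ioi (0:ℝ),
          ENNReal.ofReal (ψ (y * p, y)) / ENNReal.ofReal (L p) := by
        exact lintegral_lintegral_swap hGmeas.aemeasurable
    _ = ∫⁻ p in Ioi (0:ℝ), gfun ψ p / ENNReal.ofReal (L p) := by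
        apply setLIntegral_congr_fun measurableSet_Ioi
        intro p hp
        beta_reduce
        rw [gfun]
        simp_rw [div_eq_mul_inv, mul_comm p]
        exact lintegral_mul_const _
          ((hψ.comp ((measurable_id.mul measurable_const).prodMk measurable_id)).ennreal_ofReal)

noncomputable def wfun (PX PY : ℝ) (p : ℝ) : ℝ :=
  if p ≤ PX / PY then PY / p else PX / p ^ 2

lemma wfun_measurable (PX PY : ℝ) : Measurable (wfun PX PY) := by
  apply Measurable.ite (measurableSet_le measurable_id measurable_const)
  · exact measurable_const.div measurable_id
  · exact measurable_const.div (measurable_id.pow_const 2)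

lemma wfun_pos {PX PY : ℝ} (hPX : 0 < PX) (hPY : 0 < PY) {p : ℝ} (hp : 0 < p) :
    0 < wfun PX PY p := by
  rw [wfun]
  split
  · exact div_pos hPY hp
  · exact div_pos hPX (by positivity)

lemma split_budget (PX PY : ℝ) (hPX : 0 < PX) (hPY : 0 < PY) (L : ℝ → ℝ) :
    ∫⁻ p in Ioi (0:ℝ), ENNReal.ofReal (wfun PX PY p * L p)
      = ENNReal.ofReal PY * (∫⁻ p in Ioc (0:ℝ) (PX / PY), ENNReal.ofReal (L p / p))
        + ENNReal.ofReal PX * (∫⁻ p in Ioi (PX / PY), ENNReal.ofReal (L p / p ^ 2)) := by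
  have hp0 : (0:ℝ) < PX / PY := div_pos hPX hPY
  have hsplit : Ioi (0:ℝ) = Ioc (0:ℝ) (PX / PY) ∪ Ioi (PX / PY) :=
    (Ioc_union_Ioi_eq_Ioi hp0.le).symm
  rw [hsplit, lintegral_union measurableSet_Ioi Ioc_disjoint_Ioi_same]
  congr 1
  · rw [← lintegral_const_mul' _ _ ENNReal.ofReal_ne_top]
    apply setLIntegral_congr_fun measurableSet_Ioc
    intro p hp
    beta_reduce
    rw [← ENNReal.ofReal_mul hPY.le, wfun, if_pos hp.2]
    congr 1
    field_simp
  · rw [← lintegral_const_mul' _ _ ENNReal.ofReal_ne_top]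
    apply setLIntegral_congr_fun measurableSet_Ioi
    intro p hp
    beta_reduce
    rw [← ENNReal.ofReal_mul hPX.le, wfun, if_neg (not_le.2 hp)]
    congr 1
    field_simp

lemma budget_eq (PX PY B : ℝ) (hPX : 0 < PX) (hPY : 0 < PY)
    (L : ℝ → ℝ) (X0 Y0 : ℝ) (hX0 : 0 ≤ X0) (hY0 : 0 ≤ Y0)
    (hY : (∫⁻ p in Ioc (0:ℝ) (PX / PY), ENNReal.ofReal (L p / p)) = ENNReal.ofReal Y0)
    (hX : (∫⁻ p in Ioi (PX / PY), ENNReal.ofReal (L p / p ^ 2)) = ENNReal.ofReal X0)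
    (hbudget : PX * X0 + PY * Y0 = B) :
    ∫⁻ p in Ioi (0:ℝ), ENNReal.ofReal (wfun PX PY p * L p) = ENNReal.ofReal B := by
  rw [split_budget PX PY hPX hPY L, hY, hX, ← ENNReal.ofReal_mul hPY.le,
    ← ENNReal.ofReal_mul hPX.le, ← ENNReal.ofReal_add (by positivity) (by positivity),
    ← hbudget]
  ring_nf

lemma feasible_of_budget_le (PX PY B : ℝ) (hPX : 0 < PX) (hPY : 0 < PY) (hB : 0 < B)
    (L : ℝ → ℝ) (hLmeas : Measurable L) (hLnn : ∀ p ∈ Ioi (0:ℝ), 0 ≤ L p)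
    (hbud : ∫⁻ p in Ioi (0:ℝ), ENNReal.ofReal (wfun PX PY p * L p) ≤ ENNReal.ofReal B) :
    ∃ X' Y' : ℝ, Feasible PX PY B L X' Y' := by
  set IY := ∫⁻ p in Ioc (0:ℝ) (PX / PY), ENNReal.ofReal (L p / p) with hIY
  set IX := ∫⁻ p in Ioi (PX / PY), ENNReal.ofReal (L p / p ^ 2) with hIX
  have hs : ENNReal.ofReal PY * IY + ENNReal.ofReal PX * IX ≤ ENNReal.ofReal B := by
    rw [← split_budget PX PY hPX hPY L]; exact hbud
  have hPYne : ENNReal.ofReal PY ≠ 0 := by simp [hPY, hPY.le, not_le]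
  have hPXne : ENNReal.ofReal PX ≠ 0 := by simp [hPX, hPX.le, not_le]
  have hIYlt : IY < ⊤ := by
    by_contra h
    rw [not_lt, top_le_iff] at h
    rw [h, ENNReal.mul_top hPYne] at hs
    simp at hs
  have hIXlt : IX < ⊤ := by
    by_contra h
    rw [not_lt, top_le_iff] at h
    rw [h, ENNReal.mul_top hPXne, add_top] at hs
    simp at hs
  refine ⟨IX.toReal, IY.toReal, hLmeas, hLnn, ENNReal.toReal_nonneg, ENNReal.toReal_nonneg,
    ?_, ?_, ?_⟩
  · rw [ENNReal.ofReal_toReal hIYlt.ne]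
  · rw [ENNReal.ofReal_toReal hIXlt.ne]
  · rw [← ENNReal.ofReal_le_ofReal_iff hB.le,
      ENNReal.ofReal_add (by positivity) (by positivity),
      ENNReal.ofReal_mul hPX.le, ENNReal.ofReal_mul hPY.le,
      ENNReal.ofReal_toReal hIXlt.ne, ENNReal.ofReal_toReal hIYlt.ne]
    calc ENNReal.ofReal PX * IX + ENNReal.ofReal PY * IY
        = ENNReal.ofReal PY * IY + ENNReal.ofReal PX * IX := by ring
      _ ≤ ENNReal.ofReal B := hs

lemma gfun_add (ψ₁ ψ₂ : ℝ × ℝ → ℝ) (hψ₁ : Measurable ψ₁)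
    (hψ₁nn : ∀ q, 0 ≤ ψ₁ q) (hψ₂nn : ∀ q, 0 ≤ ψ₂ q) (p : ℝ) :
    gfun (fun q => ψ₁ q + ψ₂ q) p = gfun ψ₁ p + gfun ψ₂ p := by
  have hf1 : Measurable fun y : ℝ => ENNReal.ofReal (ψ₁ (p * y, y)) :=
    (hψ₁.comp ((measurable_const.mul measurable_id).prodMk measurable_id)).ennreal_ofReal
  rw [gfun, gfun, gfun, ← lintegral_add_left hf1]
  congr 1
  ext y
  exact ENNReal.ofReal_add (hψ₁nn _) (hψ₂nn _)

lemma phiAng_eq (ψ : ℝ × ℝ → ℝ) (hψ : Measurable ψ) (p : ℝ) :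
    phiAng ψ (arccot p) = ENNReal.ofReal (Real.sqrt (1 + p ^ 2)) * gfun ψ p := by
  have hs : (0:ℝ) < Real.sqrt (1 + p ^ 2) := Real.sqrt_pos.2 (by positivity)
  have hcos : Real.cos (arccot p) = p / Real.sqrt (1 + p ^ 2) := by
    rw [arccot, Real.cos_pi_div_two_sub, Real.sin_arctan]
  have hsin : Real.sin (arccot p) = 1 / Real.sqrt (1 + p ^ 2) := by
    rw [arccot, Real.sin_pi_div_two_sub, Real.cos_arctan]
  have hf : Measurable fun y => ENNReal.ofReal (ψ (p * y, y)) :=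
    (hψ.comp ((measurable_const.mul measurable_id).prodMk measurable_id)).ennreal_ofReal
  have := scale_lintegral (fun y => ENNReal.ofReal (ψ (p * y, y))) hf
    (c := (Real.sqrt (1 + p ^ 2))⁻¹) (by positivity)
  rw [inv_inv] at this
  beta_reduce at this
  rw [phiAng, gfun, ← this]
  apply setLIntegral_congr_fun measurableSet_Ioi
  intro r hr
  rw [hcos, hsin]
  congr 2 <;> field_simp <;> ring

lemma keyC (PX PY B : ℝ) (hPX : 0 < PX) (hPY : 0 < PY) (hB : 0 < B)
    (ψ : ℝ × ℝ → ℝ) (hψ : Measurable ψ) (hψnn : ∀ q, 0 ≤ ψ q)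
    (L : ℝ → ℝ) (X0 Y0 : ℝ) (h : IsOptimalEq PX PY B ψ L X0 Y0) :
    ∃ c : ℝ, 0 ≤ c ∧
      (∀ᵐ p ∂(volume.restrict (Ioi (0:ℝ))),
        (gfun ψ p).toReal = c * (wfun PX PY p * L p ^ 2) ∧ gfun ψ p ≠ ⊤) ∧
      (c = 0 → ∀ᵐ p ∂(volume.restrict (Ioi (0:ℝ))), gfun ψ p = 0) := by
  obtain ⟨⟨hfeas, hopt⟩, hYeq, hXeq, hBeq, hfin⟩ := h
  obtain ⟨hLmeas, hLnn, hX0, hY0, -, -, -⟩ := hfeas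
  set μ : Measure ℝ := volume.restrict (Ioi (0:ℝ)) with hμ
  have hgmeas : Measurable (gfun ψ) := gfun_measurable ψ hψ
  set w : ℝ → ℝ := wfun PX PY with hw
  have hwmeas : Measurable w := wfun_measurable PX PY
  set u : ℝ → ℝ≥0∞ := fun p => gfun ψ p / ENNReal.ofReal (L p) with hu
  set v : ℝ → ℝ≥0∞ := fun p => ENNReal.ofReal (w p * L p) with hv
  have humeas : Measurable u := hgmeas.div hLmeas.ennreal_ofReal
  have hvmeas : Measurable v := (hwmeas.mul hLmeas).ennreal_ofReal
  set α : ℝ≥0∞ := Ineff ψ L with hα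
  have hαfin : α ≠ ⊤ := hfin.ne
  have hαint : ∫⁻ p, u p ∂μ = α := (IneffEq ψ hψ L hLmeas).symm
  have hvint : ∫⁻ p, v p ∂μ = ENNReal.ofReal B :=
    budget_eq PX PY B hPX hPY L X0 Y0 hX0 hY0 hYeq hXeq hBeq
  have hBne : ENNReal.ofReal B ≠ 0 := by simp [hB, hB.le, not_le]
  have haemem : ∀ᵐ p ∂μ, p ∈ Ioi (0:ℝ) := ae_restrict_mem measurableSet_Ioi
  have hufin : ∀ᵐ p ∂μ, u p ≠ ⊤ := by
    filter_upwards [ae_lt_top humeas (by rw [hαint]; exact hαfin)] with p hp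
    exact hp.ne
  have hgfin : ∀ᵐ p ∂μ, gfun ψ p ≠ ⊤ := by
    filter_upwards [hufin] with p hp
    intro hg
    exact hp (by rw [hu]; simp only []; rw [hg, ENNReal.top_div_of_ne_top ENNReal.ofReal_ne_top])
  have huv : ∀ᵐ p ∂μ, u p * v p = gfun ψ p * ENNReal.ofReal (w p) := by
    filter_upwards [hufin, haemem] with p hp hmem
    rcases eq_or_lt_of_le (hLnn p hmem) with hL0 | hLpos
    · have hL0' : ENNReal.ofReal (L p) = 0 := by rw [← hL0]; simp
      have hg0 : gfun ψ p = 0 := by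
        by_contra hne
        exact hp (by rw [hu]; simp only []; rw [hL0', ENNReal.div_zero hne])
      rw [hu, hv]
      simp only []
      simp [hg0]
    · have hWpos : 0 < w p := wfun_pos hPX hPY hmem
      have hlne : ENNReal.ofReal (L p) ≠ 0 := by simp [hLpos, hLpos.le, not_le]
      rw [hu, hv]
      simp only []
      rw [ENNReal.ofReal_mul hWpos.le]
      calc gfun ψ p / ENNReal.ofReal (L p) * (ENNReal.ofReal (w p) * ENNReal.ofReal (L p))
          = gfun ψ p / ENNReal.ofReal (L p) * ENNReal.ofReal (L p) * ENNReal.ofReal (w p) := by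
            ring
        _ = gfun ψ p * ENNReal.ofReal (w p) := by
            rw [ENNReal.div_mul_cancel hlne ENNReal.ofReal_ne_top]
  set K : ℝ≥0∞ := ∫⁻ p, (u p * v p) ^ (1/2:ℝ) ∂μ with hK
  have hKmeas : Measurable fun p => (u p * v p) ^ (1/2:ℝ) :=
    (humeas.mul hvmeas).pow_const _
  have hconj : Real.HolderConjugate 2 2 := ⟨by norm_num, by norm_num, by norm_num⟩
  have hHolder : K ≤ α ^ (1/2:ℝ) * (ENNReal.ofReal B) ^ (1/2:ℝ) := by
    have hmain := ENNReal.lintegral_mul_le_Lp_mul_Lq μ hconj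
      (f := fun p => u p ^ (1/2:ℝ)) (g := fun p => v p ^ (1/2:ℝ))
      (humeas.pow_const _).aemeasurable (hvmeas.pow_const _).aemeasurable
    have e1 : ∀ x : ℝ≥0∞, (x ^ (1/2:ℝ)) ^ (2:ℝ) = x := by
      intro x
      rw [← ENNReal.rpow_mul]
      norm_num
    simp only [Pi.mul_apply, e1] at hmain
    rw [hαint, hvint] at hmain
    calc K = ∫⁻ p, u p ^ (1/2:ℝ) * v p ^ (1/2:ℝ) ∂μ := by
          rw [hK]
          congr 1
          ext p
          rw [ENNReal.mul_rpow_of_nonneg _ _ (by norm_num)]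
      _ ≤ α ^ (1/2:ℝ) * (ENNReal.ofReal B) ^ (1/2:ℝ) := by
          convert hmain using 2 <;> norm_num
  by_cases hdeg : gfun ψ =ᵐ[μ] 0
  · refine ⟨0, le_refl 0, ?_, fun _ => hdeg⟩
    filter_upwards [hdeg] with p hp
    rw [hp]
    simp
  have hα0 : α ≠ 0 := by
    intro h0
    apply hdeg
    have hu0 : u =ᵐ[μ] 0 := (lintegral_eq_zero_iff humeas).mp (by rw [hαint, h0])
    filter_upwards [hu0] with p hp
    have := ENNReal.div_eq_zero_iff.mp hp
    rcases this with h | h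
    · exact h
    · exact absurd h ENNReal.ofReal_ne_top
  have hK0 : K ≠ 0 := by
    intro h0
    apply hdeg
    have huv0 : (fun p => (u p * v p) ^ (1/2:ℝ)) =ᵐ[μ] 0 :=
      (lintegral_eq_zero_iff hKmeas).mp h0
    filter_upwards [huv0, huv, haemem] with p hp hpuv hmem
    have hzero : u p * v p = 0 := by
      rcases (ENNReal.rpow_eq_zero_iff).mp hp with ⟨h1, _⟩ | ⟨_, h2⟩
      · exact h1
      · norm_num at h2
    rw [hpuv] at hzero
    rcases mul_eq_zero.mp hzero with h | h
    · exact h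
    · have := wfun_pos hPX hPY hmem
      rw [ENNReal.ofReal_eq_zero] at h
      linarith
  have hKtop : K ≠ ⊤ := by
    intro h0
    rw [h0] at hHolder
    have h1 : α ^ (1/2:ℝ) * (ENNReal.ofReal B) ^ (1/2:ℝ) ≠ ⊤ :=
      ENNReal.mul_ne_top (ENNReal.rpow_ne_top_of_nonneg (by norm_num) hαfin)
        (ENNReal.rpow_ne_top_of_nonneg (by norm_num) ENNReal.ofReal_ne_top)
    exact h1 (top_le_iff.mp hHolder)
  have hK'pos : 0 < K.toReal := ENNReal.toReal_pos hK0 hKtop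
  -- the competitor
  set Ls : ℝ → ℝ := fun p => Real.sqrt ((gfun ψ p).toReal / w p) * (B / K.toReal) with hLs
  have hLsmeas : Measurable Ls :=
    (hgmeas.ennreal_toReal.div hwmeas).sqrt.mul_const _
  have hLsnn : ∀ p ∈ Ioi (0:ℝ), 0 ≤ Ls p := by
    intro p _
    have : (0:ℝ) ≤ B / K.toReal := by positivity
    exact mul_nonneg (Real.sqrt_nonneg _) this
  have hbudLs : ∫⁻ p in Ioi (0:ℝ), ENNReal.ofReal (w p * Ls p) = ENNReal.ofReal B := by
    have hptwise : ∀ᵐ p ∂μ, ENNReal.ofReal (w p * Ls p)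
        = ENNReal.ofReal (B / K.toReal) * (u p * v p) ^ (1/2:ℝ) := by
      filter_upwards [hgfin, huv, haemem] with p hgf hpuv hmem
      have hWpos := wfun_pos hPX hPY hmem
      set gT := (gfun ψ p).toReal with hgT
      have hgTnn : 0 ≤ gT := ENNReal.toReal_nonneg
      have h1 : w p * Real.sqrt (gT / w p) = Real.sqrt (w p * gT) := by
        rw [show w p * gT = w p ^ 2 * (gT / w p) by field_simp,
          Real.sqrt_mul (sq_nonneg _), Real.sqrt_sq hWpos.le]
      have h2 : w p * Ls p = B / K.toReal * Real.sqrt (w p * gT) := by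
        rw [hLs]
        simp only []
        rw [← h1]
        ring
      rw [h2, ENNReal.ofReal_mul (by positivity), ofReal_sqrt _ (by positivity)]
      congr 1
      rw [hpuv, ENNReal.ofReal_mul hWpos.le, ENNReal.ofReal_toReal hgf, mul_comm]
    calc ∫⁻ p in Ioi (0:ℝ), ENNReal.ofReal (w p * Ls p)
        = ∫⁻ p, ENNReal.ofReal (B / K.toReal) * (u p * v p) ^ (1/2:ℝ) ∂μ :=
          lintegral_congr_ae hptwise
      _ = ENNReal.ofReal (B / K.toReal) * K := by
          rw [lintegral_const_mul _ hKmeas]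
      _ = ENNReal.ofReal B := by
          rw [ENNReal.ofReal_div_of_pos hK'pos, ENNReal.ofReal_toReal hKtop,
            ENNReal.div_mul_cancel hK0 hKtop]
  obtain ⟨Xs, Ys, hfeasLs⟩ := feasible_of_budget_le PX PY B hPX hPY hB Ls hLsmeas hLsnn
    (le_of_eq hbudLs)
  have hIneffLs : Ineff ψ Ls = K * (K / ENNReal.ofReal B) := by
    rw [IneffEq ψ hψ Ls hLsmeas]
    have hpt : ∀ᵐ p ∂μ, gfun ψ p / ENNReal.ofReal (Ls p)
        = (u p * v p) ^ (1/2:ℝ) * (K / ENNReal.ofReal B) := by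
      filter_upwards [hgfin, huv, haemem] with p hgf hpuv hmem
      have hWpos := wfun_pos hPX hPY hmem
      by_cases hg0 : gfun ψ p = 0
      · rw [hg0, ENNReal.zero_div, hpuv, hg0, zero_mul,
          ENNReal.zero_rpow_of_pos (by norm_num), zero_mul]
      · set gT := (gfun ψ p).toReal with hgT
        have hgTpos : 0 < gT := ENNReal.toReal_pos hg0 hgf
        have hLspos : 0 < Ls p := by
          rw [hLs]
          simp only []
          have : (0:ℝ) < gT / w p := div_pos hgTpos hWpos
          positivity
        have hsq : Real.sqrt (gT * w p) * Real.sqrt (gT / w p) = gT := by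
          rw [← Real.sqrt_mul (by positivity)]
          rw [show gT * w p * (gT / w p) = gT ^ 2 by field_simp; ring; exact mul_inv_cancel₀ hWpos.ne']
          exact Real.sqrt_sq hgTpos.le
        have hreal : gT / Ls p = Real.sqrt (gT * w p) * (K.toReal / B) := by
          rw [div_eq_iff (ne_of_gt hLspos), hLs]
          simp only []
          symm
          calc Real.sqrt (gT * w p) * (K.toReal / B)
                * (Real.sqrt (gT / w p) * (B / K.toReal))
              = Real.sqrt (gT * w p) * Real.sqrt (gT / w p)
                * ((K.toReal / B) * (B / K.toReal)) := by ring
            _ = gT := by rw [hsq]; field_simp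
        calc gfun ψ p / ENNReal.ofReal (Ls p)
            = ENNReal.ofReal (gT / Ls p) := by
              rw [ENNReal.ofReal_div_of_pos hLspos, ENNReal.ofReal_toReal hgf]
          _ = (u p * v p) ^ (1/2:ℝ) * (K / ENNReal.ofReal B) := by
              rw [hreal, ENNReal.ofReal_mul (Real.sqrt_nonneg _),
                ofReal_sqrt _ (by positivity), ENNReal.ofReal_div_of_pos hB,
                ENNReal.ofReal_toReal hKtop]
              congr 2
              rw [hpuv, ENNReal.ofReal_mul hgTpos.le, ENNReal.ofReal_toReal hgf]
    rw [lintegral_congr_ae hpt, lintegral_mul_const _ hKmeas]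
  have hαle : α ≤ K * (K / ENNReal.ofReal B) := by
    rw [← hIneffLs]
    exact hopt Ls Xs Ys hfeasLs
  have hrpow_half : ∀ x : ℝ≥0∞, x ≠ 0 → x ≠ ⊤ → x ^ (1/2:ℝ) * x ^ (1/2:ℝ) = x := by
    intro x hx hx'
    rw [← ENNReal.rpow_add _ _ hx hx']
    norm_num
  have hKK : K * K = α * ENNReal.ofReal B := by
    apply le_antisymm
    · calc K * K ≤ (α ^ (1/2:ℝ) * ENNReal.ofReal B ^ (1/2:ℝ))
            * (α ^ (1/2:ℝ) * ENNReal.ofReal B ^ (1/2:ℝ)) := mul_le_mul' hHolder hHolder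
        _ = (α ^ (1/2:ℝ) * α ^ (1/2:ℝ)) * (ENNReal.ofReal B ^ (1/2:ℝ)
            * ENNReal.ofReal B ^ (1/2:ℝ)) := by ring
        _ = α * ENNReal.ofReal B := by
            rw [hrpow_half α hα0 hαfin, hrpow_half _ hBne ENNReal.ofReal_ne_top]
    · calc α * ENNReal.ofReal B ≤ K * (K / ENNReal.ofReal B) * ENNReal.ofReal B :=
            mul_le_mul_left hαle _
        _ = K * K := by
            rw [mul_assoc, ENNReal.div_mul_cancel hBne ENNReal.ofReal_ne_top]
  -- Step 3 : equality in Cauchy-Schwarz forces proportionality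
  set A : ℝ := α.toReal with hA
  have hαofA : ENNReal.ofReal A = α := ENNReal.ofReal_toReal hαfin
  have hApos : 0 < A := ENNReal.toReal_pos hα0 hαfin
  set U : ℝ → ℝ := fun p => (u p).toReal with hU
  set V : ℝ → ℝ := fun p => (v p).toReal with hV
  have hUmeas : Measurable U := humeas.ennreal_toReal
  have hVmeas : Measurable V := hvmeas.ennreal_toReal
  have hUnn : ∀ p, 0 ≤ U p := fun p => ENNReal.toReal_nonneg
  have hVnn : ∀ p, 0 ≤ V p := fun p => ENNReal.toReal_nonneg
  set hfn : ℝ → ℝ := fun p => Real.sqrt (B * U p) - Real.sqrt (A * V p) with hhfn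
  have hfnmeas : Measurable hfn := ((measurable_const.mul hUmeas).sqrt.sub
    (measurable_const.mul hVmeas).sqrt)
  have hident : ∀ p, hfn p ^ 2 + 2 * Real.sqrt (A * B) * Real.sqrt (U p * V p)
      = B * U p + A * V p := by
    intro p
    have h1 : Real.sqrt (B * U p) ^ 2 = B * U p := Real.sq_sqrt (by positivity)
    have h2 : Real.sqrt (A * V p) ^ 2 = A * V p := Real.sq_sqrt (by positivity)
    have h3 : Real.sqrt (B * U p) * Real.sqrt (A * V p)
        = Real.sqrt (A * B) * Real.sqrt (U p * V p) := by
      rw [← Real.sqrt_mul (by positivity), ← Real.sqrt_mul (by positivity)]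
      ring_nf
    rw [hhfn]
    simp only []
    nlinarith [h1, h2, h3]
  have hint1 : ∫⁻ p, ENNReal.ofReal (B * U p) ∂μ = ENNReal.ofReal B * α := by
    have hcg : ∀ᵐ p ∂μ, ENNReal.ofReal (B * U p) = ENNReal.ofReal B * u p := by
      filter_upwards [hufin] with p hp
      rw [hU]
      simp only []
      rw [ENNReal.ofReal_mul hB.le, ENNReal.ofReal_toReal hp]
    rw [lintegral_congr_ae hcg, lintegral_const_mul _ humeas, hαint]
  have hint2 : ∫⁻ p, ENNReal.ofReal (A * V p) ∂μ = α * ENNReal.ofReal B := by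
    have hcg : ∀ᵐ p ∂μ, ENNReal.ofReal (A * V p) = α * v p := by
      filter_upwards with p
      rw [hV]
      simp only []
      rw [ENNReal.ofReal_mul hApos.le, ENNReal.ofReal_toReal ENNReal.ofReal_ne_top, hαofA]
    rw [lintegral_congr_ae hcg, lintegral_const_mul _ hvmeas, hvint]
  have hintK : ∫⁻ p, ENNReal.ofReal (Real.sqrt (U p * V p)) ∂μ = K := by
    have hcg : ∀ᵐ p ∂μ, ENNReal.ofReal (Real.sqrt (U p * V p)) = (u p * v p) ^ (1/2:ℝ) := by
      filter_upwards [hufin] with p hp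
      rw [ofReal_sqrt _ (by positivity), hU, hV]
      simp only []
      rw [ENNReal.ofReal_mul (ENNReal.toReal_nonneg), ENNReal.ofReal_toReal hp,
        ENNReal.ofReal_toReal ENNReal.ofReal_ne_top]
    rw [lintegral_congr_ae hcg]
  have hsqrtAB : Real.sqrt (A * B) = K.toReal := by
    have h1 : K.toReal * K.toReal = A * B := by
      have := congrArg ENNReal.toReal hKK
      rwa [ENNReal.toReal_mul, ENNReal.toReal_mul, ENNReal.toReal_ofReal hB.le] at this
    rw [← h1, Real.sqrt_mul_self ENNReal.toReal_nonneg]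
  have hzero : ∫⁻ p, ENNReal.ofReal (hfn p ^ 2) ∂μ = 0 := by
    have hmeas2 : Measurable fun p => ENNReal.ofReal (hfn p ^ 2) :=
      (hfnmeas.pow_const 2).ennreal_ofReal
    have hsum : (∫⁻ p, ENNReal.ofReal (hfn p ^ 2) ∂μ)
        + ∫⁻ p, ENNReal.ofReal (2 * Real.sqrt (A * B) * Real.sqrt (U p * V p)) ∂μ
        = ∫⁻ p, ENNReal.ofReal (B * U p + A * V p) ∂μ := by
      rw [← lintegral_add_left hmeas2]
      congr 1
      ext p
      rw [← ENNReal.ofReal_add (by positivity) (by positivity), hident p]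
    have hmid : ∫⁻ p, ENNReal.ofReal (2 * Real.sqrt (A * B) * Real.sqrt (U p * V p)) ∂μ
        = 2 * (α * ENNReal.ofReal B) := by
      have : ∀ p, ENNReal.ofReal (2 * Real.sqrt (A * B) * Real.sqrt (U p * V p))
          = ENNReal.ofReal (2 * Real.sqrt (A * B)) * ENNReal.ofReal (Real.sqrt (U p * V p)) :=
        fun p => ENNReal.ofReal_mul (by positivity)
      simp_rw [this]
      rw [lintegral_const_mul _ (show Measurable fun p => ENNReal.ofReal (Real.sqrt (U p * V p)) from (hUmeas.mul hVmeas).sqrt.ennreal_ofReal), hintK,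
        hsqrtAB, ENNReal.ofReal_mul (by norm_num), ENNReal.ofReal_toReal hKtop,
        ENNReal.ofReal_ofNat, mul_assoc, hKK]
    have hrhs : ∫⁻ p, ENNReal.ofReal (B * U p + A * V p) ∂μ = 2 * (α * ENNReal.ofReal B) := by
      have hsplit : ∀ p, ENNReal.ofReal (B * U p + A * V p)
          = ENNReal.ofReal (B * U p) + ENNReal.ofReal (A * V p) :=
        fun p => ENNReal.ofReal_add (by positivity) (by positivity)
      simp_rw [hsplit]
      rw [lintegral_add_left (show Measurable fun p => ENNReal.ofReal (B * U p) from (measurable_const.mul hUmeas).ennreal_ofReal), hint1, hint2,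
        two_mul]
      ring
    rw [hmid, hrhs] at hsum
    have hfin2 : (2 : ℝ≥0∞) * (α * ENNReal.ofReal B) ≠ ⊤ :=
      ENNReal.mul_ne_top (by norm_num) (ENNReal.mul_ne_top hαfin ENNReal.ofReal_ne_top)
    exact (ENNReal.add_left_inj hfin2).mp (by rw [hsum, zero_add])
  have haeh : ∀ᵐ p ∂μ, B * U p = A * V p := by
    have h0 := (lintegral_eq_zero_iff ((hfnmeas.pow_const 2).ennreal_ofReal)).mp hzero
    filter_upwards [h0] with p hp
    have h1 : hfn p ^ 2 ≤ 0 := by simpa [ENNReal.ofReal_eq_zero] using hp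
    have h2 : hfn p = 0 := by nlinarith [sq_nonneg (hfn p)]
    have h3 : Real.sqrt (B * U p) = Real.sqrt (A * V p) := by
      rw [hhfn] at h2
      simp only [] at h2
      linarith [h2]
    calc B * U p = Real.sqrt (B * U p) ^ 2 := (Real.sq_sqrt (by positivity)).symm
      _ = Real.sqrt (A * V p) ^ 2 := by rw [h3]
      _ = A * V p := Real.sq_sqrt (by positivity)
  -- Step 4: conclusion
  refine ⟨A / B, by positivity, ?_, ?_⟩
  · filter_upwards [haeh, hufin, hgfin, haemem] with p heq hu' hg' hmem
    refine ⟨?_, hg'⟩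
    have hWpos : 0 < w p := wfun_pos hPX hPY hmem
    have hVval : V p = w p * L p := by
      rw [hV, hv]
      simp only []
      exact ENNReal.toReal_ofReal (mul_nonneg hWpos.le (hLnn p hmem))
    rcases eq_or_lt_of_le (hLnn p hmem) with hL0 | hLpos
    · have hg0 : gfun ψ p = 0 := by
        by_contra hne
        apply hu'
        rw [hu]
        simp only []
        rw [← hL0, ENNReal.ofReal_zero, ENNReal.div_zero hne]
      rw [hg0, ← hL0]
      simp
    · have hUval : U p = (gfun ψ p).toReal / L p := by
        rw [hU, hu]
        simp only []
        rw [ENNReal.toReal_div, ENNReal.toReal_ofReal hLpos.le]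
      rw [hUval, hVval] at heq
      rw [eq_comm]
      field_simp at heq ⊢
      nlinarith [heq]
  · intro hc
    exact absurd hc (ne_of_gt (by positivity))

theorem stmt_10 (PX PY B : ℝ) (hPX : 0 < PX) (hPY : 0 < PY) (hB : 0 < B)
    (ψ₁ ψ₂ : ℝ × ℝ → ℝ)
    (hψ₁meas : Measurable ψ₁) (hψ₁nn : ∀ q, 0 ≤ ψ₁ q)
    (hψ₂meas : Measurable ψ₂) (hψ₂nn : ∀ q, 0 ≤ ψ₂ q)
    (L₁ L₂ L : ℝ → ℝ) (X₁ Y₁ X₂ Y₂ X0 Y0 : ℝ)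
    (hopt₁ : IsOptimalEq PX PY B ψ₁ L₁ X₁ Y₁)
    (hopt₂ : IsOptimalEq PX PY B ψ₂ L₂ X₂ Y₂)
    (hopt : IsOptimalEq PX PY B (fun q => ψ₁ q + ψ₂ q) L X0 Y0) :
    ∃ a b : ℝ, 0 ≤ a ∧ 0 ≤ b ∧
      ∀ᵐ p ∂(volume : Measure ℝ),
        (p ∈ Set.Ioi (0:ℝ) ∧ phiAng ψ₁ (arccot p) + phiAng ψ₂ (arccot p) ≠ 0) →
          L p ^ 2 = a * L₁ p ^ 2 + b * L₂ p ^ 2 := by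
  obtain ⟨c₁, hc₁, hae₁, hdeg₁⟩ := keyC PX PY B hPX hPY hB ψ₁ hψ₁meas hψ₁nn L₁ X₁ Y₁ hopt₁
  obtain ⟨c₂, hc₂, hae₂, hdeg₂⟩ := keyC PX PY B hPX hPY hB ψ₂ hψ₂meas hψ₂nn L₂ X₂ Y₂ hopt₂
  have hψmeas : Measurable (fun q => ψ₁ q + ψ₂ q) := hψ₁meas.add hψ₂meas
  have hψnn : ∀ q, 0 ≤ ψ₁ q + ψ₂ q := fun q => add_nonneg (hψ₁nn q) (hψ₂nn q)
  obtain ⟨c, hc, hae, hdegc⟩ := keyC PX PY B hPX hPY hB _ hψmeas hψnn L X0 Y0 hopt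
  by_cases hc0 : c = 0
  · refine ⟨0, 0, le_refl 0, le_refl 0, ?_⟩
    have hg0 := (ae_restrict_iff' measurableSet_Ioi).mp (hdegc hc0)
    filter_upwards [hg0] with p hp
    rintro ⟨hmem, hphi⟩
    exfalso
    apply hphi
    rw [phiAng_eq ψ₁ hψ₁meas p, phiAng_eq ψ₂ hψ₂meas p, ← mul_add,
      ← gfun_add ψ₁ ψ₂ hψ₁meas hψ₁nn hψ₂nn p, hp hmem, mul_zero]
  · have hcpos : 0 < c := lt_of_le_of_ne hc (Ne.symm hc0)
    refine ⟨c₁ / c, c₂ / c, by positivity, by positivity, ?_⟩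
    filter_upwards [(ae_restrict_iff' measurableSet_Ioi).mp hae₁,
      (ae_restrict_iff' measurableSet_Ioi).mp hae₂,
      (ae_restrict_iff' measurableSet_Ioi).mp hae] with p h1 h2 h3
    rintro ⟨hmem, -⟩
    obtain ⟨he₁, hf₁⟩ := h1 hmem
    obtain ⟨he₂, hf₂⟩ := h2 hmem
    obtain ⟨he, hf⟩ := h3 hmem
    have hWpos : 0 < wfun PX PY p := wfun_pos hPX hPY hmem
    have hadd : (gfun (fun q => ψ₁ q + ψ₂ q) p).toReal
        = (gfun ψ₁ p).toReal + (gfun ψ₂ p).toReal := by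
      rw [gfun_add ψ₁ ψ₂ hψ₁meas hψ₁nn hψ₂nn p]
      exact ENNReal.toReal_add hf₁ hf₂
    have hkey : c * (wfun PX PY p * L p ^ 2)
        = c₁ * (wfun PX PY p * L₁ p ^ 2) + c₂ * (wfun PX PY p * L₂ p ^ 2) := by
      rw [← he, ← he₁, ← he₂, hadd]
    have hwne : wfun PX PY p ≠ 0 := ne_of_gt hWpos
    field_simp
    nlinarith [hkey]
end
end

section
/- Fix reference prices P_X, P_Y > 0, p₀ = P_X/P_Y, and budget B > 0. Let ψ₁, ψ₂ be measurable belief functions whose angular marginals φ_{ψ₁} and φ_{ψ₂} have disjoint supports (up to null sets) in (0, π/2). Let (L₁, X₁, Y₁), (L₂, X₂, Y₂), and (L, X₀, Y₀) be optimal feasible triples for ψ₁, ψ₂, and ψ₁ + ψ₂ respectively, with finite optimal values and constraints holding with equality. Then there exist constants a, b ≥ 0 such that L(p) = a·L₁(p) + b·L₂(p) for almost every p > 0 at which φ_{ψ₁}(arccot p) + φ_{ψ₂}(arccot p) > 0. -/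
open MeasureTheory Set
open scoped ENNReal

noncomputable section

/-! ### Auxiliary lemmas -/

/-- a.e. equality from equal finite integrals and pointwise domination -/
lemma stmt11_ae_eq_of_lintegral_le {μ : Measure ℝ} {f g : ℝ → ℝ≥0∞} (hf : Measurable f)
    (hg : Measurable g) (hle : g ≤ᵐ[μ] f) (hfin : ∫⁻ x, g x ∂μ ≠ ⊤)
    (heq : ∫⁻ x, f x ∂μ = ∫⁻ x, g x ∂μ) : f =ᵐ[μ] g := by
  have hsub : ∫⁻ x, (f - g) x ∂μ = ∫⁻ x, f x ∂μ - ∫⁻ x, g x ∂μ :=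
    lintegral_sub hg hfin hle
  rw [heq, tsub_self] at hsub
  have h0 : (f - g) =ᵐ[μ] 0 := (lintegral_eq_zero_iff (hf.sub hg)).1 hsub
  filter_upwards [h0, hle] with x hx hx'
  have : f x - g x = 0 := hx
  exact le_antisymm (tsub_eq_zero_iff_le.mp this) hx'

/-- 1D change of variables for lintegrals -/
lemma stmt11_lintegral_image_1d {s : Set ℝ} {f f' : ℝ → ℝ} (hs : MeasurableSet s)
    (hf' : ∀ x ∈ s, HasDerivWithinAt f (f' x) s x) (hf : InjOn f s) (g : ℝ → ℝ≥0∞) :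
    ∫⁻ x in f '' s, g x = ∫⁻ x in s, ENNReal.ofReal |f' x| * g (f x) := by
  simpa only [ContinuousLinearMap.det_toSpanSingleton] using
    lintegral_image_eq_lintegral_abs_det_fderiv_mul volume hs
      (fun x hx => (hf' x hx).hasFDerivWithinAt) hf g

/-- the 1D weight obtained from `ψ` by integrating along rays of fixed price ratio -/
def wgt (ψ : ℝ × ℝ → ℝ) (p : ℝ) : ℝ≥0∞ := ∫⁻ t in Ioi (0:ℝ), ENNReal.ofReal (ψ (p * t, t))

lemma wgt_meas {ψ : ℝ × ℝ → ℝ} (hψ : Measurable ψ) : Measurable (wgt ψ) := by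
  have hrw : wgt ψ
      = fun p => ∫⁻ t, (Ioi (0:ℝ)).indicator (fun t => ENNReal.ofReal (ψ (p * t, t))) t := by
    funext p
    rw [wgt, ← lintegral_indicator measurableSet_Ioi]
  rw [hrw]
  apply Measurable.lintegral_prod_right' (f := fun q : ℝ × ℝ =>
    (Ioi (0:ℝ)).indicator (fun t => ENNReal.ofReal (ψ (q.1 * t, t))) q.2)
  have hm : Measurable fun q : ℝ × ℝ => ENNReal.ofReal (ψ (q.1 * q.2, q.2)) :=
    (ENNReal.measurable_ofReal.comp hψ).comp
      ((measurable_fst.mul measurable_snd).prodMk measurable_snd)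
  have : (fun q : ℝ × ℝ =>
      (Ioi (0:ℝ)).indicator (fun t => ENNReal.ofReal (ψ (q.1 * t, t))) q.2)
      = fun q : ℝ × ℝ => (Set.univ ×ˢ Ioi (0:ℝ)).indicator
        (fun q : ℝ × ℝ => ENNReal.ofReal (ψ (q.1 * q.2, q.2))) q := by
    ext q
    by_cases h : q.2 ∈ Ioi (0:ℝ) <;>
      simp [Set.indicator_apply, h, Set.mem_prod]
  rw [this]
  exact hm.indicator (MeasurableSet.univ.prod measurableSet_Ioi)

/-- reduction of the inefficiency functional to one dimension -/
lemma ineff_eq_s11 {ψ : ℝ × ℝ → ℝ} {L : ℝ → ℝ} (hψ : Measurable ψ) (hL : Measurable L) :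
    Ineff ψ L = ∫⁻ p in Ioi (0:ℝ), wgt ψ p / ENNReal.ofReal (L p) := by
  have hF : Measurable fun q : ℝ × ℝ =>
      ENNReal.ofReal (ψ q) / ENNReal.ofReal (q.2 * L (q.1 / q.2)) := by
    apply Measurable.div
    · exact ENNReal.measurable_ofReal.comp hψ
    · exact ENNReal.measurable_ofReal.comp
        (measurable_snd.mul (hL.comp (measurable_fst.div measurable_snd)))
  have hG : Measurable fun q : ℝ × ℝ =>
      ENNReal.ofReal (ψ (q.1 * q.2, q.1)) / ENNReal.ofReal (L q.2) :=
    Measurable.div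
      (ENNReal.measurable_ofReal.comp
        (hψ.comp ((measurable_fst.mul measurable_snd).prodMk measurable_fst)))
      (ENNReal.measurable_ofReal.comp (hL.comp measurable_snd))
  rw [Ineff, orth]
  have h1 : (∫⁻ q in (Ioi (0:ℝ)) ×ˢ (Ioi (0:ℝ)),
        ENNReal.ofReal (ψ q) / ENNReal.ofReal (q.2 * L (q.1 / q.2)))
      = ∫⁻ y in Ioi (0:ℝ), ∫⁻ x in Ioi (0:ℝ),
        ENNReal.ofReal (ψ (x, y)) / ENNReal.ofReal (y * L (x / y)) := by
    rw [Measure.volume_eq_prod, ← Measure.prod_restrict]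
    exact lintegral_prod_symm _ hF.aemeasurable
  rw [h1]
  have h2 : (∫⁻ y in Ioi (0:ℝ), ∫⁻ x in Ioi (0:ℝ),
        ENNReal.ofReal (ψ (x, y)) / ENNReal.ofReal (y * L (x / y)))
      = ∫⁻ y in Ioi (0:ℝ), ∫⁻ p in Ioi (0:ℝ),
        ENNReal.ofReal (ψ (y * p, y)) / ENNReal.ofReal (L p) := by
    apply setLIntegral_congr_fun measurableSet_Ioi
    intro y hy
    beta_reduce
    have hy0 : (0:ℝ) < y := hy
    have himg := Set.image_const_mul_Ioi_zero hy0
    have hder : ∀ x ∈ Ioi (0:ℝ), HasDerivWithinAt (fun p : ℝ => y * p) y (Ioi 0) x := by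
      intro x _
      have : HasDerivAt (fun p : ℝ => y * p) y x := by
        simpa using (hasDerivAt_id x).const_mul y
      exact this.hasDerivWithinAt
    have hinj : InjOn (fun p : ℝ => y * p) (Ioi 0) :=
      fun a _ b _ h => mul_left_cancel₀ (ne_of_gt hy0) h
    have himg2 : (∫⁻ x in Ioi (0:ℝ),
          ENNReal.ofReal (ψ (x, y)) / ENNReal.ofReal (y * L (x / y)))
        = ∫⁻ x in (fun p : ℝ => y * p) '' Ioi (0:ℝ),
          ENNReal.ofReal (ψ (x, y)) / ENNReal.ofReal (y * L (x / y)) := by rw [himg]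
    rw [himg2, stmt11_lintegral_image_1d measurableSet_Ioi hder hinj]
    apply setLIntegral_congr_fun measurableSet_Ioi
    intro p hp
    beta_reduce
    have : y * p / y = p := by field_simp
    rw [this, abs_of_pos hy0, ENNReal.ofReal_mul hy0.le, ← mul_div_assoc,
      ENNReal.mul_div_mul_left _ _ (by simpa using hy0) ENNReal.ofReal_ne_top]
  rw [h2]
  have h3 : (∫⁻ y in Ioi (0:ℝ), ∫⁻ p in Ioi (0:ℝ),
        ENNReal.ofReal (ψ (y * p, y)) / ENNReal.ofReal (L p))
      = ∫⁻ p in Ioi (0:ℝ), ∫⁻ y in Ioi (0:ℝ),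
        ENNReal.ofReal (ψ (y * p, y)) / ENNReal.ofReal (L p) := by
    apply lintegral_lintegral_swap
    exact hG.aemeasurable
  rw [h3]
  apply setLIntegral_congr_fun measurableSet_Ioi
  intro p hp
  beta_reduce
  have hmeas : AEMeasurable (fun y => ENNReal.ofReal (ψ (p * y, y)))
      (volume.restrict (Ioi 0)) :=
    (ENNReal.measurable_ofReal.comp
      (hψ.comp ((measurable_const.mul measurable_id).prodMk measurable_id))).aemeasurable
  calc ∫⁻ y in Ioi (0:ℝ), ENNReal.ofReal (ψ (y * p, y)) / ENNReal.ofReal (L p)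
      = ∫⁻ y in Ioi (0:ℝ), (ENNReal.ofReal (L p))⁻¹ * ENNReal.ofReal (ψ (p * y, y)) := by
        apply setLIntegral_congr_fun measurableSet_Ioi
        intro y _
        beta_reduce
        rw [div_eq_mul_inv, mul_comm, mul_comm y p]
    _ = (ENNReal.ofReal (L p))⁻¹ * ∫⁻ y in Ioi (0:ℝ), ENNReal.ofReal (ψ (p * y, y)) :=
        lintegral_const_mul'' _ hmeas
    _ = wgt ψ p / ENNReal.ofReal (L p) := by rw [mul_comm, ← div_eq_mul_inv, wgt]

lemma arccot_mem {p : ℝ} (hp : 0 < p) : arccot p ∈ Ioo 0 (Real.pi / 2) := by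
  constructor
  · have := Real.arctan_lt_pi_div_two p
    simp only [arccot]; linarith
  · have : 0 < Real.arctan p := by
      have := Real.arctan_strictMono hp
      rwa [Real.arctan_zero] at this
    simp only [arccot]; linarith

lemma sin_arccot_pos {p : ℝ} (hp : 0 < p) : 0 < Real.sin (arccot p) := by
  have h := arccot_mem hp
  exact Real.sin_pos_of_pos_of_lt_pi h.1 (by linarith [h.2, Real.pi_pos])

lemma wgt_eq_phi {ψ : ℝ × ℝ → ℝ} (hψ : Measurable ψ) {p : ℝ} (hp : 0 < p) :
    wgt ψ p = ENNReal.ofReal (Real.sin (arccot p)) * phiAng ψ (arccot p) := by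
  set θ := arccot p with hθ
  have hs : 0 < Real.sin θ := sin_arccot_pos hp
  have hcs : Real.cos θ = p * Real.sin θ := by
    rw [hθ, arccot, Real.cos_pi_div_two_sub, Real.sin_pi_div_two_sub,
      Real.sin_arctan, Real.cos_arctan]
    field_simp
  have himg : (fun r : ℝ => Real.sin θ * r) '' Ioi 0 = Ioi 0 := Set.image_const_mul_Ioi_zero hs
  have hder : ∀ x ∈ Ioi (0:ℝ), HasDerivWithinAt (fun r : ℝ => Real.sin θ * r)
      (Real.sin θ) (Ioi 0) x := by
    intro x _
    exact (by simpa using (hasDerivAt_id x).const_mul (Real.sin θ) :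
      HasDerivAt (fun r : ℝ => Real.sin θ * r) (Real.sin θ) x).hasDerivWithinAt
  have hinj : InjOn (fun r : ℝ => Real.sin θ * r) (Ioi 0) :=
    fun a _ b _ h => mul_left_cancel₀ (ne_of_gt hs) h
  have h1 : wgt ψ p = ∫⁻ t in (fun r : ℝ => Real.sin θ * r) '' Ioi (0:ℝ),
      ENNReal.ofReal (ψ (p * t, t)) := by rw [himg, wgt]
  rw [h1, stmt11_lintegral_image_1d measurableSet_Ioi hder hinj]
  have h2 : ∀ x ∈ Ioi (0:ℝ),
      ENNReal.ofReal |Real.sin θ| * ENNReal.ofReal (ψ (p * (Real.sin θ * x), Real.sin θ * x))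
      = ENNReal.ofReal (Real.sin θ)
        * ENNReal.ofReal (ψ (x * Real.cos θ, x * Real.sin θ)) := by
    intro x _
    have harg : (p * (Real.sin θ * x), Real.sin θ * x)
        = (x * Real.cos θ, x * Real.sin θ) := by
      rw [hcs]; exact congrArg₂ Prod.mk (by ring) (by ring)
    rw [abs_of_pos hs, harg]
  rw [setLIntegral_congr_fun measurableSet_Ioi h2,
    phiAng]
  exact lintegral_const_mul'' _ ((ENNReal.measurable_ofReal.comp (hψ.comp
    ((measurable_id.mul measurable_const).prodMk
      (measurable_id.mul measurable_const)))).aemeasurable)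

lemma wgt_eq_zero_iff {ψ : ℝ × ℝ → ℝ} (hψ : Measurable ψ) {p : ℝ} (hp : 0 < p) :
    wgt ψ p = 0 ↔ phiAng ψ (arccot p) = 0 := by
  rw [wgt_eq_phi hψ hp, mul_eq_zero]
  have : ENNReal.ofReal (Real.sin (arccot p)) ≠ 0 := by
    simp [ENNReal.ofReal_eq_zero, not_le, sin_arccot_pos hp]
  tauto

lemma phiAng_meas {ψ : ℝ × ℝ → ℝ} (hψ : Measurable ψ) : Measurable (phiAng ψ) := by
  have hrw : phiAng ψ = fun θ =>
      ∫⁻ r, (Ioi (0:ℝ)).indicator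
        (fun r => ENNReal.ofReal (ψ (r * Real.cos θ, r * Real.sin θ))) r := by
    funext θ
    rw [phiAng, ← lintegral_indicator measurableSet_Ioi]
  rw [hrw]
  apply Measurable.lintegral_prod_right' (f := fun q : ℝ × ℝ =>
    (Ioi (0:ℝ)).indicator
        (fun r => ENNReal.ofReal (ψ (r * Real.cos q.1, r * Real.sin q.1))) q.2)
  have hm : Measurable fun q : ℝ × ℝ =>
      ENNReal.ofReal (ψ (q.2 * Real.cos q.1, q.2 * Real.sin q.1)) :=
    (ENNReal.measurable_ofReal.comp hψ).comp
      ((measurable_snd.mul (Real.measurable_cos.comp measurable_fst)).prodMk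
        (measurable_snd.mul (Real.measurable_sin.comp measurable_fst)))
  have : (fun q : ℝ × ℝ => (Ioi (0:ℝ)).indicator
        (fun r => ENNReal.ofReal (ψ (r * Real.cos q.1, r * Real.sin q.1))) q.2)
      = fun q : ℝ × ℝ => (Set.univ ×ˢ Ioi (0:ℝ)).indicator
        (fun q : ℝ × ℝ => ENNReal.ofReal (ψ (q.2 * Real.cos q.1, q.2 * Real.sin q.1))) q := by
    ext q
    by_cases h : q.2 ∈ Ioi (0:ℝ) <;> simp [Set.indicator_apply, h, Set.mem_prod]
  rw [this]
  exact hm.indicator (MeasurableSet.univ.prod measurableSet_Ioi)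

/-- transfer of the null angular set to a null set of prices -/
lemma null_transfer {ψ₁ ψ₂ : ℝ × ℝ → ℝ} (hψ₁ : Measurable ψ₁) (hψ₂ : Measurable ψ₂)
    (hdisj : volume {θ ∈ Set.Ioo (0:ℝ) (Real.pi / 2) |
        phiAng ψ₁ θ ≠ 0 ∧ phiAng ψ₂ θ ≠ 0} = 0) :
    volume {p : ℝ | 0 < p ∧ phiAng ψ₁ (arccot p) ≠ 0 ∧ phiAng ψ₂ (arccot p) ≠ 0} = 0 := by
  set SS := {θ ∈ Set.Ioo (0:ℝ) (Real.pi / 2) | phiAng ψ₁ θ ≠ 0 ∧ phiAng ψ₂ θ ≠ 0} with hSS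
  have h1m : MeasurableSet {θ : ℝ | phiAng ψ₁ θ ≠ 0} :=
    (phiAng_meas hψ₁) (measurableSet_singleton 0).compl
  have h2m : MeasurableSet {θ : ℝ | phiAng ψ₂ θ ≠ 0} :=
    (phiAng_meas hψ₂) (measurableSet_singleton 0).compl
  have hSSm : MeasurableSet SS := by
    have : SS = Ioo (0:ℝ) (Real.pi/2)
        ∩ ({θ : ℝ | phiAng ψ₁ θ ≠ 0} ∩ {θ : ℝ | phiAng ψ₂ θ ≠ 0}) := by
      ext θ; simp [hSS, and_assoc]
    rw [this]
    exact measurableSet_Ioo.inter (h1m.inter h2m)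
  set f : ℝ → ℝ := fun θ => Real.tan (Real.pi / 2 - θ) with hf
  set f' : ℝ → ℝ := fun θ => 1 / Real.cos (Real.pi / 2 - θ) ^ 2 * (0 - 1) with hf'
  have hder : ∀ θ ∈ SS, HasDerivWithinAt f (f' θ) SS θ := by
    intro θ hθ
    have hθ' : θ ∈ Ioo (0:ℝ) (Real.pi / 2) := hθ.1
    have hcos : Real.cos (Real.pi / 2 - θ) ≠ 0 := by
      apply ne_of_gt
      apply Real.cos_pos_of_mem_Ioo
      exact ⟨by linarith [hθ'.2, Real.pi_pos], by linarith [hθ'.1]⟩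
    have h1 : HasDerivAt (fun x : ℝ => Real.pi / 2 - x) (0 - 1) θ :=
      (hasDerivAt_const θ (Real.pi / 2)).sub (hasDerivAt_id θ)
    exact ((Real.hasDerivAt_tan hcos).comp θ h1).hasDerivWithinAt
  have hsub : {p : ℝ | 0 < p ∧ phiAng ψ₁ (arccot p) ≠ 0 ∧ phiAng ψ₂ (arccot p) ≠ 0}
      ⊆ f '' SS := by
    rintro p ⟨hp, hp1, hp2⟩
    have hmem : arccot p ∈ Ioo (0:ℝ) (Real.pi/2) := arccot_mem hp
    refine ⟨arccot p, ⟨hmem, hp1, hp2⟩, ?_⟩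
    show Real.tan (Real.pi / 2 - arccot p) = p
    rw [arccot]
    ring_nf
    exact Real.tan_arctan p
  have hbound := MeasureTheory.addHaar_image_le_lintegral_abs_det_fderiv volume hSSm
    (fun x hx => ((hder x hx).hasFDerivWithinAt :
      HasFDerivWithinAt f ((1 : ℝ →L[ℝ] ℝ).smulRight (f' x)) SS x))
  refine le_antisymm ?_ zero_le
  refine le_trans (measure_mono hsub) (le_trans hbound ?_)
  rw [setLIntegral_measure_zero _ _ hdisj]

lemma key_ptwise (W : ℝ≥0∞) {x y : ℝ} (hx : 0 ≤ x) (hy : 0 ≤ y) :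
    W / ENNReal.ofReal ((x + y) / 2)
      ≤ (W / ENNReal.ofReal x + W / ENNReal.ofReal y) / 2 := by
  rcases eq_or_ne W 0 with rfl | hW0
  · simp
  rcases eq_or_lt_of_le hx with hx0 | hx0
  · have : W / ENNReal.ofReal x = ⊤ := by
      rw [← hx0, ENNReal.ofReal_zero, ENNReal.div_zero hW0]
    rw [this]
    simp [ENNReal.top_div_of_ne_top]
  rcases eq_or_lt_of_le hy with hy0 | hy0
  · have : W / ENNReal.ofReal y = ⊤ := by
      rw [← hy0, ENNReal.ofReal_zero, ENNReal.div_zero hW0]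
    rw [this]
    simp [ENNReal.top_div_of_ne_top]
  rcases eq_or_ne W ⊤ with rfl | hWt
  · have h1 : (⊤ : ℝ≥0∞) / ENNReal.ofReal x = ⊤ := ENNReal.top_div_of_ne_top ENNReal.ofReal_ne_top
    have h2 : (⊤ : ℝ≥0∞) / ENNReal.ofReal ((x+y)/2) = ⊤ :=
      ENNReal.top_div_of_ne_top ENNReal.ofReal_ne_top
    rw [h1, h2]
    simp [ENNReal.top_div_of_ne_top]
  set w := W.toReal with hw
  have hwnn : 0 ≤ w := ENNReal.toReal_nonneg
  have hW : W = ENNReal.ofReal w := (ENNReal.ofReal_toReal hWt).symm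
  rw [hW, ← ENNReal.ofReal_div_of_pos (by linarith : (0:ℝ) < (x+y)/2),
    ← ENNReal.ofReal_div_of_pos hx0, ← ENNReal.ofReal_div_of_pos hy0,
    ← ENNReal.ofReal_add (by positivity) (by positivity),
    ← ENNReal.ofReal_ofNat 2,
    ← ENNReal.ofReal_div_of_pos (by norm_num)]
  apply ENNReal.ofReal_le_ofReal
  rw [div_add_div _ _ (ne_of_gt hx0) (ne_of_gt hy0), div_div,
    div_le_div_iff₀ (by linarith) (by positivity)]
  nlinarith [mul_nonneg hwnn (sq_nonneg (x - y)), mul_pos hx0 hy0]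

lemma key_eq (W : ℝ≥0∞) {x y : ℝ} (hx : 0 ≤ x) (hy : 0 ≤ y) (hW0 : W ≠ 0) (hWt : W ≠ ⊤)
    (heq : W / ENNReal.ofReal ((x + y) / 2)
      = (W / ENNReal.ofReal x + W / ENNReal.ofReal y) / 2) : x = y := by
  rcases eq_or_lt_of_le hx with hx0 | hx0
  · rcases eq_or_lt_of_le hy with hy0 | hy0
    · rw [← hx0, ← hy0]
    · exfalso
      have hR : (W / ENNReal.ofReal x + W / ENNReal.ofReal y) / 2 = ⊤ := by
        rw [← hx0, ENNReal.ofReal_zero, ENNReal.div_zero hW0]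
        simp [ENNReal.top_div_of_ne_top]
      have hL : W / ENNReal.ofReal ((x + y) / 2) ≠ ⊤ := by
        apply ne_of_lt
        apply ENNReal.div_lt_top hWt
        simp [ENNReal.ofReal_eq_zero, not_le]
        linarith
      rw [heq, hR] at hL
      exact hL rfl
  rcases eq_or_lt_of_le hy with hy0 | hy0
  · exfalso
    have hR : (W / ENNReal.ofReal x + W / ENNReal.ofReal y) / 2 = ⊤ := by
      rw [← hy0, ENNReal.ofReal_zero, ENNReal.div_zero hW0]
      simp [ENNReal.top_div_of_ne_top]
    have hL : W / ENNReal.ofReal ((x + y) / 2) ≠ ⊤ := by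
      apply ne_of_lt
      apply ENNReal.div_lt_top hWt
      simp [ENNReal.ofReal_eq_zero, not_le]
      linarith
    rw [heq, hR] at hL
    exact hL rfl
  set w := W.toReal with hw
  have hwpos : 0 < w := ENNReal.toReal_pos hW0 hWt
  have hW : W = ENNReal.ofReal w := (ENNReal.ofReal_toReal hWt).symm
  rw [hW, ← ENNReal.ofReal_div_of_pos (by linarith : (0:ℝ) < (x+y)/2),
    ← ENNReal.ofReal_div_of_pos hx0, ← ENNReal.ofReal_div_of_pos hy0,
    ← ENNReal.ofReal_add (by positivity) (by positivity),
    ← ENNReal.ofReal_ofNat 2,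
    ← ENNReal.ofReal_div_of_pos (by norm_num)] at heq
  rw [ENNReal.ofReal_eq_ofReal_iff (by positivity) (by positivity)] at heq
  field_simp at heq
  have h3 : w * (x - y) ^ 2 = 0 := by linear_combination (-w) * heq
  have h4 : (x - y) ^ 2 = 0 := by
    rcases mul_eq_zero.mp h3 with h | h
    · exact absurd h (ne_of_gt hwpos)
    · exact h
  have h5 : x - y = 0 := sq_eq_zero_iff.mp h4
  linarith

def IIfun (u : ℝ → ℝ≥0∞) (M : ℝ → ℝ) : ℝ≥0∞ :=
  ∫⁻ p in Ioi (0:ℝ), u p / ENNReal.ofReal (M p)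

lemma II_mono (u : ℝ → ℝ≥0∞) {M M' : ℝ → ℝ} (h : ∀ p ∈ Ioi (0:ℝ), M p ≤ M' p) :
    IIfun u M' ≤ IIfun u M := by
  apply lintegral_mono_ae
  filter_upwards [ae_restrict_mem measurableSet_Ioi] with p hp
  exact ENNReal.div_le_div le_rfl (ENNReal.ofReal_le_ofReal (h p hp))

lemma II_congr (u : ℝ → ℝ≥0∞) {M M' : ℝ → ℝ}
    (h : ∀ p ∈ Ioi (0:ℝ), u p ≠ 0 → M p = M' p) : IIfun u M = IIfun u M' := by
  apply setLIntegral_congr_fun measurableSet_Ioi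
  intro p hp
  beta_reduce
  by_cases hu : u p = 0
  · rw [hu, ENNReal.zero_div, ENNReal.zero_div]
  · rw [h p hp hu]

lemma II_scale {u : ℝ → ℝ≥0∞} {M : ℝ → ℝ} (hu : Measurable u) (hM : Measurable M)
    {c : ℝ} (hc : 0 < c) :
    IIfun u (fun p => c * M p) = IIfun u M / ENNReal.ofReal c := by
  have hc0 : ENNReal.ofReal c ≠ 0 := by simp [ENNReal.ofReal_eq_zero, not_le, hc]
  have key : ∀ p, u p / ENNReal.ofReal (c * M p)
      = u p / ENNReal.ofReal (M p) * (ENNReal.ofReal c)⁻¹ := by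
    intro p
    rw [mul_comm c (M p), ENNReal.ofReal_mul' hc.le, div_eq_mul_inv, div_eq_mul_inv,
      ENNReal.mul_inv (Or.inr ENNReal.ofReal_ne_top) (Or.inr hc0), mul_assoc]
  simp only [IIfun, key]
  have hmeas : AEMeasurable (fun p => u p / ENNReal.ofReal (M p))
      (volume.restrict (Ioi 0)) := by fun_prop
  rw [lintegral_mul_const'' _ hmeas, div_eq_mul_inv]

lemma II_add' {u v : ℝ → ℝ≥0∞} (hu : Measurable u) {M : ℝ → ℝ} (hM : Measurable M) :
    IIfun (fun p => u p + v p) M = IIfun u M + IIfun v M := by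
  simp only [IIfun, ENNReal.add_div]
  have hmeas : Measurable (fun p => u p / ENNReal.ofReal (M p)) := by fun_prop
  exact lintegral_add_left hmeas _

section cost
variable (PX PY : ℝ)

def costY (L : ℝ → ℝ) : ℝ≥0∞ := ∫⁻ p in Set.Ioc (0:ℝ) (PX / PY), ENNReal.ofReal (L p / p)
def costX (L : ℝ → ℝ) : ℝ≥0∞ := ∫⁻ p in Set.Ioi (PX / PY), ENNReal.ofReal (L p / p ^ 2)
def costC (L : ℝ → ℝ) : ℝ≥0∞ :=
  ENNReal.ofReal PX * costX PX PY L + ENNReal.ofReal PY * costY PX PY L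

variable {PX PY}

lemma costC_le_of_feasible {B : ℝ} (hPX : 0 < PX) (hPY : 0 < PY) {L X0 Y0}
    (h : Feasible PX PY B L X0 Y0) : costC PX PY L ≤ ENNReal.ofReal B := by
  obtain ⟨_, _, hX0, hY0, hY, hX, hb⟩ := h
  calc costC PX PY L ≤ ENNReal.ofReal PX * ENNReal.ofReal X0
        + ENNReal.ofReal PY * ENNReal.ofReal Y0 :=
        add_le_add (mul_le_mul_right hX _) (mul_le_mul_right hY _)
    _ = ENNReal.ofReal (PX * X0 + PY * Y0) := by
        rw [ENNReal.ofReal_add (by positivity) (by positivity),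
          ENNReal.ofReal_mul hPX.le, ENNReal.ofReal_mul hPY.le]
    _ ≤ ENNReal.ofReal B := ENNReal.ofReal_le_ofReal hb

lemma costC_smul {L : ℝ → ℝ} (hL : Measurable L) {c : ℝ} (hc : 0 ≤ c) :
    costC PX PY (fun p => c * L p) = ENNReal.ofReal c * costC PX PY L := by
  have hY : costY PX PY (fun p => c * L p) = ENNReal.ofReal c * costY PX PY L := by
    rw [costY, costY]
    have : ∀ p, ENNReal.ofReal (c * L p / p)
        = ENNReal.ofReal c * ENNReal.ofReal (L p / p) := by
      intro p
      rw [mul_div_assoc, ENNReal.ofReal_mul hc]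
    simp only [this]
    exact lintegral_const_mul'' _ ((ENNReal.measurable_ofReal.comp
      (hL.div measurable_id)).aemeasurable)
  have hX : costX PX PY (fun p => c * L p) = ENNReal.ofReal c * costX PX PY L := by
    rw [costX, costX]
    have : ∀ p, ENNReal.ofReal (c * L p / p ^ 2)
        = ENNReal.ofReal c * ENNReal.ofReal (L p / p ^ 2) := by
      intro p
      rw [mul_div_assoc, ENNReal.ofReal_mul hc]
    simp only [this]
    exact lintegral_const_mul'' _ ((ENNReal.measurable_ofReal.comp
      (hL.div (measurable_id.pow_const 2))).aemeasurable)
  rw [costC, costC, hX, hY]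
  ring

lemma feasible_mk {B : ℝ} (hPX : 0 < PX) (hPY : 0 < PY) (hB : 0 < B) {L : ℝ → ℝ}
    (hL : Measurable L) (hnn : ∀ p ∈ Ioi (0:ℝ), 0 ≤ L p)
    (hc : costC PX PY L ≤ ENNReal.ofReal B) :
    Feasible PX PY B L (costX PX PY L).toReal (costY PX PY L).toReal := by
  have hBne : ENNReal.ofReal B ≠ ⊤ := ENNReal.ofReal_ne_top
  have hXfin : costX PX PY L ≠ ⊤ := by
    intro h
    have h1 : ENNReal.ofReal PX * costX PX PY L = ⊤ := by
      rw [h, ENNReal.mul_top (by simp [ENNReal.ofReal_eq_zero, not_le, hPX])]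
    have h2 : (⊤:ℝ≥0∞) ≤ ENNReal.ofReal B := by
      rw [← h1]
      exact le_trans le_self_add hc
    exact hBne (top_le_iff.mp h2)
  have hYfin : costY PX PY L ≠ ⊤ := by
    intro h
    have h1 : ENNReal.ofReal PY * costY PX PY L = ⊤ := by
      rw [h, ENNReal.mul_top (by simp [ENNReal.ofReal_eq_zero, not_le, hPY])]
    have h2 : (⊤:ℝ≥0∞) ≤ ENNReal.ofReal B := by
      rw [← h1]
      exact le_trans le_add_self hc
    exact hBne (top_le_iff.mp h2)
  refine ⟨hL, hnn, ENNReal.toReal_nonneg, ENNReal.toReal_nonneg, ?_, ?_, ?_⟩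
  · rw [ENNReal.ofReal_toReal hYfin]; exact le_refl _
  · rw [ENNReal.ofReal_toReal hXfin]; exact le_refl _
  · have h1 : ENNReal.ofReal (PX * (costX PX PY L).toReal + PY * (costY PX PY L).toReal)
        = costC PX PY L := by
      rw [ENNReal.ofReal_add (by positivity) (by positivity),
        ENNReal.ofReal_mul hPX.le, ENNReal.ofReal_mul hPY.le,
        ENNReal.ofReal_toReal hXfin, ENNReal.ofReal_toReal hYfin, costC]
    have h2 := h1 ▸ hc
    exact (ENNReal.ofReal_le_ofReal_iff hB.le).1 h2

lemma feasible_comb {B : ℝ} (hPX : 0 < PX) (hPY : 0 < PY) (hB : 0 < B)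
    {a b : ℝ} (ha : 0 ≤ a) (hb : 0 ≤ b) (hab : a + b ≤ 1)
    {L L' : ℝ → ℝ} {X0 Y0 X0' Y0' : ℝ}
    (h1 : Feasible PX PY B L X0 Y0) (h2 : Feasible PX PY B L' X0' Y0') :
    Feasible PX PY B (fun p => a * L p + b * L' p) (a * X0 + b * X0') (a * Y0 + b * Y0') := by
  obtain ⟨hLm, hLnn, hX0, hY0, hY, hX, hbud⟩ := h1
  obtain ⟨hLm', hLnn', hX0', hY0', hY', hX', hbud'⟩ := h2
  have hp₀ : 0 < PX / PY := div_pos hPX hPY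
  refine ⟨by fun_prop, ?_, by positivity, by positivity, ?_, ?_, ?_⟩
  · intro p hp
    have := hLnn p hp; have := hLnn' p hp
    positivity
  · have hpt : ∀ p ∈ Ioc (0:ℝ) (PX/PY), ENNReal.ofReal ((a * L p + b * L' p) / p)
        = ENNReal.ofReal a * ENNReal.ofReal (L p / p)
          + ENNReal.ofReal b * ENNReal.ofReal (L' p / p) := by
      intro p hp
      have hp' : 0 < p := hp.1
      have h1' := hLnn p hp'; have h2' := hLnn' p hp'
      rw [add_div, mul_div_assoc, mul_div_assoc,
        ENNReal.ofReal_add (by positivity) (by positivity),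
        ENNReal.ofReal_mul ha, ENNReal.ofReal_mul hb]
    rw [setLIntegral_congr_fun measurableSet_Ioc hpt]
    rw [lintegral_add_left (by fun_prop)]
    rw [lintegral_const_mul'' _ (by fun_prop), lintegral_const_mul'' _ (by fun_prop)]
    calc ENNReal.ofReal a * (∫⁻ p in Ioc (0:ℝ) (PX/PY), ENNReal.ofReal (L p / p))
          + ENNReal.ofReal b * (∫⁻ p in Ioc (0:ℝ) (PX/PY), ENNReal.ofReal (L' p / p))
        ≤ ENNReal.ofReal a * ENNReal.ofReal Y0 + ENNReal.ofReal b * ENNReal.ofReal Y0' :=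
          add_le_add (mul_le_mul_right hY _) (mul_le_mul_right hY' _)
      _ = ENNReal.ofReal (a * Y0 + b * Y0') := by
          rw [ENNReal.ofReal_add (by positivity) (by positivity),
            ENNReal.ofReal_mul ha, ENNReal.ofReal_mul hb]
  · have hpt : ∀ p ∈ Ioi (PX/PY), ENNReal.ofReal ((a * L p + b * L' p) / p ^ 2)
        = ENNReal.ofReal a * ENNReal.ofReal (L p / p ^ 2)
          + ENNReal.ofReal b * ENNReal.ofReal (L' p / p ^ 2) := by
      intro p hp
      have hp' : 0 < p := lt_trans hp₀ hp
      have h1' := hLnn p hp'; have h2' := hLnn' p hp'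
      rw [add_div, mul_div_assoc, mul_div_assoc,
        ENNReal.ofReal_add (by positivity) (by positivity),
        ENNReal.ofReal_mul ha, ENNReal.ofReal_mul hb]
    rw [setLIntegral_congr_fun measurableSet_Ioi hpt]
    rw [lintegral_add_left (by fun_prop)]
    rw [lintegral_const_mul'' _ (by fun_prop), lintegral_const_mul'' _ (by fun_prop)]
    calc ENNReal.ofReal a * (∫⁻ p in Ioi (PX/PY), ENNReal.ofReal (L p / p ^ 2))
          + ENNReal.ofReal b * (∫⁻ p in Ioi (PX/PY), ENNReal.ofReal (L' p / p ^ 2))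
        ≤ ENNReal.ofReal a * ENNReal.ofReal X0 + ENNReal.ofReal b * ENNReal.ofReal X0' :=
          add_le_add (mul_le_mul_right hX _) (mul_le_mul_right hX' _)
      _ = ENNReal.ofReal (a * X0 + b * X0') := by
          rw [ENNReal.ofReal_add (by positivity) (by positivity),
            ENNReal.ofReal_mul ha, ENNReal.ofReal_mul hb]
  · have e1 : PX * (a * X0 + b * X0') + PY * (a * Y0 + b * Y0')
        = a * (PX * X0 + PY * Y0) + b * (PX * X0' + PY * Y0') := by ring
    rw [e1]
    have hbb : a * (PX * X0 + PY * Y0) ≤ a * B := by nlinarith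
    have hbb' : b * (PX * X0' + PY * Y0') ≤ b * B := by nlinarith
    nlinarith

end cost

theorem stmt_11 (PX PY B : ℝ) (hPX : 0 < PX) (hPY : 0 < PY) (hB : 0 < B)
    (ψ₁ ψ₂ : ℝ × ℝ → ℝ)
    (hψ₁meas : Measurable ψ₁) (hψ₁nn : ∀ q, 0 ≤ ψ₁ q)
    (hψ₂meas : Measurable ψ₂) (hψ₂nn : ∀ q, 0 ≤ ψ₂ q)
    (hdisj : volume {θ ∈ Set.Ioo (0:ℝ) (Real.pi / 2) |
        phiAng ψ₁ θ ≠ 0 ∧ phiAng ψ₂ θ ≠ 0} = 0)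
    (L₁ L₂ L : ℝ → ℝ) (X₁ Y₁ X₂ Y₂ X0 Y0 : ℝ)
    (hopt₁ : IsOptimalEq PX PY B ψ₁ L₁ X₁ Y₁)
    (hopt₂ : IsOptimalEq PX PY B ψ₂ L₂ X₂ Y₂)
    (hopt : IsOptimalEq PX PY B (fun q => ψ₁ q + ψ₂ q) L X0 Y0) :
    ∃ a b : ℝ, 0 ≤ a ∧ 0 ≤ b ∧
      ∀ᵐ p ∂(volume : Measure ℝ),
        (p ∈ Set.Ioi (0:ℝ) ∧ phiAng ψ₁ (arccot p) + phiAng ψ₂ (arccot p) ≠ 0) →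
          L p = a * L₁ p + b * L₂ p := by
  -- basic data
  classical
  have hψm : Measurable (fun q => ψ₁ q + ψ₂ q) := hψ₁meas.add hψ₂meas
  have hw₁m : Measurable (wgt ψ₁) := wgt_meas hψ₁meas
  have hw₂m : Measurable (wgt ψ₂) := wgt_meas hψ₂meas
  have hLm : Measurable L := hopt.1.1.1
  have hLnn : ∀ p ∈ Ioi (0:ℝ), 0 ≤ L p := hopt.1.1.2.1
  have hL₁m : Measurable L₁ := hopt₁.1.1.1
  have hL₁nn : ∀ p ∈ Ioi (0:ℝ), 0 ≤ L₁ p := hopt₁.1.1.2.1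
  have hL₂m : Measurable L₂ := hopt₂.1.1.1
  have hL₂nn : ∀ p ∈ Ioi (0:ℝ), 0 ≤ L₂ p := hopt₂.1.1.2.1
  have hp₀ : 0 < PX / PY := div_pos hPX hPY
  have hBne0 : ENNReal.ofReal B ≠ 0 := ne_of_gt (ENNReal.ofReal_pos.2 hB)
  -- weight additivity
  have hwgt_add : ∀ p, wgt (fun q => ψ₁ q + ψ₂ q) p = wgt ψ₁ p + wgt ψ₂ p := by
    intro p
    rw [wgt, wgt, wgt]
    have hpt : ∀ t, ENNReal.ofReal (ψ₁ (p * t, t) + ψ₂ (p * t, t))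
        = ENNReal.ofReal (ψ₁ (p * t, t)) + ENNReal.ofReal (ψ₂ (p * t, t)) := by
      intro t
      exact ENNReal.ofReal_add (hψ₁nn _) (hψ₂nn _)
    simp only [hpt]
    exact lintegral_add_left (by fun_prop) _
  -- Ineff in 1D form
  have hIneffS : ∀ M : ℝ → ℝ, Measurable M →
      Ineff (fun q => ψ₁ q + ψ₂ q) M = IIfun (wgt ψ₁) M + IIfun (wgt ψ₂) M := by
    intro M hM
    rw [ineff_eq_s11 hψm hM]
    have : (∫⁻ p in Ioi (0:ℝ), wgt (fun q => ψ₁ q + ψ₂ q) p / ENNReal.ofReal (M p))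
        = IIfun (fun p => wgt ψ₁ p + wgt ψ₂ p) M := by
      simp only [IIfun, hwgt_add]
    rw [this, II_add' hw₁m hM]
  have hm : Ineff (fun q => ψ₁ q + ψ₂ q) L = IIfun (wgt ψ₁) L + IIfun (wgt ψ₂) L :=
    hIneffS L hLm
  have hmfin : IIfun (wgt ψ₁) L + IIfun (wgt ψ₂) L < ⊤ := hm ▸ hopt.2.2.2.2
  have hufin : IIfun (wgt ψ₁) L ≠ ⊤ := (lt_of_le_of_lt le_self_add hmfin).ne
  have hvfin : IIfun (wgt ψ₂) L ≠ ⊤ := (lt_of_le_of_lt le_add_self hmfin).ne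
  -- the supports
  set A₁ : Set ℝ := {p : ℝ | 0 < p ∧ wgt ψ₁ p ≠ 0} with hA₁def
  set A₂ : Set ℝ := {p : ℝ | 0 < p ∧ wgt ψ₂ p ≠ 0} with hA₂def
  have hA₁m : MeasurableSet A₁ :=
    measurableSet_Ioi.inter (hw₁m (measurableSet_singleton 0).compl)
  have hA₂m : MeasurableSet A₂ :=
    measurableSet_Ioi.inter (hw₂m (measurableSet_singleton 0).compl)
  -- the a.e. disjointness
  have hN : volume {p : ℝ | 0 < p ∧ wgt ψ₁ p ≠ 0 ∧ wgt ψ₂ p ≠ 0} = 0 := by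
    have hset : {p : ℝ | 0 < p ∧ wgt ψ₁ p ≠ 0 ∧ wgt ψ₂ p ≠ 0}
        = {p : ℝ | 0 < p ∧ phiAng ψ₁ (arccot p) ≠ 0 ∧ phiAng ψ₂ (arccot p) ≠ 0} := by
      ext p
      constructor
      · rintro ⟨hp, h1, h2⟩
        exact ⟨hp, fun h => h1 ((wgt_eq_zero_iff hψ₁meas hp).2 h),
          fun h => h2 ((wgt_eq_zero_iff hψ₂meas hp).2 h)⟩
      · rintro ⟨hp, h1, h2⟩
        exact ⟨hp, fun h => h1 ((wgt_eq_zero_iff hψ₁meas hp).1 h),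
          fun h => h2 ((wgt_eq_zero_iff hψ₂meas hp).1 h)⟩
    rw [hset]
    exact null_transfer hψ₁meas hψ₂meas hdisj
  -- indicator functions and their costs
  have hInd₁m : Measurable (A₁.indicator L) := hLm.indicator hA₁m
  have hInd₂m : Measurable (A₂.indicator L) := hLm.indicator hA₂m
  have hInd₁nn : ∀ p ∈ Ioi (0:ℝ), 0 ≤ A₁.indicator L p := by
    intro p hp
    by_cases h : p ∈ A₁
    · rw [indicator_of_mem h]; exact hLnn p hp
    · rw [indicator_of_notMem h]
  have hInd₂nn : ∀ p ∈ Ioi (0:ℝ), 0 ≤ A₂.indicator L p := by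
    intro p hp
    by_cases h : p ∈ A₂
    · rw [indicator_of_mem h]; exact hLnn p hp
    · rw [indicator_of_notMem h]
  set t₁ : ℝ≥0∞ := costC PX PY (A₁.indicator L) with ht₁def
  set t₂ : ℝ≥0∞ := costC PX PY (A₂.indicator L) with ht₂def
  -- total cost of L
  have hX0nn : 0 ≤ X0 := hopt.1.1.2.2.1
  have hY0nn : 0 ≤ Y0 := hopt.1.1.2.2.2.1
  have hcostL : costC PX PY L = ENNReal.ofReal B := by
    rw [costC, costX, costY, hopt.2.2.1, hopt.2.1, ← ENNReal.ofReal_mul hPX.le,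
      ← ENNReal.ofReal_mul hPY.le,
      ← ENNReal.ofReal_add (by positivity : (0:ℝ) ≤ PX * X0)
        (by positivity : (0:ℝ) ≤ PY * Y0), hopt.2.2.2.1]
  -- splitting of costs
  have ht_sum : t₁ + t₂ ≤ ENNReal.ofReal B := by
    have hres : ∀ (S : Set ℝ), MeasurableSet S → (volume.restrict S)
        {p : ℝ | 0 < p ∧ wgt ψ₁ p ≠ 0 ∧ wgt ψ₂ p ≠ 0} = 0 := by
      intro S hS
      refine le_antisymm ?_ zero_le
      calc (volume.restrict S) {p : ℝ | 0 < p ∧ wgt ψ₁ p ≠ 0 ∧ wgt ψ₂ p ≠ 0}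
          ≤ volume {p : ℝ | 0 < p ∧ wgt ψ₁ p ≠ 0 ∧ wgt ψ₂ p ≠ 0} :=
            Measure.restrict_le_self _
        _ = 0 := hN
    have hYsplit : costY PX PY (A₁.indicator L) + costY PX PY (A₂.indicator L)
        ≤ costY PX PY L := by
      rw [costY, costY, costY, ← lintegral_add_left (by fun_prop)]
      apply lintegral_mono_ae
      filter_upwards [measure_eq_zero_iff_ae_notMem.mp (hres _ measurableSet_Ioc),
        ae_restrict_mem measurableSet_Ioc] with p hpN hp
      have hp0 : 0 < p := hp.1
      by_cases h1 : p ∈ A₁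
      · have h2 : p ∉ A₂ := fun h => hpN ⟨hp0, h1.2, h.2⟩
        rw [indicator_of_mem h1, indicator_of_notMem h2]
        simp
      · rw [indicator_of_notMem h1]
        by_cases h2 : p ∈ A₂
        · rw [indicator_of_mem h2]; simp
        · rw [indicator_of_notMem h2]
          simp only [zero_div, ENNReal.ofReal_zero, add_zero, zero_add]
          exact zero_le
    have hXsplit : costX PX PY (A₁.indicator L) + costX PX PY (A₂.indicator L)
        ≤ costX PX PY L := by
      rw [costX, costX, costX, ← lintegral_add_left (by fun_prop)]
      apply lintegral_mono_ae
      filter_upwards [measure_eq_zero_iff_ae_notMem.mp (hres _ measurableSet_Ioi),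
        ae_restrict_mem measurableSet_Ioi] with p hpN hp
      have hp0 : 0 < p := lt_trans hp₀ hp
      by_cases h1 : p ∈ A₁
      · have h2 : p ∉ A₂ := fun h => hpN ⟨hp0, h1.2, h.2⟩
        rw [indicator_of_mem h1, indicator_of_notMem h2]
        simp
      · rw [indicator_of_notMem h1]
        by_cases h2 : p ∈ A₂
        · rw [indicator_of_mem h2]; simp
        · rw [indicator_of_notMem h2]
          simp only [zero_div, ENNReal.ofReal_zero, add_zero, zero_add]
          exact zero_le
    calc t₁ + t₂ = ENNReal.ofReal PX
          * (costX PX PY (A₁.indicator L) + costX PX PY (A₂.indicator L))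
          + ENNReal.ofReal PY
          * (costY PX PY (A₁.indicator L) + costY PX PY (A₂.indicator L)) := by
          rw [ht₁def, ht₂def, costC, costC]; ring
      _ ≤ ENNReal.ofReal PX * costX PX PY L + ENNReal.ofReal PY * costY PX PY L :=
          add_le_add (mul_le_mul_right hXsplit _) (mul_le_mul_right hYsplit _)
      _ = costC PX PY L := by rw [costC]
      _ = ENNReal.ofReal B := hcostL
  -- definition of the coefficients
  have ht₁le : t₁ ≤ ENNReal.ofReal B := le_trans le_self_add ht_sum
  have ht₂le : t₂ ≤ ENNReal.ofReal B := le_trans le_add_self ht_sum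
  have ht₁fin : t₁ ≠ ⊤ := (lt_of_le_of_lt ht₁le ENNReal.ofReal_lt_top).ne
  have ht₂fin : t₂ ≠ ⊤ := (lt_of_le_of_lt ht₂le ENNReal.ofReal_lt_top).ne
  have hdiv₁fin : t₁ / ENNReal.ofReal B ≠ ⊤ := (ENNReal.div_lt_top ht₁fin hBne0).ne
  have hdiv₂fin : t₂ / ENNReal.ofReal B ≠ ⊤ := (ENNReal.div_lt_top ht₂fin hBne0).ne
  set a : ℝ := (t₁ / ENNReal.ofReal B).toReal with hadef
  set b : ℝ := (t₂ / ENNReal.ofReal B).toReal with hbdef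
  have ha : 0 ≤ a := ENNReal.toReal_nonneg
  have hb : 0 ≤ b := ENNReal.toReal_nonneg
  have hoa : ENNReal.ofReal a = t₁ / ENNReal.ofReal B := by
    rw [hadef]; exact ENNReal.ofReal_toReal hdiv₁fin
  have hob : ENNReal.ofReal b = t₂ / ENNReal.ofReal B := by
    rw [hbdef]; exact ENNReal.ofReal_toReal hdiv₂fin
  have hab : a + b ≤ 1 := by
    calc a + b = ((t₁ / ENNReal.ofReal B) + (t₂ / ENNReal.ofReal B)).toReal :=
          (ENNReal.toReal_add hdiv₁fin hdiv₂fin).symm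
      _ ≤ (1:ℝ≥0∞).toReal := by
          apply ENNReal.toReal_mono ENNReal.one_ne_top
          rw [ENNReal.div_add_div_same]
          exact le_trans (ENNReal.div_le_div_right ht_sum _)
            (le_of_eq (ENNReal.div_self hBne0 ENNReal.ofReal_ne_top))
      _ = 1 := ENNReal.toReal_one
  set L' : ℝ → ℝ := fun p => a * L₁ p + b * L₂ p with hL'def
  have hL'm : Measurable L' := by rw [hL'def]; fun_prop
  have feasL' : Feasible PX PY B L' (a * X₁ + b * X₂) (a * Y₁ + b * Y₂) :=
    feasible_comb hPX hPY hB ha hb hab hopt₁.1.1 hopt₂.1.1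
  have hL'nn : ∀ p ∈ Ioi (0:ℝ), 0 ≤ L' p := feasL'.2.1
  -- the main per-belief claim
  have main_claim : ∀ (ψi : ℝ × ℝ → ℝ), Measurable ψi →
      ∀ (Li : ℝ → ℝ) (Xi Yi : ℝ), IsOptimalEq PX PY B ψi Li Xi Yi →
      ∀ (Ai : Set ℝ), MeasurableSet Ai → Ai = {p : ℝ | 0 < p ∧ wgt ψi p ≠ 0} →
      ∀ (ci : ℝ),
      ENNReal.ofReal ci = costC PX PY (Ai.indicator L) / ENNReal.ofReal B →
      costC PX PY (Ai.indicator L) ≤ ENNReal.ofReal B →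
      IIfun (wgt ψi) L ≠ ⊤ →
      (∀ p ∈ Ioi (0:ℝ), ci * Li p ≤ L' p) →
      IIfun (wgt ψi) L' ≤ IIfun (wgt ψi) L := by
    intro ψi hψim Li Xi Yi hopti Ai hAim hAidef ci hci hti_le hfin hmono
    have hLim : Measurable Li := hopti.1.1.1
    have hmemAi : ∀ q : ℝ, q ∈ Ai ↔ (0 < q ∧ wgt ψi q ≠ 0) := by
      intro q; rw [hAidef]; exact Iff.rfl
    set ti : ℝ≥0∞ := costC PX PY (Ai.indicator L) with htidef
    have hIndm : Measurable (Ai.indicator L) := hLm.indicator hAim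
    have hIndnn : ∀ p ∈ Ioi (0:ℝ), 0 ≤ Ai.indicator L p := by
      intro p hp
      by_cases h : p ∈ Ai
      · rw [indicator_of_mem h]; exact hLnn p hp
      · rw [indicator_of_notMem h]
    by_cases hA : volume Ai = 0
    · -- degenerate case: the weight vanishes a.e.
      have hres : (volume.restrict (Ioi (0:ℝ))) Ai = 0 :=
        le_antisymm (le_trans (Measure.restrict_le_self _) hA.le) zero_le
      have hae : ∀ᵐ p ∂volume.restrict (Ioi (0:ℝ)),
          wgt ψi p / ENNReal.ofReal (L' p) = 0 := by
        filter_upwards [measure_eq_zero_iff_ae_notMem.mp hres,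
          ae_restrict_mem measurableSet_Ioi] with p hpA hp
        have hw : wgt ψi p = 0 := by
          by_contra hne
          exact hpA ((hmemAi p).2 ⟨hp, hne⟩)
        rw [hw, ENNReal.zero_div]
      have : IIfun (wgt ψi) L' = 0 := by
        rw [IIfun, lintegral_congr_ae hae, lintegral_zero]
      rw [this]
      exact zero_le
    · -- nondegenerate case
      have hti0 : ti ≠ 0 := by
        intro h0
        rw [htidef, costC] at h0
        obtain ⟨hX0', hY0'⟩ := add_eq_zero.1 h0
        have hPXne : ENNReal.ofReal PX ≠ 0 := ne_of_gt (ENNReal.ofReal_pos.2 hPX)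
        have hPYne : ENNReal.ofReal PY ≠ 0 := ne_of_gt (ENNReal.ofReal_pos.2 hPY)
        have hcX : costX PX PY (Ai.indicator L) = 0 :=
          (mul_eq_zero.mp hX0').resolve_left hPXne
        have hcY : costY PX PY (Ai.indicator L) = 0 :=
          (mul_eq_zero.mp hY0').resolve_left hPYne
        have haeY : ∀ᵐ p, p ∈ Ioc (0:ℝ) (PX/PY) → Ai.indicator L p = 0 := by
          rw [← ae_restrict_iff' measurableSet_Ioc]
          have h1 : (fun p => ENNReal.ofReal (Ai.indicator L p / p))
              =ᵐ[volume.restrict (Ioc (0:ℝ) (PX/PY))] 0 :=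
            (lintegral_eq_zero_iff (by fun_prop)).1 hcY
          filter_upwards [h1, ae_restrict_mem measurableSet_Ioc] with p hp1 hp2
          have hp0 : 0 < p := hp2.1
          have hnn : 0 ≤ Ai.indicator L p := hIndnn p hp0
          have hle0 : Ai.indicator L p / p ≤ 0 := by
            have : ENNReal.ofReal (Ai.indicator L p / p) = 0 := hp1
            simpa [ENNReal.ofReal_eq_zero] using this
          have hdiv : (0:ℝ) ≤ Ai.indicator L p / p := div_nonneg hnn hp0.le
          have hzero : Ai.indicator L p / p = 0 := le_antisymm hle0 hdiv
          rcases div_eq_zero_iff.mp hzero with h | h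
          · exact h
          · exact absurd h (ne_of_gt hp0)
        have haeX : ∀ᵐ p, p ∈ Ioi (PX/PY) → Ai.indicator L p = 0 := by
          rw [← ae_restrict_iff' measurableSet_Ioi]
          have h1 : (fun p => ENNReal.ofReal (Ai.indicator L p / p ^ 2))
              =ᵐ[volume.restrict (Ioi (PX/PY))] 0 :=
            (lintegral_eq_zero_iff (by fun_prop)).1 hcX
          filter_upwards [h1, ae_restrict_mem measurableSet_Ioi] with p hp1 hp2
          have hp0 : 0 < p := lt_trans hp₀ hp2
          have hnn : 0 ≤ Ai.indicator L p := hIndnn p hp0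
          have hle0 : Ai.indicator L p / p ^ 2 ≤ 0 := by
            have : ENNReal.ofReal (Ai.indicator L p / p ^ 2) = 0 := hp1
            simpa [ENNReal.ofReal_eq_zero] using this
          have hdiv : (0:ℝ) ≤ Ai.indicator L p / p ^ 2 := div_nonneg hnn (by positivity)
          have hzero : Ai.indicator L p / p ^ 2 = 0 := le_antisymm hle0 hdiv
          rcases div_eq_zero_iff.mp hzero with h | h
          · exact h
          · exact absurd h (by positivity)
        have haeA : ∀ᵐ p, p ∈ Ai → L p = 0 := by
          filter_upwards [haeY, haeX] with p h1 h2 hpAi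
          have hp0 : 0 < p := ((hmemAi p).1 hpAi).1
          have hind : Ai.indicator L p = L p := indicator_of_mem hpAi _
          rcases le_or_gt p (PX/PY) with hle | hlt
          · rw [← hind]; exact h1 ⟨hp0, hle⟩
          · rw [← hind]; exact h2 hlt
        have htop : IIfun (wgt ψi) L = ⊤ := by
          have hge : (∫⁻ p in Ai, wgt ψi p / ENNReal.ofReal (L p)) ≤ IIfun (wgt ψi) L := by
            rw [IIfun]
            exact lintegral_mono_set (fun p hp => ((hmemAi p).1 hp).1)
          have heqtop : (∫⁻ p in Ai, wgt ψi p / ENNReal.ofReal (L p)) = ⊤ := by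
            have hconst : ∀ᵐ p ∂volume.restrict Ai,
                wgt ψi p / ENNReal.ofReal (L p) = ⊤ := by
              filter_upwards [ae_restrict_of_ae haeA, ae_restrict_mem hAim] with p h4 h5
              rw [h4 h5, ENNReal.ofReal_zero, ENNReal.div_zero ((hmemAi p).1 h5).2]
            rw [lintegral_congr_ae hconst, setLIntegral_const, ENNReal.top_mul hA]
          exact top_le_iff.mp (heqtop ▸ hge)
        exact hfin htop
      have htifin : ti ≠ ⊤ := (lt_of_le_of_lt hti_le ENNReal.ofReal_lt_top).ne
      have hθpos : 0 < ti.toReal := ENNReal.toReal_pos hti0 htifin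
      have hcipos : 0 < ci := by
        have h1 : 0 < ENNReal.ofReal ci := by
          rw [hci]
          exact ENNReal.div_pos hti0 ENNReal.ofReal_ne_top
        exact ENNReal.ofReal_pos.mp h1
      set c : ℝ := B / ti.toReal with hcdef
      have hcpos : 0 < c := div_pos hB hθpos
      have hec : ENNReal.ofReal c = ENNReal.ofReal B / ti := by
        rw [hcdef, ENNReal.ofReal_div_of_pos hθpos, ENNReal.ofReal_toReal htifin]
      have hcostM : costC PX PY (fun p => c * Ai.indicator L p) = ENNReal.ofReal B := by
        rw [costC_smul hIndm hcpos.le]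
        simp only [← htidef]
        rw [hec, ENNReal.div_mul_cancel hti0 htifin]
      have feasM := feasible_mk hPX hPY hB (by fun_prop)
        (fun p hp => mul_nonneg hcpos.le (hIndnn p hp)) (le_of_eq hcostM)
      have hJle := hopti.1.2 _ _ _ feasM
      have hIneffM : Ineff ψi (fun p => c * Ai.indicator L p)
          = IIfun (wgt ψi) L / ENNReal.ofReal c := by
        rw [ineff_eq_s11 hψim (by fun_prop)]
        have h2 : (∫⁻ p in Ioi (0:ℝ), wgt ψi p / ENNReal.ofReal (c * Ai.indicator L p))
            = IIfun (wgt ψi) (fun p => c * Ai.indicator L p) := rfl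
        rw [h2, II_scale (wgt_meas hψim) hIndm hcpos]
        congr 1
        exact (II_congr _ (fun p hp hw =>
          (indicator_of_mem ((hmemAi p).2 ⟨hp, hw⟩) L).symm)).symm
      have hJ : Ineff ψi Li ≤ IIfun (wgt ψi) L / ENNReal.ofReal c := hIneffM ▸ hJle
      have hone : ENNReal.ofReal c * ENNReal.ofReal ci = 1 := by
        rw [hec, hci, ← mul_div_assoc, ENNReal.div_mul_cancel hti0 htifin,
          ENNReal.div_self hBne0 ENNReal.ofReal_ne_top]
      calc IIfun (wgt ψi) L' ≤ IIfun (wgt ψi) (fun p => ci * Li p) :=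
            II_mono _ (fun p hp => hmono p hp)
        _ = IIfun (wgt ψi) Li / ENNReal.ofReal ci := II_scale (wgt_meas hψim) hLim hcipos
        _ = Ineff ψi Li / ENNReal.ofReal ci := by rw [ineff_eq_s11 hψim hLim]; rfl
        _ ≤ (IIfun (wgt ψi) L / ENNReal.ofReal c) / ENNReal.ofReal ci :=
            ENNReal.div_le_div_right hJ _
        _ = IIfun (wgt ψi) L := by
            rw [div_eq_mul_inv, div_eq_mul_inv, mul_assoc,
              ← ENNReal.mul_inv (Or.inr ENNReal.ofReal_ne_top) (Or.inl ENNReal.ofReal_ne_top),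
              hone, inv_one, mul_one]
  -- apply the claim to both beliefs
  have claim₁ : IIfun (wgt ψ₁) L' ≤ IIfun (wgt ψ₁) L := by
    apply main_claim ψ₁ hψ₁meas L₁ X₁ Y₁ hopt₁ A₁ hA₁m hA₁def a hoa ht₁le hufin
    intro p hp
    exact le_add_of_nonneg_right (mul_nonneg hb (hL₂nn p hp))
  have claim₂ : IIfun (wgt ψ₂) L' ≤ IIfun (wgt ψ₂) L := by
    apply main_claim ψ₂ hψ₂meas L₂ X₂ Y₂ hopt₂ A₂ hA₂m hA₂def b hob ht₂le hvfin
    intro p hp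
    exact le_add_of_nonneg_left (mul_nonneg ha (hL₁nn p hp))
  -- L' attains the optimum as well
  have hL'le : Ineff (fun q => ψ₁ q + ψ₂ q) L' ≤ Ineff (fun q => ψ₁ q + ψ₂ q) L := by
    rw [hIneffS L' hL'm, hm]
    exact add_le_add claim₁ claim₂
  have hL'ge := hopt.1.2 L' _ _ feasL'
  have heqv : Ineff (fun q => ψ₁ q + ψ₂ q) L' = Ineff (fun q => ψ₁ q + ψ₂ q) L :=
    le_antisymm hL'le hL'ge
  set wS : ℝ → ℝ≥0∞ := fun p => wgt ψ₁ p + wgt ψ₂ p with hwSdef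
  have hwSm : Measurable wS := hw₁m.add hw₂m
  have hIneffS' : ∀ M : ℝ → ℝ, Measurable M →
      Ineff (fun q => ψ₁ q + ψ₂ q) M = IIfun wS M := by
    intro M hM
    rw [hIneffS M hM, ← II_add' hw₁m hM]
  have hIneffLfin : Ineff (fun q => ψ₁ q + ψ₂ q) L ≠ ⊤ := hopt.2.2.2.2.ne
  -- the midpoint allocation
  set Lm : ℝ → ℝ := fun p => 2⁻¹ * L p + 2⁻¹ * L' p with hLmdef
  have hLmm : Measurable Lm := by fun_prop
  have feasLm : Feasible PX PY B Lm (2⁻¹ * X0 + 2⁻¹ * (a * X₁ + b * X₂))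
      (2⁻¹ * Y0 + 2⁻¹ * (a * Y₁ + b * Y₂)) :=
    feasible_comb hPX hPY hB (by norm_num) (by norm_num) (by norm_num) hopt.1.1 feasL'
  have hge := hopt.1.2 Lm _ _ feasLm
  have hLm_eq : ∀ p, Lm p = (L p + L' p) / 2 := by
    intro p
    show 2⁻¹ * L p + 2⁻¹ * L' p = (L p + L' p) / 2
    ring
  have hIneffLm : Ineff (fun q => ψ₁ q + ψ₂ q) Lm
      = ∫⁻ p in Ioi (0:ℝ), wS p / ENNReal.ofReal ((L p + L' p) / 2) := by
    rw [hIneffS' Lm hLmm, IIfun]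
    apply setLIntegral_congr_fun measurableSet_Ioi
    intro p _
    beta_reduce
    rw [hLm_eq p]
  have hG : (∫⁻ p in Ioi (0:ℝ),
        (wS p / ENNReal.ofReal (L p) + wS p / ENNReal.ofReal (L' p)) / 2)
      = Ineff (fun q => ψ₁ q + ψ₂ q) L := by
    have hpt : ∀ p : ℝ,
        (wS p / ENNReal.ofReal (L p) + wS p / ENNReal.ofReal (L' p)) / 2
        = (wS p / ENNReal.ofReal (L p) + wS p / ENNReal.ofReal (L' p)) * 2⁻¹ := by
      intro p; rw [div_eq_mul_inv]
    simp only [hpt]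
    rw [lintegral_mul_const'' _ (by fun_prop), lintegral_add_left (by fun_prop)]
    rw [show (∫⁻ p in Ioi (0:ℝ), wS p / ENNReal.ofReal (L p)) = IIfun wS L from rfl,
      show (∫⁻ p in Ioi (0:ℝ), wS p / ENNReal.ofReal (L' p)) = IIfun wS L' from rfl,
      ← hIneffS' L hLm, ← hIneffS' L' hL'm, heqv, ← two_mul, mul_comm (2:ℝ≥0∞),
      mul_assoc, ENNReal.mul_inv_cancel two_ne_zero ENNReal.ofNat_ne_top, mul_one]
  have hptle : ∀ᵐ p ∂volume.restrict (Ioi (0:ℝ)),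
      wS p / ENNReal.ofReal ((L p + L' p) / 2)
      ≤ (wS p / ENNReal.ofReal (L p) + wS p / ENNReal.ofReal (L' p)) / 2 := by
    filter_upwards [ae_restrict_mem measurableSet_Ioi] with p hp
    exact key_ptwise (wS p) (hLnn p hp) (hL'nn p hp)
  have hfeq : (∫⁻ p in Ioi (0:ℝ),
        (wS p / ENNReal.ofReal (L p) + wS p / ENNReal.ofReal (L' p)) / 2)
      = ∫⁻ p in Ioi (0:ℝ), wS p / ENNReal.ofReal ((L p + L' p) / 2) := by
    apply le_antisymm
    · rw [hG, ← hIneffLm]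
      exact hge
    · exact lintegral_mono_ae hptle
  have hae := stmt11_ae_eq_of_lintegral_le (μ := volume.restrict (Ioi (0:ℝ)))
    (f := fun p => (wS p / ENNReal.ofReal (L p) + wS p / ENNReal.ofReal (L' p)) / 2)
    (g := fun p => wS p / ENNReal.ofReal ((L p + L' p) / 2))
    (by fun_prop) (by fun_prop) hptle
    (by rw [← hfeq, hG]; exact hIneffLfin) hfeq
  have hlt : ∀ᵐ p ∂volume.restrict (Ioi (0:ℝ)),
      wS p / ENNReal.ofReal (L p) < ⊤ := by
    apply ae_lt_top (by fun_prop)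
    rw [show (∫⁻ p in Ioi (0:ℝ), wS p / ENNReal.ofReal (L p)) = IIfun wS L from rfl,
      ← hIneffS' L hLm]
    exact hIneffLfin
  have hres : ∀ᵐ p ∂volume.restrict (Ioi (0:ℝ)),
      (phiAng ψ₁ (arccot p) + phiAng ψ₂ (arccot p) ≠ 0 → L p = a * L₁ p + b * L₂ p) := by
    filter_upwards [hae, hlt, ae_restrict_mem measurableSet_Ioi] with p hEq hltp hp
    intro hphi
    have hp0 : 0 < p := hp
    have hwS0 : wS p ≠ 0 := by
      intro h0
      apply hphi
      have h0' : wgt ψ₁ p + wgt ψ₂ p = 0 := h0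
      obtain ⟨h1, h2⟩ := add_eq_zero.1 h0'
      rw [(wgt_eq_zero_iff hψ₁meas hp0).1 h1, (wgt_eq_zero_iff hψ₂meas hp0).1 h2, add_zero]
    have hwSt : wS p ≠ ⊤ := by
      intro ht
      rw [ht, ENNReal.top_div_of_ne_top ENNReal.ofReal_ne_top] at hltp
      exact absurd hltp (lt_irrefl _)
    exact key_eq (wS p) (hLnn p hp) (hL'nn p hp) hwS0 hwSt hEq.symm
  rw [ae_restrict_iff' measurableSet_Ioi] at hres
  refine ⟨a, b, ha, hb, ?_⟩
  filter_upwards [hres] with p h1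
  rintro ⟨hp, hphi⟩
  exact h1 hp hphi
end
end
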